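/- arXiv:1411.2707 — 5 statements merged into one kernel-verified Lean document; each statement's English description precedes it below -/
import Mathlib

section
/- The kernel q_n of Q^n, where Q = (P+P²)/2, satisfies improved sub-Gaussian estimates: there exist constants c', C' > 0 such that for all x, y ∈ Γ, q_n(x,y) ≤ (C'/V(n^{1/γ})) exp(−(d(x,y)^γ/(C'n))^{1/(γ−1)}) for all n ≥ 1, and q_n(x,y) ≥ (c'/V(n^{1/γ})) exp(−(d(x,y)^γ/(c'n))^{1/(γ−1)}) for all n ≥ max(1, d(x,y)) (in particular the lower bound holds for q_n itself, not only for q_n + q_{n+1}). -/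
open scoped BigOperators ENNReal
open Filter Classical

noncomputable section

/-- The kernel (with respect to the measure `μ`) of the `n`-th power of the Markov operator
whose kernel with respect to `μ` is `k`. -/
def iterKernel {Γ : Type*} (μ : Γ → ℝ) (k : Γ → Γ → ℝ) : ℕ → Γ → Γ → ℝ
  | 0 => fun x y => if x = y then 1 / μ x else 0
  | n + 1 => fun x y => ∑' z : Γ, iterKernel μ k n x z * k z y * μ z


section auxiliary

variable {Γ : Type*} (μ : Γ → ℝ) (k : Γ → Γ → ℝ)

lemma iterKernel_succ_apply (n : ℕ) (x y : Γ) :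
    iterKernel μ k (n+1) x y = ∑' z : Γ, iterKernel μ k n x z * k z y * μ z := rfl

lemma iterKernel_support_finite (hk : ∀ z, (Function.support (k z)).Finite) :
    ∀ (n : ℕ) (x : Γ), (Function.support (iterKernel μ k n x)).Finite := by
  intro n
  induction n with
  | zero =>
    intro x
    refine (Set.finite_singleton x).subset ?_
    intro y hy
    simp only [Function.mem_support, iterKernel] at hy
    by_contra h
    simp only [Set.mem_singleton_iff] at h
    exact hy (if_neg (fun hxy => h hxy.symm))
  | succ n ih =>
    intro x
    refine (((ih x).biUnion (fun z _ => hk z))).subset ?_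
    intro y hy
    simp only [Function.mem_support, iterKernel_succ_apply] at hy
    by_contra hcon
    apply hy
    have hz : ∀ z : Γ, iterKernel μ k n x z * k z y * μ z = 0 := by
      intro z
      by_cases h1 : iterKernel μ k n x z = 0
      · simp [h1]
      · have hzs : z ∈ Function.support (iterKernel μ k n x) := h1
        have : k z y = 0 := by
          by_contra h2
          exact hcon (Set.mem_biUnion hzs h2)
        simp [this]
    simp [hz]

lemma iterKernel_nonneg (hμ : ∀ x, 0 < μ x) (hk : ∀ x y, 0 ≤ k x y) :
    ∀ (n : ℕ) (x y : Γ), 0 ≤ iterKernel μ k n x y := by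
  intro n
  induction n with
  | zero =>
    intro x y
    simp only [iterKernel]
    split
    · exact le_of_lt (by have := hμ x; positivity)
    · exact le_refl _
  | succ n ih =>
    intro x y
    rw [iterKernel_succ_apply]
    exact tsum_nonneg fun z => mul_nonneg (mul_nonneg (ih x z) (hk z y)) (hμ z).le

lemma iterKernel_add (hμ0 : ∀ x, μ x ≠ 0) (hk : ∀ z, (Function.support (k z)).Finite)
    (a b : ℕ) (x : Γ) : ∀ y : Γ,
    iterKernel μ k (a + b) x y = ∑' z : Γ, iterKernel μ k a x z * iterKernel μ k b z y * μ z := by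
  induction b with
  | zero =>
    intro y
    rw [Nat.add_zero]
    rw [tsum_eq_single y (fun z hz => by
      simp only [iterKernel]
      rw [if_neg hz]
      ring)]
    simp only [iterKernel, if_pos rfl]
    field_simp
    rw [if_pos trivial, mul_one_div, mul_div_assoc, div_self (hμ0 y), mul_one]
  | succ b ih =>
    intro y
    have hTA := iterKernel_support_finite μ k hk a x
    set T : Finset Γ := hTA.toFinset with hT
    set U : Finset Γ := T.biUnion (fun u => (iterKernel_support_finite μ k hk b u).toFinset) with hU
    have hmemT : ∀ u, u ∉ T → iterKernel μ k a x u = 0 := by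
      intro u hu
      by_contra h
      exact hu (hTA.mem_toFinset.mpr h)
    have hmemU : ∀ u ∈ T, ∀ z, z ∉ U → iterKernel μ k b u z = 0 := by
      intro u hu z hz
      by_contra h
      exact hz (Finset.mem_biUnion.mpr
        ⟨u, hu, (iterKernel_support_finite μ k hk b u).mem_toFinset.mpr h⟩)
    have step1 : ∀ z, iterKernel μ k (a + b) x z
        = ∑ u ∈ T, iterKernel μ k a x u * iterKernel μ k b u z * μ u := by
      intro z
      rw [ih z]
      exact tsum_eq_sum (fun u hu => by rw [hmemT u hu]; ring)
    calc iterKernel μ k (a + (b+1)) x y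
        = ∑' z : Γ, iterKernel μ k (a + b) x z * k z y * μ z := rfl
      _ = ∑' z : Γ, (∑ u ∈ T, iterKernel μ k a x u * iterKernel μ k b u z * μ u) * k z y * μ z := by
          congr 1; funext z; rw [step1 z]
      _ = ∑ z ∈ U, (∑ u ∈ T, iterKernel μ k a x u * iterKernel μ k b u z * μ u) * k z y * μ z := by
          refine tsum_eq_sum (fun z hz => ?_)
          have : ∀ u ∈ T, iterKernel μ k a x u * iterKernel μ k b u z * μ u = 0 := by
            intro u hu; rw [hmemU u hu z hz]; ring
          rw [Finset.sum_eq_zero this]; ring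
      _ = ∑ z ∈ U, ∑ u ∈ T, iterKernel μ k a x u * (iterKernel μ k b u z * k z y * μ z) * μ u := by
          refine Finset.sum_congr rfl (fun z _ => ?_)
          rw [Finset.sum_mul, Finset.sum_mul]
          exact Finset.sum_congr rfl (fun u _ => by ring)
      _ = ∑ u ∈ T, ∑ z ∈ U, iterKernel μ k a x u * (iterKernel μ k b u z * k z y * μ z) * μ u :=
          Finset.sum_comm
      _ = ∑ u ∈ T, iterKernel μ k a x u * iterKernel μ k (b+1) u y * μ u := by
          refine Finset.sum_congr rfl (fun u hu => ?_)
          have : iterKernel μ k (b+1) u y = ∑ z ∈ U, iterKernel μ k b u z * k z y * μ z := by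
            rw [iterKernel_succ_apply]
            exact tsum_eq_sum (fun z hz => by rw [hmemU u hu z hz]; ring)
          rw [this, Finset.mul_sum, Finset.sum_mul]
      _ = ∑' u : Γ, iterKernel μ k a x u * iterKernel μ k (b+1) u y * μ u :=
          (tsum_eq_sum (fun u hu => by rw [hmemT u hu]; ring)).symm

end auxiliary

lemma choose_le_two_pow' (n k : ℕ) : (n+1).choose k ≤ 2^n := by
  match k with
  | 0 => simpa using Nat.one_le_two_pow
  | (i+1) =>
    rw [Nat.choose_succ_succ]
    rcases le_or_gt (i+1) n with h | h
    · calc n.choose i + n.choose (i+1) = ∑ j ∈ ({i, i+1} : Finset ℕ), n.choose j := by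
            rw [Finset.sum_pair (by omega)]
        _ ≤ ∑ j ∈ Finset.range (n+1), n.choose j := by
            apply Finset.sum_le_sum_of_subset
            intro j hj
            simp only [Finset.mem_insert, Finset.mem_singleton] at hj
            simp only [Finset.mem_range]; omega
        _ = 2^n := Nat.sum_range_choose n
    · rw [Nat.choose_eq_zero_of_lt h, Nat.add_zero]
      rcases le_or_gt i n with h2 | h2
      · calc n.choose i ≤ ∑ j ∈ Finset.range (n+1), n.choose j :=
              Finset.single_le_sum (fun _ _ => Nat.zero_le _) (Finset.mem_range.mpr (by omega))
          _ = 2^n := Nat.sum_range_choose n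
      · rw [Nat.choose_eq_zero_of_lt h2]; exact Nat.zero_le _

lemma choose_up' (N j : ℕ) (h : 2*j < N) : N.choose j ≤ N.choose (j+1) := by
  have key := Nat.choose_succ_right_eq N j
  have h1 : N.choose j * (j+1) ≤ N.choose j * (N - j) := Nat.mul_le_mul_left _ (by omega)
  rw [← key] at h1
  exact Nat.le_of_mul_le_mul_right h1 (by omega)

lemma choose_down' (N j : ℕ) (h : N ≤ 2*j) : N.choose (j+1) ≤ N.choose j := by
  have key := Nat.choose_succ_right_eq N j
  have h1 : N.choose (j+1) * (j+1) ≤ N.choose j * (j+1) := by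
    rw [key]; exact Nat.mul_le_mul_left _ (by omega)
  exact Nat.le_of_mul_le_mul_right h1 (by omega)

lemma min_choose_sum (n : ℕ) :
    2^n ≤ ∑ k ∈ Finset.range (n+1), min ((n+1).choose k) ((n+1).choose (k+1)) := by
  set N := n + 1 with hN
  set h := n / 2 with hh
  have hsplit : ∑ k ∈ Finset.range N, (if k ≤ h then N.choose k else N.choose (k+1))
      = (∑ k ∈ Finset.range (h+1), N.choose k) + ∑ k ∈ Finset.Ico (h+1) N, N.choose (k+1) := by
    rw [Finset.range_eq_Ico,
      ← Finset.sum_Ico_consecutive _ (by omega : 0 ≤ h+1) (by omega : h+1 ≤ N),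
      ← Finset.range_eq_Ico]
    congr 1
    · exact Finset.sum_congr rfl (fun k hk => by
        rw [if_pos (by simpa [Nat.lt_succ_iff] using Finset.mem_range.mp hk)])
    · exact Finset.sum_congr rfl (fun k hk => by
        rw [if_neg (by have := (Finset.mem_Ico.mp hk).1; omega)])
  have hreindex : ∑ k ∈ Finset.Ico (h+1) N, N.choose (k+1)
      = ∑ j ∈ Finset.Ico (h+2) (N+1), N.choose j := by
    rw [Finset.sum_Ico_eq_sum_range, Finset.sum_Ico_eq_sum_range]
    refine Finset.sum_congr (by congr 1; omega) (fun i _ => by congr 1; omega)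
  have htotal : (∑ k ∈ Finset.range (h+1), N.choose k) + N.choose (h+1)
      + ∑ j ∈ Finset.Ico (h+2) (N+1), N.choose j = 2^N := by
    rw [← Finset.sum_range_succ]
    rw [Finset.range_eq_Ico,
      Finset.sum_Ico_consecutive _ (by omega : 0 ≤ h+2) (by omega : h+2 ≤ N+1),
      ← Finset.range_eq_Ico]
    exact Nat.sum_range_choose N
  have hmid : N.choose (h+1) ≤ 2^n := choose_le_two_pow' n (h+1)
  have hle : ∑ k ∈ Finset.range N, (if k ≤ h then N.choose k else N.choose (k+1))
      ≤ ∑ k ∈ Finset.range N, min (N.choose k) (N.choose (k+1)) := by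
    refine Finset.sum_le_sum (fun k _ => ?_)
    rcases le_or_gt k h with hk | hk
    · rw [if_pos hk]
      exact le_min (le_refl _) (choose_up' N k (by omega))
    · rw [if_neg (by omega)]
      exact le_min (choose_down' N k (by omega)) (le_refl _)
  have h2N : 2^N = 2^n + 2^n := by rw [hN, pow_succ]; ring
  omega

lemma pascal_sum (n : ℕ) (a : ℕ → ℝ) :
    ∑ j ∈ Finset.range (n+2), ((n+1).choose j : ℝ) * a j
      = ∑ k ∈ Finset.range (n+1), (n.choose k : ℝ) * (a k + a (k+1)) := by
  have h1 : ∑ j ∈ Finset.range (n+2), ((n+1).choose j : ℝ) * a j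
      = (∑ i ∈ Finset.range (n+1), ((n+1).choose (i+1) : ℝ) * a (i+1))
        + ((n+1).choose 0 : ℝ) * a 0 :=
    Finset.sum_range_succ' _ _
  have h2 : ∀ i, ((n+1).choose (i+1) : ℝ) = (n.choose i : ℝ) + (n.choose (i+1) : ℝ) := by
    intro i; rw [Nat.choose_succ_succ]; push_cast; ring
  have h3 : ∑ j ∈ Finset.range (n+2), (n.choose j : ℝ) * a j
      = (∑ i ∈ Finset.range (n+1), (n.choose (i+1) : ℝ) * a (i+1)) + (n.choose 0 : ℝ) * a 0 :=
    Finset.sum_range_succ' _ _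
  have h4 : ∑ j ∈ Finset.range (n+2), (n.choose j : ℝ) * a j
      = ∑ j ∈ Finset.range (n+1), (n.choose j : ℝ) * a j := by
    rw [Finset.sum_range_succ, Nat.choose_succ_self]
    push_cast; ring
  rw [h1]
  have h6 : ∑ i ∈ Finset.range (n+1), ((n+1).choose (i+1) : ℝ) * a (i+1)
      = (∑ i ∈ Finset.range (n+1), (n.choose i : ℝ) * a (i+1))
        + ∑ i ∈ Finset.range (n+1), (n.choose (i+1) : ℝ) * a (i+1) := by
    rw [← Finset.sum_add_distrib]
    exact Finset.sum_congr rfl (fun i _ => by rw [h2 i]; ring)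
  rw [h6]
  have h5 : (∑ i ∈ Finset.range (n+1), (n.choose (i+1) : ℝ) * a (i+1))
        + ((n+1).choose 0 : ℝ) * a 0
      = ∑ j ∈ Finset.range (n+1), (n.choose j : ℝ) * a j := by
    rw [← h4, h3]
    simp
  rw [add_assoc, h5, ← Finset.sum_add_distrib]
  exact Finset.sum_congr rfl (fun i _ => by ring)

/-- Lemma 2.3: the kernel `q_n` of `Q^n`, `Q = (P+P²)/2`, satisfies improved sub-Gaussian
estimates (the lower bound holds for `q_n` itself). -/
theorem improved_subgaussian_Q
    {Γ : Type*} [Countable Γ] [Infinite Γ]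
    (G : SimpleGraph Γ) (hconn : G.Connected)
    (hlocfin : ∀ x : Γ, {y : Γ | G.Adj x y}.Finite)
    -- edge weights
    (w : Γ → Γ → ℝ) (hw_symm : ∀ x y, w x y = w y x)
    (hw_nonneg : ∀ x y, 0 ≤ w x y)
    (hw_pos : ∀ x y, 0 < w x y ↔ G.Adj x y)
    -- vertex measure
    (μ : Γ → ℝ) (hμ : ∀ x, μ x = ∑' y : Γ, w x y)
    -- (count): μ comparable to the counting measure
    (Cμ : ℝ) (hCμ : 1 ≤ Cμ) (hcount : ∀ x, Cμ⁻¹ ≤ μ x ∧ μ x ≤ Cμ)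
    -- volume of balls and uniform volume doubling
    (Vb : Γ → ℝ → ℝ)
    (hVb : ∀ x r, Vb x r = ∑' y : {y : Γ // (G.dist x y : ℝ) ≤ r}, μ (y : Γ))
    (V : ℝ → ℝ) (hVpos : ∀ r : ℝ, 0 ≤ r → 0 < V r)
    (hVmono : StrictMonoOn V (Set.Ici (0 : ℝ)))
    (hVcont : ContinuousOn V (Set.Ici (0 : ℝ)))
    (C_D C_h : ℝ) (hC_D : 1 < C_D) (hC_h : 1 < C_h)
    (hdoub : ∀ r : ℝ, 0 < r → V (2 * r) ≤ C_D * V r)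
    (hhom : ∀ (x : Γ) (r : ℝ), 0 < r → C_h⁻¹ * V r ≤ Vb x r ∧ Vb x r ≤ C_h * V r)
    -- the heat kernel of the natural random walk
    (p : ℕ → Γ → Γ → ℝ)
    (hp : ∀ n, p n = iterKernel μ (fun x y => w x y / (μ x * μ y)) n)
    -- sub-Gaussian estimates with escape time exponent γ
    (γ : ℝ) (hγ : 1 < γ)
    (c C : ℝ) (hc : 0 < c) (hC : 0 < C)
    (hsubgU : ∀ (n : ℕ) (x y : Γ), 1 ≤ n →
      p n x y ≤ C / V ((n : ℝ) ^ (1 / γ)) *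
        Real.exp (-(((G.dist x y : ℝ) ^ γ / (C * n)) ^ (1 / (γ - 1)))))
    (hsubgL : ∀ (n : ℕ) (x y : Γ), 1 ≤ n → G.dist x y ≤ n →
      c / V ((n : ℝ) ^ (1 / γ)) *
        Real.exp (-(((G.dist x y : ℝ) ^ γ / (c * n)) ^ (1 / (γ - 1))))
        ≤ p n x y + p (n + 1) x y)
    -- Q = (P + P²)/2 and its iterated kernels q_n
    (q : ℕ → Γ → Γ → ℝ)
    (hq : ∀ n, q n = iterKernel μ (fun x y => (p 1 x y + p 2 x y) / 2) n) :
    ∃ c' C' : ℝ, 0 < c' ∧ 0 < C' ∧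
      (∀ (n : ℕ) (x y : Γ), 1 ≤ n →
        q n x y ≤ C' / V ((n : ℝ) ^ (1 / γ)) *
          Real.exp (-(((G.dist x y : ℝ) ^ γ / (C' * n)) ^ (1 / (γ - 1))))) ∧
      (∀ (n : ℕ) (x y : Γ), 1 ≤ n → G.dist x y ≤ n →
        c' / V ((n : ℝ) ^ (1 / γ)) *
          Real.exp (-(((G.dist x y : ℝ) ^ γ / (c' * n)) ^ (1 / (γ - 1)))) ≤ q n x y) := by
  classical
  have hμpos : ∀ x, 0 < μ x := fun x =>
    lt_of_lt_of_le (inv_pos.mpr (lt_of_lt_of_le one_pos hCμ)) (hcount x).1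
  have hμne : ∀ x, μ x ≠ 0 := fun x => (hμpos x).ne'
  have hk0fin : ∀ z, (Function.support (fun y => w z y / (μ z * μ y))).Finite := by
    intro z
    refine (hlocfin z).subset ?_
    intro y hy
    simp only [Function.mem_support] at hy
    have hwz : w z y ≠ 0 := by
      intro h0
      exact hy (by rw [h0]; simp)
    have : 0 < w z y := lt_of_le_of_ne (hw_nonneg z y) (Ne.symm hwz)
    exact (hw_pos z y).mp this
  have hk0nonneg : ∀ x y : Γ, 0 ≤ w x y / (μ x * μ y) := fun x y =>
    div_nonneg (hw_nonneg x y) (mul_nonneg (hμpos x).le (hμpos y).le)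
  have hpnonneg : ∀ (n : ℕ) (x y : Γ), 0 ≤ p n x y := by
    intro n x y; rw [hp n]
    exact iterKernel_nonneg μ _ hμpos hk0nonneg n x y
  have hpfin : ∀ (n : ℕ) (x : Γ), (Function.support (p n x)).Finite := by
    intro n x; rw [hp n]
    exact iterKernel_support_finite μ _ hk0fin n x
  have hcomp : ∀ (m j : ℕ) (x y : Γ), p (m + j) x y = ∑' z : Γ, p m x z * p j z y * μ z := by
    intro m j x y
    rw [hp (m+j), hp m, hp j]
    exact iterKernel_add μ _ hμne hk0fin m j x y
  have hsum : ∀ (m j : ℕ) (x y : Γ), Summable (fun z => p m x z * p j z y * μ z) := by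
    intro m j x y
    refine summable_of_ne_finset_zero (s := (hpfin m x).toFinset) (fun z hz => ?_)
    have : p m x z = 0 := by
      by_contra hcon
      exact hz ((hpfin m x).mem_toFinset.mpr hcon)
    simp [this]
  -- the key binomial identity
  have hkey : ∀ (n : ℕ) (x y : Γ),
      (2:ℝ)^n * q n x y = ∑ k ∈ Finset.range (n+1), (n.choose k : ℝ) * p (n+k) x y := by
    intro n
    induction n with
    | zero =>
      intro x y
      rw [hq 0]
      simp only [pow_zero, one_mul, zero_add, Finset.sum_range_one, Nat.choose_self,
        Nat.cast_one]
      rw [hp 0]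
      simp [iterKernel]
    | succ n ih =>
      intro x y
      show (2:ℝ)^(n+1) * q (n+1) x y
        = ∑ j ∈ Finset.range (n+2), ((n+1).choose j : ℝ) * p (n+1+j) x y
      have hstep : q (n+1) x y = ∑' z : Γ, q n x z * ((p 1 z y + p 2 z y)/2) * μ z := by
        rw [hq (n+1), hq n]
        exact iterKernel_succ_apply μ _ n x y
      calc (2:ℝ)^(n+1) * q (n+1) x y
          = ∑' z : Γ, ((2:ℝ)^n * q n x z) * (p 1 z y + p 2 z y) * μ z := by
            rw [hstep, ← tsum_mul_left]
            congr 1; funext z; rw [pow_succ]; ring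
        _ = ∑' z : Γ, ∑ k ∈ Finset.range (n+1), (n.choose k : ℝ) *
              (p (n+k) x z * p 1 z y * μ z + p (n+k) x z * p 2 z y * μ z) := by
            congr 1; funext z
            rw [ih x z, Finset.sum_mul, Finset.sum_mul]
            exact Finset.sum_congr rfl (fun k _ => by ring)
        _ = ∑ k ∈ Finset.range (n+1), ∑' z : Γ, (n.choose k : ℝ) *
              (p (n+k) x z * p 1 z y * μ z + p (n+k) x z * p 2 z y * μ z) := by
            refine Summable.tsum_finsetSum (fun k _ => ?_)
            refine summable_of_ne_finset_zero (s := (hpfin (n+k) x).toFinset) (fun z hz => ?_)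
            have : p (n+k) x z = 0 := by
              by_contra hcon
              exact hz ((hpfin (n+k) x).mem_toFinset.mpr hcon)
            simp [this]
        _ = ∑ k ∈ Finset.range (n+1), (n.choose k : ℝ) *
              (p (n+k+1) x y + p (n+k+2) x y) := by
            refine Finset.sum_congr rfl (fun k _ => ?_)
            rw [tsum_mul_left]
            congr 1
            rw [Summable.tsum_add (hsum (n+k) 1 x y) (hsum (n+k) 2 x y),
              ← hcomp (n+k) 1 x y, ← hcomp (n+k) 2 x y]
        _ = ∑ j ∈ Finset.range (n+2), ((n+1).choose j : ℝ) * p (n+1+j) x y := by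
            rw [pascal_sum n (fun j => p (n+1+j) x y)]
            refine Finset.sum_congr rfl (fun k _ => ?_)
            have e1 : n+1+k = n+k+1 := by omega
            have e2 : n+1+(k+1) = n+k+2 := by omega
            rw [e1, e2]
  -- general positivity facts
  have hγ0 : (0:ℝ) < γ := lt_trans one_pos hγ
  have hγinv : (0:ℝ) ≤ 1/γ := by positivity
  have hγ1 : (0:ℝ) < γ - 1 := by linarith
  have he : (0:ℝ) < 1/(γ-1) := by positivity
  have hCD0 : (0:ℝ) < C_D := by linarith
  refine ⟨c/(4*C_D), 2*C, div_pos hc (by linarith), by linarith, ?_, ?_⟩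
  · -- upper bound
    intro n x y hn
    have hd0 : (0:ℝ) ≤ (G.dist x y : ℝ) := Nat.cast_nonneg _
    have hn0 : (0:ℝ) < (n:ℝ) := by exact_mod_cast hn
    have hvpos : 0 < V ((n:ℝ) ^ (1/γ)) := hVpos _ (Real.rpow_nonneg hn0.le _)
    set U : ℝ := C / V ((n:ℝ)^(1/γ)) *
      Real.exp (-(((G.dist x y : ℝ)^γ / (2*C*(n:ℝ))) ^ (1/(γ-1)))) with hUdef
    have hUB : ∀ k ∈ Finset.range (n+1), p (n+k) x y ≤ U := by
      intro k hk
      have hk' : k ≤ n := by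
        have := Finset.mem_range.mp hk; omega
      have h1 : 1 ≤ n + k := le_trans hn (Nat.le_add_right n k)
      refine le_trans (hsubgU (n+k) x y h1) ?_
      have hnk0 : (0:ℝ) < ((n+k:ℕ):ℝ) := by exact_mod_cast h1
      have hVle : V ((n:ℝ)^(1/γ)) ≤ V (((n+k:ℕ):ℝ)^(1/γ)) := by
        refine hVmono.monotoneOn (Set.mem_Ici.mpr (Real.rpow_nonneg hn0.le _))
          (Set.mem_Ici.mpr (Real.rpow_nonneg hnk0.le _)) ?_
        refine Real.rpow_le_rpow hn0.le ?_ hγinv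
        exact_mod_cast Nat.le_add_right n k
      have hVpos2 : 0 < V (((n+k:ℕ):ℝ)^(1/γ)) := hVpos _ (Real.rpow_nonneg hnk0.le _)
      have hcoef : C / V (((n+k:ℕ):ℝ)^(1/γ)) ≤ C / V ((n:ℝ)^(1/γ)) :=
        div_le_div_of_nonneg_left hC.le hvpos hVle
      have hexp : Real.exp (-(((G.dist x y : ℝ)^γ / (C*((n+k:ℕ):ℝ))) ^ (1/(γ-1))))
          ≤ Real.exp (-(((G.dist x y : ℝ)^γ / (2*C*(n:ℝ))) ^ (1/(γ-1)))) := by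
        rw [Real.exp_le_exp, neg_le_neg_iff]
        refine Real.rpow_le_rpow (by positivity) ?_ he.le
        refine div_le_div_of_nonneg_left (Real.rpow_nonneg hd0 _) (by positivity) ?_
        have : ((n+k:ℕ):ℝ) ≤ 2*(n:ℝ) := by
          push_cast
          have : (k:ℝ) ≤ (n:ℝ) := by exact_mod_cast hk'
          linarith
        calc C * ((n+k:ℕ):ℝ) ≤ C * (2*(n:ℝ)) := mul_le_mul_of_nonneg_left this hC.le
          _ = 2*C*(n:ℝ) := by ring
      calc C / V (((n+k:ℕ):ℝ)^(1/γ)) *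
            Real.exp (-(((G.dist x y : ℝ)^γ / (C*((n+k:ℕ):ℝ))) ^ (1/(γ-1))))
          ≤ C / V ((n:ℝ)^(1/γ)) *
            Real.exp (-(((G.dist x y : ℝ)^γ / (2*C*(n:ℝ))) ^ (1/(γ-1)))) :=
            mul_le_mul hcoef hexp (Real.exp_nonneg _) (by positivity)
        _ = U := rfl
    have hUnn : 0 ≤ U := by positivity
    have hS : ∑ k ∈ Finset.range (n+1), (n.choose k : ℝ) * p (n+k) x y ≤ (2:ℝ)^n * U := by
      calc ∑ k ∈ Finset.range (n+1), (n.choose k : ℝ) * p (n+k) x y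
          ≤ ∑ k ∈ Finset.range (n+1), (n.choose k : ℝ) * U :=
            Finset.sum_le_sum (fun k hk =>
              mul_le_mul_of_nonneg_left (hUB k hk) (Nat.cast_nonneg _))
        _ = (∑ k ∈ Finset.range (n+1), (n.choose k : ℝ)) * U := (Finset.sum_mul _ _ _).symm
        _ = (2:ℝ)^n * U := by
            congr 1
            rw [← Nat.cast_sum, Nat.sum_range_choose]
            push_cast
            ring
    have hq2 : (2:ℝ)^n * q n x y ≤ (2:ℝ)^n * U := by
      rw [hkey n x y]; exact hS
    have hqU : q n x y ≤ U := (mul_le_mul_iff_right₀ (pow_pos two_pos n)).mp hq2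
    refine le_trans hqU ?_
    rw [hUdef]
    refine mul_le_mul_of_nonneg_right ?_ (Real.exp_nonneg _)
    rw [div_eq_mul_inv, div_eq_mul_inv]
    exact mul_le_mul_of_nonneg_right (by linarith) (inv_nonneg.mpr hvpos.le)
  · -- lower bound
    intro n x y hn hdist
    obtain ⟨m, rfl⟩ : ∃ m, n = m + 1 := ⟨n - 1, by omega⟩
    have hd0 : (0:ℝ) ≤ (G.dist x y : ℝ) := Nat.cast_nonneg _
    have hn0 : (0:ℝ) < ((m+1:ℕ):ℝ) := by positivity
    have hrnn : (0:ℝ) ≤ ((m+1:ℕ):ℝ)^(1/γ) := Real.rpow_nonneg hn0.le _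
    have hrpos : (0:ℝ) < ((m+1:ℕ):ℝ)^(1/γ) := Real.rpow_pos_of_pos hn0 _
    have hvpos : 0 < V (((m+1:ℕ):ℝ)^(1/γ)) := hVpos _ hrnn
    set L : ℝ := c / (C_D * V (((m+1:ℕ):ℝ)^(1/γ))) *
      Real.exp (-(((G.dist x y : ℝ)^γ / (c*((m+1:ℕ):ℝ))) ^ (1/(γ-1)))) with hLdef
    have hL0 : 0 ≤ L :=
      mul_nonneg (div_nonneg hc.le (mul_nonneg hCD0.le hvpos.le)) (Real.exp_nonneg _)
    have hpair : ∀ k ∈ Finset.range (m+1), L ≤ p (m+1+k) x y + p (m+1+k+1) x y := by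
      intro k hk
      have hk' : k ≤ m := by
        have := Finset.mem_range.mp hk; omega
      have h1 : 1 ≤ m+1+k := by omega
      have h2 : G.dist x y ≤ m+1+k := le_trans hdist (by omega)
      refine le_trans ?_ (hsubgL (m+1+k) x y h1 h2)
      have hnk0 : (0:ℝ) < ((m+1+k:ℕ):ℝ) := by positivity
      have harg : ((m+1+k:ℕ):ℝ)^(1/γ) ≤ 2 * (((m+1:ℕ):ℝ)^(1/γ)) := by
        calc ((m+1+k:ℕ):ℝ)^(1/γ) ≤ (2*((m+1:ℕ):ℝ))^(1/γ) := by
              refine Real.rpow_le_rpow hnk0.le ?_ hγinv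
              push_cast
              have : (k:ℝ) ≤ (m:ℝ) := by exact_mod_cast hk'
              linarith
          _ = (2:ℝ)^(1/γ) * (((m+1:ℕ):ℝ)^(1/γ)) := Real.mul_rpow (by norm_num) hn0.le
          _ ≤ 2 * (((m+1:ℕ):ℝ)^(1/γ)) := by
              refine mul_le_mul_of_nonneg_right ?_ hrnn
              calc (2:ℝ)^(1/γ) ≤ (2:ℝ)^(1:ℝ) :=
                    Real.rpow_le_rpow_of_exponent_le (by norm_num)
                      (by rw [div_le_one hγ0]; linarith)
                _ = 2 := Real.rpow_one 2
      have hVle : V (((m+1+k:ℕ):ℝ)^(1/γ)) ≤ C_D * V (((m+1:ℕ):ℝ)^(1/γ)) := by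
        refine le_trans (hVmono.monotoneOn
          (Set.mem_Ici.mpr (Real.rpow_nonneg hnk0.le _))
          (Set.mem_Ici.mpr (by positivity)) harg) (hdoub _ hrpos)
      have hVpos2 : 0 < V (((m+1+k:ℕ):ℝ)^(1/γ)) := hVpos _ (Real.rpow_nonneg hnk0.le _)
      have hcoef : c / (C_D * V (((m+1:ℕ):ℝ)^(1/γ))) ≤ c / V (((m+1+k:ℕ):ℝ)^(1/γ)) :=
        div_le_div_of_nonneg_left hc.le hVpos2 hVle
      have hexp : Real.exp (-(((G.dist x y : ℝ)^γ / (c*((m+1:ℕ):ℝ))) ^ (1/(γ-1))))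
          ≤ Real.exp (-(((G.dist x y : ℝ)^γ / (c*((m+1+k:ℕ):ℝ))) ^ (1/(γ-1)))) := by
        rw [Real.exp_le_exp, neg_le_neg_iff]
        refine Real.rpow_le_rpow (by positivity) ?_ he.le
        refine div_le_div_of_nonneg_left (Real.rpow_nonneg hd0 _) (by positivity) ?_
        refine mul_le_mul_of_nonneg_left ?_ hc.le
        exact_mod_cast Nat.le_add_right (m+1) k
      exact mul_le_mul hcoef hexp (Real.exp_nonneg _) (div_nonneg hc.le hVpos2.le)
    have hmin := min_choose_sum m
    have hsum1 : ((2:ℝ)^m) * L ≤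
        ∑ k ∈ Finset.range (m+1), ((min ((m+1).choose k) ((m+1).choose (k+1)) : ℕ) : ℝ) *
          (p (m+1+k) x y + p (m+1+k+1) x y) := by
      calc ((2:ℝ)^m) * L
          ≤ (∑ k ∈ Finset.range (m+1),
              ((min ((m+1).choose k) ((m+1).choose (k+1)) : ℕ) : ℝ)) * L := by
            refine mul_le_mul_of_nonneg_right ?_ hL0
            rw [← Nat.cast_sum]
            exact_mod_cast hmin
        _ = ∑ k ∈ Finset.range (m+1),
              ((min ((m+1).choose k) ((m+1).choose (k+1)) : ℕ) : ℝ) * L :=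
            Finset.sum_mul _ _ _
        _ ≤ ∑ k ∈ Finset.range (m+1),
              ((min ((m+1).choose k) ((m+1).choose (k+1)) : ℕ) : ℝ) *
                (p (m+1+k) x y + p (m+1+k+1) x y) :=
            Finset.sum_le_sum (fun k hk =>
              mul_le_mul_of_nonneg_left (hpair k hk) (Nat.cast_nonneg _))
    have hsum2 : ∑ k ∈ Finset.range (m+1),
          ((min ((m+1).choose k) ((m+1).choose (k+1)) : ℕ) : ℝ) *
            (p (m+1+k) x y + p (m+1+k+1) x y)
        ≤ 2 * ((2:ℝ)^(m+1) * q (m+1) x y) := by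
      rw [hkey (m+1) x y]
      have hA : ∑ k ∈ Finset.range (m+1), ((m+1).choose k : ℝ) * p (m+1+k) x y
          ≤ ∑ k ∈ Finset.range (m+1+1), ((m+1).choose k : ℝ) * p (m+1+k) x y := by
        refine Finset.sum_le_sum_of_subset_of_nonneg ?_ ?_
        · intro j hj
          simp only [Finset.mem_range] at hj ⊢
          omega
        · intro k _ _
          exact mul_nonneg (Nat.cast_nonneg _) (hpnonneg _ _ _)
      have hB : ∑ k ∈ Finset.range (m+1), ((m+1).choose (k+1) : ℝ) * p (m+1+(k+1)) x y
          ≤ ∑ k ∈ Finset.range (m+1+1), ((m+1).choose k : ℝ) * p (m+1+k) x y := by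
        rw [Finset.sum_range_succ' (fun k => ((m+1).choose k : ℝ) * p (m+1+k) x y) (m+1)]
        have h0 : 0 ≤ ((m+1).choose 0 : ℝ) * p (m+1+0) x y :=
          mul_nonneg (Nat.cast_nonneg _) (hpnonneg _ _ _)
        exact le_add_of_nonneg_right h0
      calc ∑ k ∈ Finset.range (m+1),
            ((min ((m+1).choose k) ((m+1).choose (k+1)) : ℕ) : ℝ) *
              (p (m+1+k) x y + p (m+1+k+1) x y)
          ≤ ∑ k ∈ Finset.range (m+1),
              (((m+1).choose k : ℝ) * p (m+1+k) x y
                + ((m+1).choose (k+1) : ℝ) * p (m+1+(k+1)) x y) := by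
            refine Finset.sum_le_sum (fun k _ => ?_)
            rw [mul_add]
            refine add_le_add ?_ ?_
            · exact mul_le_mul_of_nonneg_right
                (by exact_mod_cast Nat.cast_le.mpr (min_le_left _ _)) (hpnonneg _ _ _)
            · exact mul_le_mul_of_nonneg_right
                (by exact_mod_cast Nat.cast_le.mpr (min_le_right _ _)) (hpnonneg _ _ _)
        _ = (∑ k ∈ Finset.range (m+1), ((m+1).choose k : ℝ) * p (m+1+k) x y)
            + ∑ k ∈ Finset.range (m+1), ((m+1).choose (k+1) : ℝ) * p (m+1+(k+1)) x y :=
            Finset.sum_add_distrib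
        _ ≤ (∑ k ∈ Finset.range (m+1+1), ((m+1).choose k : ℝ) * p (m+1+k) x y)
            + ∑ k ∈ Finset.range (m+1+1), ((m+1).choose k : ℝ) * p (m+1+k) x y :=
            add_le_add hA hB
        _ = 2 * ∑ k ∈ Finset.range (m+1+1), ((m+1).choose k : ℝ) * p (m+1+k) x y := by ring
    have h4 : ((2:ℝ)^m) * L ≤ ((2:ℝ)^m) * (4 * q (m+1) x y) := by
      refine le_trans (le_trans hsum1 hsum2) ?_
      rw [pow_succ]
      ring_nf
      exact le_refl _
    have hLq : L ≤ 4 * q (m+1) x y :=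
      (mul_le_mul_iff_right₀ (pow_pos two_pos m)).mp h4
    -- conclude
    have hc'le : c/(4*C_D) ≤ c := by
      rw [div_le_iff₀ (by linarith : (0:ℝ) < 4*C_D)]
      nlinarith
    have hE : Real.exp (-(((G.dist x y : ℝ)^γ / (c/(4*C_D)*((m+1:ℕ):ℝ))) ^ (1/(γ-1))))
        ≤ Real.exp (-(((G.dist x y : ℝ)^γ / (c*((m+1:ℕ):ℝ))) ^ (1/(γ-1)))) := by
      rw [Real.exp_le_exp, neg_le_neg_iff]
      refine Real.rpow_le_rpow (by positivity) ?_ he.le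
      have hcpos' : (0:ℝ) < c/(4*C_D) := div_pos hc (by linarith)
      refine div_le_div_of_nonneg_left (Real.rpow_nonneg hd0 _) (by positivity) ?_
      exact mul_le_mul_of_nonneg_right hc'le hn0.le
    have heq : c/(4*C_D) / V (((m+1:ℕ):ℝ)^(1/γ)) = (1/4) * (c / (C_D * V (((m+1:ℕ):ℝ)^(1/γ)))) := by
      field_simp
    calc c/(4*C_D) / V (((m+1:ℕ):ℝ)^(1/γ)) *
          Real.exp (-(((G.dist x y : ℝ)^γ / (c/(4*C_D)*((m+1:ℕ):ℝ))) ^ (1/(γ-1))))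
        ≤ c/(4*C_D) / V (((m+1:ℕ):ℝ)^(1/γ)) *
          Real.exp (-(((G.dist x y : ℝ)^γ / (c*((m+1:ℕ):ℝ))) ^ (1/(γ-1)))) := by
          refine mul_le_mul_of_nonneg_left hE ?_
          positivity
      _ = (1/4) * L := by rw [hLdef, heq]; ring
      _ ≤ q (m+1) x y := by linarith
end
end

section
/- There exists a constant C₁ > 0 such that ‖f − f_R‖₂² ≤ C₁ (R/k)^γ E_{Q^{2⌊k^γ⌋}}(f, f) for all f ∈ ℓ²(Γ,μ), all integers k ≥ 1 and all real R with k ≤ R. -/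
open scoped BigOperators ENNReal
open Filter Classical

noncomputable section

/-- The Dirichlet form `E_S(f,f) = ⟨(I - S)f, f⟩` in `ℓ²(Γ,μ)` of the Markov operator `S`
whose kernel with respect to `μ` is `s`. -/
def dirichletForm {Γ : Type*} (μ : Γ → ℝ) (s : Γ → Γ → ℝ) (f : Γ → ℝ) : ℝ :=
  ∑' x : Γ, (f x - ∑' y : Γ, s x y * f y * μ y) * f x * μ x

/-- The `μ`-average `f_R(x)` of `f` over the ball `B(x,R)`. -/
def ballAvg {Γ : Type*} (G : SimpleGraph Γ) (μ : Γ → ℝ) (f : Γ → ℝ) (R : ℝ) (x : Γ) : ℝ :=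
  (∑' y : {y : Γ // (G.dist x y : ℝ) ≤ R}, f (y : Γ) * μ (y : Γ)) /
    (∑' y : {y : Γ // (G.dist x y : ℝ) ≤ R}, μ (y : Γ))

namespace PPI

open Finset

variable {Γ : Type*} {μ : Γ → ℝ} {s : Γ → Γ → ℝ}

structure Good (μ : Γ → ℝ) (s : Γ → Γ → ℝ) : Prop where
  symm : ∀ x y, s x y = s y x
  nonneg : ∀ x y, 0 ≤ s x y
  finrow : ∀ x, {y | s x y ≠ 0}.Finite
  rowsum : ∀ x, ∑' y, s x y * μ y = 1

lemma summable_fin {f : Γ → ℝ} (h : {y | f y ≠ 0}.Finite) : Summable f :=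
  summable_of_ne_finset_zero (s := h.toFinset) fun b hb => by
    by_contra hb'
    exact hb (h.mem_toFinset.mpr hb')

lemma tsum_comm_fin (F : Γ → Γ → ℝ)
    (hU : {u | ∃ z, F u z ≠ 0}.Finite)
    (hZ : ∀ u, {z | F u z ≠ 0}.Finite) :
    ∑' u, ∑' z, F u z = ∑' z, ∑' u, F u z := by
  classical
  set U := hU.toFinset with hUdef
  set Z := U.biUnion (fun u => (hZ u).toFinset) with hZdef
  have hzU : ∀ u z, F u z ≠ 0 → u ∈ U := fun u z h => hU.mem_toFinset.mpr ⟨z, h⟩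
  have hzZ : ∀ u z, F u z ≠ 0 → z ∈ Z := fun u z h =>
    Finset.mem_biUnion.mpr ⟨u, hzU u z h, (hZ u).mem_toFinset.mpr h⟩
  have h1 : ∀ u, ∑' z, F u z = ∑ z ∈ Z, F u z := fun u =>
    tsum_eq_sum fun z hz => by by_contra h0; exact hz (hzZ u z h0)
  have h2 : ∀ z, ∑' u, F u z = ∑ u ∈ U, F u z := fun z =>
    tsum_eq_sum fun u hu => by by_contra h0; exact hu (hzU u z h0)
  calc ∑' u, ∑' z, F u z
      = ∑ u ∈ U, ∑' z, F u z := tsum_eq_sum (fun u hu => by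
        have : ∀ z, F u z = 0 := fun z => by by_contra h0; exact hu (hzU u z h0)
        simp [this])
    _ = ∑ u ∈ U, ∑ z ∈ Z, F u z := Finset.sum_congr rfl fun u _ => h1 u
    _ = ∑ z ∈ Z, ∑ u ∈ U, F u z := Finset.sum_comm
    _ = ∑ z ∈ Z, ∑' u, F u z := Finset.sum_congr rfl fun z _ => (h2 z).symm
    _ = ∑' z, ∑' u, F u z := by
        refine (tsum_eq_sum fun z hz => ?_).symm
        have : ∀ u, F u z = 0 := fun u => by by_contra h0; exact hz (hzZ u z h0)
        simp [this]

lemma iter_zero (x y : Γ) : iterKernel μ s 0 x y = if x = y then 1 / μ x else 0 := rfl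

lemma iter_succ (n : ℕ) (x y : Γ) :
    iterKernel μ s (n + 1) x y = ∑' z, iterKernel μ s n x z * s z y * μ z := rfl

lemma iter_nonneg (hμ : ∀ x, 0 < μ x) (hsn : ∀ x y, 0 ≤ s x y) :
    ∀ n x y, 0 ≤ iterKernel μ s n x y := by
  intro n
  induction n with
  | zero =>
      intro x y; rw [iter_zero]
      split
      · have := hμ x; positivity
      · exact le_rfl
  | succ n ih =>
      intro x y
      rw [iter_succ]
      exact tsum_nonneg fun z => by
        have := ih x z
        have := hsn z y
        have := (hμ z).le
        positivity

lemma iter_finrow (hfin : ∀ x, {y | s x y ≠ 0}.Finite) :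
    ∀ n x, {y | iterKernel μ s n x y ≠ 0}.Finite := by
  intro n
  induction n with
  | zero =>
      intro x
      refine Set.Finite.subset (Set.finite_singleton x) ?_
      intro y hy
      simp only [Set.mem_setOf_eq, iter_zero] at hy
      by_contra h
      simp only [Set.mem_singleton_iff] at h
      exact hy (if_neg (fun h' => h h'.symm))
  | succ n ih =>
      intro x
      refine Set.Finite.subset (Set.Finite.biUnion (ih x) (fun z _ => hfin z)) ?_
      intro y hy
      simp only [Set.mem_setOf_eq, iter_succ] at hy
      by_contra h
      apply hy
      have hall : ∀ z, iterKernel μ s n x z * s z y * μ z = 0 := by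
        intro z
        by_cases hz : iterKernel μ s n x z = 0
        · simp [hz]
        · have hsz : s z y = 0 := by
            by_contra hszy
            exact h (Set.mem_biUnion hz hszy)
          simp [hsz]
      simp [hall]

lemma iter_summand_summable (hfin : ∀ x, {y | s x y ≠ 0}.Finite) (n : ℕ) (x : Γ) (g : Γ → ℝ) :
    Summable (fun y => iterKernel μ s n x y * g y) := by
  apply summable_fin
  refine (iter_finrow (μ := μ) hfin n x).subset fun y hy => ?_
  simp only [Set.mem_setOf_eq] at hy ⊢
  intro h0
  exact hy (by rw [h0, zero_mul])

lemma iter_one (hμ : ∀ x, 0 < μ x) (x y : Γ) : iterKernel μ s 1 x y = s x y := by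
  rw [iter_succ]
  rw [tsum_eq_sum (s := {x}) (fun z hz => ?_)]
  · rw [Finset.sum_singleton, iter_zero, if_pos rfl]
    have hx := (hμ x).ne'
    field_simp
  · rw [iter_zero, if_neg, zero_mul, zero_mul]
    intro h; exact hz (by simp [h])

lemma iter_add (hμ : ∀ x, 0 < μ x) (hfin : ∀ x, {y | s x y ≠ 0}.Finite) :
    ∀ (b a : ℕ) (x y : Γ), iterKernel μ s (a + b) x y =
      ∑' z, iterKernel μ s a x z * iterKernel μ s b z y * μ z := by
  intro b
  induction b with
  | zero =>
      intro a x y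
      rw [Nat.add_zero]
      rw [tsum_eq_sum (s := {y}) (fun z hz => ?_)]
      · rw [Finset.sum_singleton, iter_zero, if_pos rfl]
        have hy' := (hμ y).ne'
        field_simp
      · rw [iter_zero, if_neg, mul_zero, zero_mul]
        intro h; exact hz (by simp [h])
  | succ b ih =>
      intro a x y
      have h1 : a + (b + 1) = (a + b) + 1 := rfl
      rw [h1, iter_succ]
      have h2 : ∀ z, iterKernel μ s (a + b) x z * s z y * μ z
          = ∑' u, iterKernel μ s a x u * iterKernel μ s b u z * μ u * s z y * μ z := by
        intro z
        rw [ih a x z, ← tsum_mul_right, ← tsum_mul_right]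
      rw [tsum_congr h2]
      have h3 := tsum_comm_fin
        (fun u z => iterKernel μ s a x u * iterKernel μ s b u z * μ u * s z y * μ z)
        (Set.Finite.subset (iter_finrow (μ := μ) hfin a x) (fun u hu => by
          simp only [Set.mem_setOf_eq] at hu ⊢
          obtain ⟨z, hz⟩ := hu
          intro h0; exact hz (by rw [h0]; ring)))
        (fun u => Set.Finite.subset (iter_finrow (μ := μ) hfin b u) (fun z hz => by
          simp only [Set.mem_setOf_eq] at hz ⊢
          intro h0; exact hz (by rw [h0]; ring)))
      rw [← h3]
      refine tsum_congr fun u => ?_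
      rw [iter_succ]
      have h4 : ∀ z, iterKernel μ s a x u * iterKernel μ s b u z * μ u * s z y * μ z
          = (iterKernel μ s a x u * μ u) * (iterKernel μ s b u z * s z y * μ z) := by
        intro z; ring
      rw [tsum_congr h4, tsum_mul_left]
      ring

lemma iter_rowsum (hμ : ∀ x, 0 < μ x) (hs : Good μ s) :
    ∀ (n : ℕ) (x : Γ), ∑' y, iterKernel μ s n x y * μ y = 1 := by
  intro n
  induction n with
  | zero =>
      intro x
      rw [tsum_eq_sum (s := {x}) (fun z hz => ?_)]
      · rw [Finset.sum_singleton, iter_zero, if_pos rfl]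
        have hx := (hμ x).ne'
        field_simp
      · rw [iter_zero, if_neg, zero_mul]
        intro h; exact hz (by simp [h])
  | succ n ih =>
      intro x
      have h2 : ∀ y, iterKernel μ s (n + 1) x y * μ y
          = ∑' z, iterKernel μ s n x z * s z y * μ z * μ y := by
        intro y; rw [iter_succ, ← tsum_mul_right]
      rw [tsum_congr h2]
      have h3 := tsum_comm_fin
        (fun z y => iterKernel μ s n x z * s z y * μ z * μ y)
        (Set.Finite.subset (iter_finrow (μ := μ) hs.finrow n x) (fun z hz => by
          simp only [Set.mem_setOf_eq] at hz ⊢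
          obtain ⟨y, hy⟩ := hz
          intro h0; exact hy (by rw [h0]; ring)))
        (fun z => Set.Finite.subset (hs.finrow z) (fun y hy => by
          simp only [Set.mem_setOf_eq] at hy ⊢
          intro h0; exact hy (by rw [h0]; ring)))
      rw [← h3]
      have h4 : ∀ z, ∑' y, iterKernel μ s n x z * s z y * μ z * μ y
          = iterKernel μ s n x z * μ z := by
        intro z
        have : ∀ y, iterKernel μ s n x z * s z y * μ z * μ y
            = (iterKernel μ s n x z * μ z) * (s z y * μ y) := fun y => by ring
        rw [tsum_congr this, tsum_mul_left, hs.rowsum z, mul_one]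
      rw [tsum_congr h4]
      exact ih x

lemma iter_symm (hμ : ∀ x, 0 < μ x) (hs : Good μ s) :
    ∀ (n : ℕ) (x y : Γ), iterKernel μ s n x y = iterKernel μ s n y x := by
  intro n
  induction n with
  | zero =>
      intro x y
      rw [iter_zero, iter_zero]
      by_cases h : x = y
      · subst h; rfl
      · rw [if_neg h, if_neg (fun h' => h h'.symm)]
  | succ n ih =>
      intro x y
      have h1 : iterKernel μ s (n + 1) x y
          = ∑' z, s x z * iterKernel μ s n z y * μ z := by
        have := iter_add hμ hs.finrow n 1 x y
        rw [Nat.add_comm 1 n] at this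
        rw [this]
        exact tsum_congr fun z => by rw [iter_one hμ]
      rw [h1, iter_succ]
      exact tsum_congr fun z => by rw [hs.symm x z, ih z y]; ring

lemma iter_good (hμ : ∀ x, 0 < μ x) (hs : Good μ s) (n : ℕ) :
    Good μ (iterKernel μ s n) :=
  ⟨iter_symm hμ hs n, iter_nonneg hμ hs.nonneg n, iter_finrow hs.finrow n,
    iter_rowsum hμ hs n⟩


def Ap (μ : Γ → ℝ) (s : Γ → Γ → ℝ) (f : Γ → ℝ) (x : Γ) : ℝ := ∑' y, s x y * f y * μ y

lemma Ap_summand_summable (hs : Good μ s) (f : Γ → ℝ) (x : Γ) :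
    Summable (fun y => s x y * f y * μ y) := by
  apply summable_fin
  refine (hs.finrow x).subset fun y hy => ?_
  simp only [Set.mem_setOf_eq] at hy ⊢
  intro h0; exact hy (by rw [h0]; ring)

lemma colfin (hs : Good μ s) (y : Γ) : {x | s x y ≠ 0}.Finite := by
  refine (hs.finrow y).subset fun x hx => ?_
  simp only [Set.mem_setOf_eq] at hx ⊢
  rw [hs.symm y x]
  exact hx

lemma colsum (hs : Good μ s) (y : Γ) : ∑' x, s x y * μ x = 1 := by
  calc ∑' x, s x y * μ x = ∑' x, s y x * μ x := tsum_congr fun x => by rw [hs.symm x y]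
    _ = 1 := hs.rowsum y

lemma summable_joint_right (hμ : ∀ x, 0 < μ x) (hs : Good μ s) (F : Γ → ℝ)
    (hF : ∀ y, 0 ≤ F y) (hsum : Summable fun y => F y * μ y) :
    Summable (fun pr : Γ × Γ => s pr.1 pr.2 * F pr.2 * μ pr.2 * μ pr.1) := by
  have hpos : ∀ pr : Γ × Γ, 0 ≤ s pr.2 pr.1 * F pr.1 * μ pr.1 * μ pr.2 := fun pr => by
    have h1 := hs.nonneg pr.2 pr.1
    have h2 := hF pr.1
    have h3 := (hμ pr.1).le
    have h4 := (hμ pr.2).le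
    positivity
  have hslice : ∀ y, Summable (fun x => s x y * F y * μ y * μ x) := by
    intro y
    apply summable_fin
    refine (colfin hs y).subset fun x hx => ?_
    simp only [Set.mem_setOf_eq] at hx ⊢
    intro h0; exact hx (by rw [h0]; ring)
  have houter : Summable (fun y => ∑' x, s x y * F y * μ y * μ x) := by
    apply hsum.congr
    intro y
    have h1 : ∀ x, s x y * F y * μ y * μ x = (F y * μ y) * (s x y * μ x) := fun x => by ring
    rw [tsum_congr h1, tsum_mul_left, colsum hs y, mul_one]
  have hG : Summable (fun pr : Γ × Γ => s pr.2 pr.1 * F pr.1 * μ pr.1 * μ pr.2) :=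
    (summable_prod_of_nonneg hpos).mpr ⟨fun y => hslice y, houter⟩
  exact hG.prod_symm.congr fun p => rfl

lemma fub_nonneg (hμ : ∀ x, 0 < μ x) (hs : Good μ s) (F : Γ → ℝ)
    (hF : ∀ y, 0 ≤ F y) (hsum : Summable fun y => F y * μ y) :
    Summable (fun x => (∑' y, s x y * F y * μ y) * μ x) ∧
    ∑' x, (∑' y, s x y * F y * μ y) * μ x = ∑' y, F y * μ y := by
  have hH := summable_joint_right hμ hs F hF hsum
  have hpos : ∀ pr : Γ × Γ, 0 ≤ s pr.1 pr.2 * F pr.2 * μ pr.2 * μ pr.1 := fun pr => by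
    have h1 := hs.nonneg pr.1 pr.2
    have h2 := hF pr.2
    have h3 := (hμ pr.1).le
    have h4 := (hμ pr.2).le
    positivity
  obtain ⟨hslices, houter⟩ := (summable_prod_of_nonneg hpos).mp hH
  have hinner : ∀ x, ∑' y, s x y * F y * μ y * μ x = (∑' y, s x y * F y * μ y) * μ x := by
    intro x
    rw [← tsum_mul_right]
  constructor
  · exact houter.congr hinner
  · have e1 : ∑' pr : Γ × Γ, s pr.1 pr.2 * F pr.2 * μ pr.2 * μ pr.1
        = ∑' x, ∑' y, s x y * F y * μ y * μ x := Summable.tsum_prod' hH hslices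
    have hG : Summable (fun pr : Γ × Γ => s pr.2 pr.1 * F pr.1 * μ pr.1 * μ pr.2) :=
      hH.prod_symm.congr fun p => rfl
    have e2 : ∑' pr : Γ × Γ, s pr.2 pr.1 * F pr.1 * μ pr.1 * μ pr.2
        = ∑' y, ∑' x, s x y * F y * μ y * μ x := Summable.tsum_prod' hG (hG.prod_factor)
    have e3 : ∑' pr : Γ × Γ, s pr.2 pr.1 * F pr.1 * μ pr.1 * μ pr.2
        = ∑' pr : Γ × Γ, s pr.1 pr.2 * F pr.2 * μ pr.2 * μ pr.1 :=
      (Equiv.prodComm Γ Γ).tsum_eq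
        (fun pr : Γ × Γ => s pr.1 pr.2 * F pr.2 * μ pr.2 * μ pr.1)
    rw [tsum_congr (fun x => (hinner x).symm), ← e1, ← e3, e2]
    refine tsum_congr fun y => ?_
    have h1 : ∀ x, s x y * F y * μ y * μ x = (F y * μ y) * (s x y * μ x) := fun x => by ring
    rw [tsum_congr h1, tsum_mul_left, colsum hs y, mul_one]


lemma abs_mul_le_half (a b : ℝ) : |a * b| ≤ (a * a + b * b) / 2 := by
  rcases abs_cases (a * b) with ⟨h, _⟩ | ⟨h, _⟩ <;> rw [h] <;> nlinarith [sq_nonneg (a - b), sq_nonneg (a + b)]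

lemma fub_bilin (hμ : ∀ x, 0 < μ x) (hs : Good μ s) (f g : Γ → ℝ)
    (hf : Summable fun y => f y * f y * μ y) (hg : Summable fun x => g x * g x * μ x) :
    Summable (fun x => (∑' y, s x y * f y * μ y) * (g x * μ x)) ∧
    ∑' x, (∑' y, s x y * f y * μ y) * (g x * μ x)
      = ∑' y, (∑' x, s y x * g x * μ x) * (f y * μ y) := by
  set H : Γ × Γ → ℝ := fun pr => s pr.1 pr.2 * f pr.2 * μ pr.2 * (g pr.1 * μ pr.1) with hHdef
  have hM1 : Summable (fun pr : Γ × Γ => s pr.1 pr.2 * (f pr.2 * f pr.2) * μ pr.2 * μ pr.1) :=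
    summable_joint_right hμ hs (fun y => f y * f y) (fun y => mul_self_nonneg _) hf
  have hM2 : Summable (fun pr : Γ × Γ =>
      s pr.1 pr.2 * μ pr.2 * (g pr.1 * g pr.1 * μ pr.1)) := by
    have hpos : ∀ pr : Γ × Γ, 0 ≤ s pr.1 pr.2 * μ pr.2 * (g pr.1 * g pr.1 * μ pr.1) := fun pr => by
      have h1 := hs.nonneg pr.1 pr.2
      have h3 := (hμ pr.1).le
      have h4 := (hμ pr.2).le
      have h5 := mul_self_nonneg (g pr.1)
      positivity
    refine (summable_prod_of_nonneg hpos).mpr ⟨fun x => ?_, ?_⟩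
    · apply summable_fin
      refine (hs.finrow x).subset fun y hy => ?_
      simp only [Set.mem_setOf_eq] at hy ⊢
      intro h0; exact hy (by rw [h0]; ring)
    · apply hg.congr
      intro x
      have h1 : ∀ y, s x y * μ y * (g x * g x * μ x) = (g x * g x * μ x) * (s x y * μ y) :=
        fun y => by ring
      rw [tsum_congr h1, tsum_mul_left, hs.rowsum x, mul_one]
  have habs : ∀ pr : Γ × Γ, |H pr| ≤
      (s pr.1 pr.2 * (f pr.2 * f pr.2) * μ pr.2 * μ pr.1
        + s pr.1 pr.2 * μ pr.2 * (g pr.1 * g pr.1 * μ pr.1)) / 2 := by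
    intro pr
    have hS : (0:ℝ) ≤ s pr.1 pr.2 * μ pr.2 * μ pr.1 := by
      have h1 := hs.nonneg pr.1 pr.2
      have h3 := (hμ pr.1).le
      have h4 := (hμ pr.2).le
      positivity
    have e1 : H pr = (s pr.1 pr.2 * μ pr.2 * μ pr.1) * (f pr.2 * g pr.1) := by
      rw [hHdef]; ring
    have e2 : (s pr.1 pr.2 * (f pr.2 * f pr.2) * μ pr.2 * μ pr.1
        + s pr.1 pr.2 * μ pr.2 * (g pr.1 * g pr.1 * μ pr.1)) / 2
        = (s pr.1 pr.2 * μ pr.2 * μ pr.1) * ((f pr.2 * f pr.2 + g pr.1 * g pr.1) / 2) := by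
      ring
    rw [e1, e2, abs_mul, abs_of_nonneg hS]
    exact mul_le_mul_of_nonneg_left (abs_mul_le_half _ _) hS
  have hH : Summable H := by
    apply Summable.of_abs
    refine Summable.of_nonneg_of_le (fun pr => abs_nonneg _) habs ?_
    exact (hM1.add hM2).div_const 2
  have hinner : ∀ x, ∑' y, H (x, y) = (∑' y, s x y * f y * μ y) * (g x * μ x) := by
    intro x
    have h1 : ∀ y, H (x, y) = s x y * f y * μ y * (g x * μ x) := fun y => rfl
    rw [tsum_congr h1, ← tsum_mul_right]
  have houter : Summable (fun x => ∑' y, H (x, y)) :=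
    (hH.hasSum.prod_fiberwise (fun b => (hH.prod_factor b).hasSum)).summable
  constructor
  · exact houter.congr hinner
  · have e1 : ∑' pr : Γ × Γ, H pr = ∑' x, ∑' y, H (x, y) := Summable.tsum_prod' hH hH.prod_factor
    have hG : Summable (fun pr : Γ × Γ => H (pr.2, pr.1)) := hH.prod_symm.congr fun p => rfl
    have e2 : ∑' pr : Γ × Γ, H (pr.2, pr.1) = ∑' y, ∑' x, H (x, y) :=
      Summable.tsum_prod' hG hG.prod_factor
    have e3 : ∑' pr : Γ × Γ, H (pr.2, pr.1) = ∑' pr : Γ × Γ, H pr :=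
      (Equiv.prodComm Γ Γ).tsum_eq H
    rw [tsum_congr (fun x => (hinner x).symm), ← e1, ← e3, e2]
    refine tsum_congr fun y => ?_
    have h1 : ∀ x, H (x, y) = (s y x * g x * μ x) * (f y * μ y) := fun x => by
      show s x y * f y * μ y * (g x * μ x) = _
      rw [hs.symm y x]; ring
    rw [tsum_congr h1, ← tsum_mul_right]

lemma Ap_sq_le (hμ : ∀ x, 0 < μ x) (hs : Good μ s) (f : Γ → ℝ) (x : Γ) :
    (∑' y, s x y * f y * μ y) * (∑' y, s x y * f y * μ y)
      ≤ ∑' y, s x y * (f y * f y) * μ y := by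
  classical
  set t := (hs.finrow x).toFinset with htdef
  have hmem : ∀ y, s x y ≠ 0 → y ∈ t := fun y hy => (hs.finrow x).mem_toFinset.mpr hy
  have h1 : ∑' y, s x y * f y * μ y = ∑ y ∈ t, s x y * f y * μ y :=
    tsum_eq_sum fun y hy => by
      by_cases h0 : s x y = 0
      · rw [h0]; ring
      · exact absurd (hmem y h0) hy
  have h2 : ∑' y, s x y * (f y * f y) * μ y = ∑ y ∈ t, s x y * (f y * f y) * μ y :=
    tsum_eq_sum fun y hy => by
      by_cases h0 : s x y = 0
      · rw [h0]; ring
      · exact absurd (hmem y h0) hy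
  have h3 : (1:ℝ) = ∑ y ∈ t, s x y * μ y := by
    rw [← hs.rowsum x]
    exact tsum_eq_sum fun y hy => by
      by_cases h0 : s x y = 0
      · rw [h0]; ring
      · exact absurd (hmem y h0) hy
  have hcs := Finset.sum_mul_sq_le_sq_mul_sq t (fun y => Real.sqrt (s x y * μ y))
    (fun y => Real.sqrt (s x y * μ y) * f y)
  have hsμ : ∀ y, (0:ℝ) ≤ s x y * μ y := fun y =>
    mul_nonneg (hs.nonneg x y) (hμ y).le
  have e1 : ∀ y ∈ t, Real.sqrt (s x y * μ y) * (Real.sqrt (s x y * μ y) * f y)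
      = s x y * f y * μ y := by
    intro y _
    rw [← mul_assoc, Real.mul_self_sqrt (hsμ y)]
    ring
  have e2 : ∀ y ∈ t, Real.sqrt (s x y * μ y) ^ 2 = s x y * μ y := fun y _ =>
    Real.sq_sqrt (hsμ y)
  have e3 : ∀ y ∈ t, (Real.sqrt (s x y * μ y) * f y) ^ 2 = s x y * (f y * f y) * μ y := by
    intro y _
    rw [mul_pow, Real.sq_sqrt (hsμ y)]
    ring
  rw [Finset.sum_congr rfl e1, Finset.sum_congr rfl e2, Finset.sum_congr rfl e3] at hcs
  calc (∑' y, s x y * f y * μ y) * (∑' y, s x y * f y * μ y)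
      = (∑ y ∈ t, s x y * f y * μ y) ^ 2 := by rw [h1]; ring
    _ ≤ (∑ y ∈ t, s x y * μ y) * ∑ y ∈ t, s x y * (f y * f y) * μ y := hcs
    _ = ∑' y, s x y * (f y * f y) * μ y := by rw [← h3, ← h2, one_mul]

lemma Ap_l2 (hμ : ∀ x, 0 < μ x) (hs : Good μ s) (f : Γ → ℝ)
    (hf : Summable fun x => f x * f x * μ x) :
    Summable (fun x => Ap μ s f x * Ap μ s f x * μ x) ∧
    ∑' x, Ap μ s f x * Ap μ s f x * μ x ≤ ∑' x, f x * f x * μ x := by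
  have hfub := fub_nonneg hμ hs (fun y => f y * f y) (fun y => mul_self_nonneg _) hf
  have hle : ∀ x, Ap μ s f x * Ap μ s f x * μ x
      ≤ (∑' y, s x y * (f y * f y) * μ y) * μ x := fun x =>
    mul_le_mul_of_nonneg_right (Ap_sq_le hμ hs f x) (hμ x).le
  have hnn : ∀ x, 0 ≤ Ap μ s f x * Ap μ s f x * μ x := fun x =>
    mul_nonneg (mul_self_nonneg _) (hμ x).le
  have hsm : Summable (fun x => Ap μ s f x * Ap μ s f x * μ x) :=
    Summable.of_nonneg_of_le hnn hle hfub.1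
  exact ⟨hsm, le_trans (Summable.tsum_le_tsum hle hsm hfub.1) (le_of_eq hfub.2)⟩


def ip (μ : Γ → ℝ) (g h : Γ → ℝ) : ℝ := ∑' x, g x * h x * μ x

lemma ip_summable (hμ : ∀ x, 0 < μ x) {g h : Γ → ℝ}
    (hg : Summable fun x => g x * g x * μ x) (hh : Summable fun x => h x * h x * μ x) :
    Summable (fun x => g x * h x * μ x) := by
  apply Summable.of_abs
  refine Summable.of_nonneg_of_le (fun x => abs_nonneg _) (fun x => ?_)
    (((hg.add hh).div_const 2))
  have h1 : |g x * h x * μ x| = |g x * h x| * μ x := by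
    rw [abs_mul, abs_of_nonneg (hμ x).le]
  rw [h1]
  have h2 := abs_mul_le_half (g x) (h x)
  have h3 : (g x * g x * μ x + h x * h x * μ x) / 2
      = ((g x * g x + h x * h x) / 2) * μ x := by ring
  rw [h3]
  exact mul_le_mul_of_nonneg_right h2 (hμ x).le

lemma ip_Ap_summable (hμ : ∀ x, 0 < μ x) (hs : Good μ s) {f g : Γ → ℝ}
    (hf : Summable fun x => f x * f x * μ x) (hg : Summable fun x => g x * g x * μ x) :
    Summable (fun x => Ap μ s f x * g x * μ x) := by
  apply (fub_bilin hμ hs f g hf hg).1.congr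
  intro x
  show (∑' y, s x y * f y * μ y) * (g x * μ x) = Ap μ s f x * g x * μ x
  rw [Ap]; ring

lemma Ap_selfadj (hμ : ∀ x, 0 < μ x) (hs : Good μ s) {f g : Γ → ℝ}
    (hf : Summable fun x => f x * f x * μ x) (hg : Summable fun x => g x * g x * μ x) :
    ip μ (Ap μ s f) g = ip μ f (Ap μ s g) := by
  have h1 : ip μ (Ap μ s f) g = ∑' x, (∑' y, s x y * f y * μ y) * (g x * μ x) := by
    refine tsum_congr fun x => ?_
    show Ap μ s f x * g x * μ x = _
    rw [Ap]; ring
  have h2 : ip μ f (Ap μ s g) = ∑' y, (∑' x, s y x * g x * μ x) * (f y * μ y) := by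
    refine tsum_congr fun y => ?_
    show f y * Ap μ s g y * μ y = _
    rw [Ap]; ring
  rw [h1, h2, (fub_bilin hμ hs f g hf hg).2]

lemma ip_self_nonneg (hμ : ∀ x, 0 < μ x) (g : Γ → ℝ) : 0 ≤ ip μ g g :=
  tsum_nonneg fun x => mul_nonneg (mul_self_nonneg _) (hμ x).le

lemma ip_convex (hμ : ∀ x, 0 < μ x) {g h : Γ → ℝ}
    (hg : Summable fun x => g x * g x * μ x) (hh : Summable fun x => h x * h x * μ x) :
    0 ≤ ip μ g g - 2 * ip μ g h + ip μ h h := by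
  have hgh := ip_summable hμ hg hh
  have key : ip μ g g - 2 * ip μ g h + ip μ h h
      = ∑' x, (g x - h x) * (g x - h x) * μ x := by
    have h1 : ∀ x, (g x - h x) * (g x - h x) * μ x
        = g x * g x * μ x - 2 * (g x * h x * μ x) + h x * h x * μ x := fun x => by ring
    rw [tsum_congr h1, Summable.tsum_add (Summable.sub hg (hgh.mul_left 2)) hh,
      Summable.tsum_sub hg (hgh.mul_left 2), tsum_mul_left]
    rfl
  rw [key]
  exact tsum_nonneg fun x => mul_nonneg (mul_self_nonneg _) (hμ x).le

lemma Ap_iter_add (hμ : ∀ x, 0 < μ x) (hs : Good μ s) (a b : ℕ) (g : Γ → ℝ) (x : Γ) :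
    Ap μ (iterKernel μ s (a + b)) g x
      = Ap μ (iterKernel μ s a) (Ap μ (iterKernel μ s b) g) x := by
  rw [Ap]
  have h1 : ∀ y, iterKernel μ s (a + b) x y * g y * μ y
      = ∑' z, iterKernel μ s a x z * iterKernel μ s b z y * μ z * g y * μ y := by
    intro y
    rw [iter_add hμ hs.finrow b a x y, ← tsum_mul_right, ← tsum_mul_right]
  rw [tsum_congr h1]
  have hfin : {y | ∃ z, iterKernel μ s a x z * iterKernel μ s b z y * μ z * g y * μ y ≠ 0}.Finite := by
    refine Set.Finite.subset (Set.Finite.biUnion (iter_finrow (μ := μ) hs.finrow a x)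
      (fun z _ => iter_finrow (μ := μ) hs.finrow b z)) ?_
    rintro y ⟨z, hz⟩
    have ha : iterKernel μ s a x z ≠ 0 := fun h0 => hz (by rw [h0]; ring)
    have hb : iterKernel μ s b z y ≠ 0 := fun h0 => hz (by rw [h0]; ring)
    exact Set.mem_biUnion ha hb
  rw [tsum_comm_fin _ hfin (fun y => Set.Finite.subset (iter_finrow (μ := μ) hs.finrow a x)
    (fun z hz => by
      simp only [Set.mem_setOf_eq] at hz ⊢
      intro h0; exact hz (by rw [h0]; ring)))]
  refine tsum_congr fun z => ?_
  have h2 : ∀ y, iterKernel μ s a x z * iterKernel μ s b z y * μ z * g y * μ y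
      = (iterKernel μ s a x z * μ z) * (iterKernel μ s b z y * g y * μ y) := fun y => by ring
  rw [tsum_congr h2, tsum_mul_left]
  show _ = iterKernel μ s a x z * Ap μ (iterKernel μ s b) g z * μ z
  rw [Ap]; ring

lemma Ap_iter_zero (hμ : ∀ x, 0 < μ x) (g : Γ → ℝ) (x : Γ) :
    Ap μ (iterKernel μ s 0) g x = g x := by
  rw [Ap]
  rw [tsum_eq_sum (s := {x}) (fun z hz => ?_)]
  · rw [Finset.sum_singleton, iter_zero, if_pos rfl]
    have hx := (hμ x).ne'
    field_simp
  · rw [iter_zero, if_neg, zero_mul, zero_mul]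
    intro h; exact hz (by simp [h])

lemma dirichlet_eq (hμ : ∀ x, 0 < μ x) (hs : Good μ s) (f : Γ → ℝ)
    (hf : Summable fun x => f x * f x * μ x) :
    dirichletForm μ s f = ip μ f f - ip μ (Ap μ s f) f := by
  have h1 : ∀ x, (f x - ∑' y, s x y * f y * μ y) * f x * μ x
      = f x * f x * μ x - Ap μ s f x * f x * μ x := fun x => by rw [Ap]; ring
  rw [dirichletForm, tsum_congr h1, Summable.tsum_sub hf (ip_Ap_summable hμ hs hf hf)]
  rfl


lemma row_mu_summable (hs : Good μ s) (x : Γ) : Summable (fun y => s x y * μ y) := by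
  apply summable_fin
  refine (hs.finrow x).subset fun y hy => ?_
  simp only [Set.mem_setOf_eq] at hy ⊢
  intro h0; exact hy (by rw [h0]; ring)

lemma rowF_summable (hs : Good μ s) (F : Γ → ℝ) (x : Γ) :
    Summable (fun y => s x y * F y * μ y) := by
  apply summable_fin
  refine (hs.finrow x).subset fun y hy => ?_
  simp only [Set.mem_setOf_eq] at hy ⊢
  intro h0; exact hy (by rw [h0]; ring)

lemma energy_inner (hμ : ∀ x, 0 < μ x) (hs : Good μ s) (f : Γ → ℝ) (x : Γ) :
    ∑' y, (f x - f y) ^ 2 * s x y * μ y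
      = f x * f x - 2 * (f x * Ap μ s f x) + ∑' y, s x y * (f y * f y) * μ y := by
  have hA : Summable (fun y => f x * f x * (s x y * μ y)) := (row_mu_summable hs x).mul_left _
  have hB : Summable (fun y => 2 * f x * (s x y * f y * μ y)) :=
    (Ap_summand_summable hs f x).mul_left _
  have hC : Summable (fun y => s x y * (f y * f y) * μ y) :=
    rowF_summable hs (fun y => f y * f y) x
  have h1 : ∀ y, (f x - f y) ^ 2 * s x y * μ y
      = f x * f x * (s x y * μ y) - 2 * f x * (s x y * f y * μ y)
        + s x y * (f y * f y) * μ y := fun y => by ring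
  rw [tsum_congr h1, Summable.tsum_add (hA.sub hB) hC, Summable.tsum_sub hA hB, tsum_mul_left, tsum_mul_left,
    hs.rowsum x, mul_one, Ap]
  ring

lemma energy_expand (hμ : ∀ x, 0 < μ x) (hs : Good μ s) (f : Γ → ℝ)
    (hf : Summable fun x => f x * f x * μ x) :
    Summable (fun x => (∑' y, (f x - f y) ^ 2 * s x y * μ y) * μ x) ∧
    ∑' x, (∑' y, (f x - f y) ^ 2 * s x y * μ y) * μ x = 2 * dirichletForm μ s f := by
  have hfub := fub_nonneg hμ hs (fun y => f y * f y) (fun y => mul_self_nonneg _) hf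
  have hip := ip_Ap_summable hμ hs hf hf
  have h1 : ∀ x, (∑' y, (f x - f y) ^ 2 * s x y * μ y) * μ x
      = f x * f x * μ x - 2 * (Ap μ s f x * f x * μ x)
        + (∑' y, s x y * (f y * f y) * μ y) * μ x := by
    intro x
    rw [energy_inner hμ hs f x]
    ring
  constructor
  · refine Summable.congr ?_ fun x => (h1 x).symm
    exact ((hf.sub (hip.mul_left 2)).add hfub.1)
  · rw [tsum_congr h1, Summable.tsum_add (hf.sub (hip.mul_left 2)) hfub.1,
      Summable.tsum_sub hf (hip.mul_left 2), tsum_mul_left, hfub.2,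
      dirichlet_eq hμ hs f hf]
    have e1 : ∑' x, Ap μ s f x * f x * μ x = ip μ (Ap μ s f) f := rfl
    have e2 : ∑' x, f x * f x * μ x = ip μ f f := rfl
    rw [e1, e2]
    ring

lemma dirichlet_iterate (hμ : ∀ x, 0 < μ x) (hK : Good μ s) (f : Γ → ℝ)
    (hf : Summable fun x => f x * f x * μ x) (m : ℕ) :
    (0 ≤ dirichletForm μ (iterKernel μ s (2 * m)) f) ∧
    ∀ j : ℕ, dirichletForm μ (iterKernel μ s (2 * (m * j))) f
      ≤ (j : ℝ) * dirichletForm μ (iterKernel μ s (2 * m)) f := by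
  have hgm : Good μ (iterKernel μ s m) := iter_good hμ hK m
  set T : (Γ → ℝ) → (Γ → ℝ) := Ap μ (iterKernel μ s m) with hT
  set u : ℕ → Γ → ℝ := fun i => T^[i] f with hu
  have hu0 : u 0 = f := rfl
  have husucc : ∀ i, u (i + 1) = T (u i) := fun i => Function.iterate_succ_apply' T i f
  have hl2 : ∀ i, Summable fun x => u i x * u i x * μ x := by
    intro i
    induction i with
    | zero => exact hf
    | succ i ih =>
        rw [husucc i]
        exact (Ap_l2 hμ hgm (u i) ih).1
  have hswap : ∀ a b, ip μ (u (a + 1)) (u b) = ip μ (u a) (u (b + 1)) := by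
    intro a b
    rw [husucc a, husucc b]
    exact Ap_selfadj hμ hgm (hl2 a) (hl2 b)
  have hAp : ∀ i, (fun x => Ap μ (iterKernel μ s (m * i)) f x) = u i := by
    intro i
    induction i with
    | zero =>
        funext x
        rw [Nat.mul_zero]
        rw [Ap_iter_zero hμ]
        rfl
    | succ i ih =>
        funext x
        have h1 : m * (i + 1) = m + m * i := by ring
        rw [h1, Ap_iter_add hμ hK m (m * i) f x]
        have h2 : Ap μ (iterKernel μ s (m * i)) f = u i := ih
        rw [h2, husucc i]
  have hshift : ∀ b a, ip μ (u (a + b)) (u b) = ip μ (u (a + 2 * b)) (u 0) := by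
    intro b
    induction b with
    | zero => intro a; norm_num
    | succ b ih =>
        intro a
        have h1 : a + (b + 1) = (a + b + 1) := by ring
        have h2 : ip μ (u (a + b + 1)) (u (b + 1)) = ip μ (u (a + b + 1 + 1)) (u b) :=
          (hswap (a + b + 1) b).symm
        rw [h1, h2]
        have h3 : a + b + 1 + 1 = (a + 2) + b := by ring
        rw [h3, ih (a + 2)]
        have h4 : a + 2 + 2 * b = a + 2 * (b + 1) := by ring
        rw [h4]
  have hdir : ∀ n, dirichletForm μ (iterKernel μ s (2 * (m * n))) f
      = ip μ f f - ip μ (u n) (u n) := by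
    intro n
    rw [dirichlet_eq hμ (iter_good hμ hK (2 * (m * n))) f hf]
    have h1 : 2 * (m * n) = m * (2 * n) := by ring
    have h2 : Ap μ (iterKernel μ s (2 * (m * n))) f = u (2 * n) := by
      rw [h1]; exact hAp (2 * n)
    rw [h2]
    have h3 : ip μ (u (2 * n)) f = ip μ (u n) (u n) := by
      have h5 := hshift n 0
      have e0 : (0:ℕ) + n = n := Nat.zero_add n
      have e1 : (0:ℕ) + 2 * n = 2 * n := Nat.zero_add _
      rw [e0, e1] at h5
      rw [← hu0]
      exact h5.symm
    rw [h3]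
  set A : ℕ → ℝ := fun i => ip μ (u i) (u i) with hA
  have hconv : ∀ i, A i - A (i + 1) ≤ A 0 - A 1 := by
    have hstep : ∀ i, A (i + 1) - A (i + 2) ≤ A i - A (i + 1) := by
      intro i
      have hmid : A (i + 1) = ip μ (u i) (u (i + 2)) := hswap i (i + 1)
      have := ip_convex hμ (hl2 i) (hl2 (i + 2))
      simp only [hA]
      rw [← hmid] at this
      linarith
    intro i
    induction i with
    | zero => exact le_refl _
    | succ i ih => exact le_trans (hstep i) ih
  have hsum : ∀ j : ℕ, A 0 - A j ≤ (j : ℝ) * (A 0 - A 1) := by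
    intro j
    induction j with
    | zero => simp
    | succ j ih =>
        have h1 : A 0 - A (j + 1) = (A 0 - A j) + (A j - A (j + 1)) := by ring
        rw [h1]
        push_cast
        have := hconv j
        linarith
  have hdir2m : dirichletForm μ (iterKernel μ s (2 * m)) f = A 0 - A 1 := by
    have h6 := hdir 1
    rw [Nat.mul_one] at h6
    rw [h6]
    rfl
  constructor
  · rw [hdir2m]
    have h01 : A 1 ≤ A 0 := by
      simp only [hA]
      have h1 : u 1 = Ap μ (iterKernel μ s m) f := by rw [husucc 0, hu0]
      rw [h1, hu0]
      exact (Ap_l2 hμ hgm f hf).2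
    linarith
  · intro j
    rw [hdir2m, hdir j]
    exact hsum j


lemma binom_conv (n : ℕ) (A : ℕ → ℝ) :
    ∑ i ∈ Finset.range (n + 1), (n.choose i : ℝ) * (A i + A (i + 1))
      = ∑ i ∈ Finset.range (n + 2), ((n + 1).choose i : ℝ) * A i := by
  have h1 : ∑ i ∈ Finset.range (n + 2), ((n + 1).choose i : ℝ) * A i
      = ∑ i ∈ Finset.range (n + 1), ((n + 1).choose (i + 1) : ℝ) * A (i + 1)
        + ((n + 1).choose 0 : ℝ) * A 0 :=
    Finset.sum_range_succ' (fun i => ((n + 1).choose i : ℝ) * A i) (n + 1)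
  have h2 : ∀ i, ((n + 1).choose (i + 1) : ℝ) = (n.choose i : ℝ) + (n.choose (i + 1) : ℝ) := by
    intro i
    rw [Nat.choose_succ_succ]
    push_cast
    ring
  have h3 : ∑ i ∈ Finset.range (n + 2), (n.choose i : ℝ) * A i
      = ∑ i ∈ Finset.range (n + 1), (n.choose (i + 1) : ℝ) * A (i + 1)
        + (n.choose 0 : ℝ) * A 0 :=
    Finset.sum_range_succ' (fun i => (n.choose i : ℝ) * A i) (n + 1)
  have h4 : ∑ i ∈ Finset.range (n + 2), (n.choose i : ℝ) * A i
      = ∑ i ∈ Finset.range (n + 1), (n.choose i : ℝ) * A i := by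
    rw [Finset.sum_range_succ, Nat.choose_succ_self]
    norm_num
  have h5 : ∑ i ∈ Finset.range (n + 1), ((n + 1).choose (i + 1) : ℝ) * A (i + 1)
      = ∑ i ∈ Finset.range (n + 1), (n.choose i : ℝ) * A (i + 1)
        + ∑ i ∈ Finset.range (n + 1), (n.choose (i + 1) : ℝ) * A (i + 1) := by
    rw [← Finset.sum_add_distrib]
    refine Finset.sum_congr rfl fun i _ => ?_
    rw [h2 i]
    ring
  have h6 : ∑ i ∈ Finset.range (n + 1), (n.choose i : ℝ) * (A i + A (i + 1))
      = ∑ i ∈ Finset.range (n + 1), (n.choose i : ℝ) * A i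
        + ∑ i ∈ Finset.range (n + 1), (n.choose i : ℝ) * A (i + 1) := by
    rw [← Finset.sum_add_distrib]
    refine Finset.sum_congr rfl fun i _ => ?_
    ring
  have hc0 : ((n + 1).choose 0 : ℝ) = 1 := by norm_num
  have hc0' : ((n.choose 0 : ℕ) : ℝ) = 1 := by norm_num
  rw [h1, h5, hc0]
  rw [h6]
  have h7 : ∑ i ∈ Finset.range (n + 1), (n.choose (i + 1) : ℝ) * A (i + 1)
      = ∑ i ∈ Finset.range (n + 1), (n.choose i : ℝ) * A i - 1 * A 0 := by
    have := h3
    rw [h4] at this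
    rw [hc0'] at this
    linarith
  rw [h7]
  ring

lemma K0_good (hμ : ∀ x, 0 < μ x) (hs : Good μ s) :
    Good μ (fun x y => (iterKernel μ s 1 x y + iterKernel μ s 2 x y) / 2) := by
  constructor
  · intro x y
    rw [iter_symm hμ hs 1 x y, iter_symm hμ hs 2 x y]
  · intro x y
    have h1 := iter_nonneg hμ hs.nonneg 1 x y
    have h2 := iter_nonneg hμ hs.nonneg 2 x y
    positivity
  · intro x
    refine Set.Finite.subset ((iter_finrow (μ := μ) hs.finrow 1 x).union
      (iter_finrow (μ := μ) hs.finrow 2 x)) ?_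
    intro y hy
    simp only [Set.mem_setOf_eq] at hy
    by_contra h
    simp only [Set.mem_union, Set.mem_setOf_eq, not_or, not_not] at h
    exact hy (by rw [h.1, h.2]; ring)
  · intro x
    have h1 : ∀ y, (iterKernel μ s 1 x y + iterKernel μ s 2 x y) / 2 * μ y
        = (1 / 2) * (iterKernel μ s 1 x y * μ y) + (1 / 2) * (iterKernel μ s 2 x y * μ y) :=
      fun y => by ring
    rw [tsum_congr h1,
      Summable.tsum_add ((iter_summand_summable hs.finrow 1 x μ).mul_left _)
        ((iter_summand_summable hs.finrow 2 x μ).mul_left _),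
      tsum_mul_left, tsum_mul_left, iter_rowsum hμ hs 1 x, iter_rowsum hμ hs 2 x]
    norm_num

lemma q_binom (hμ : ∀ x, 0 < μ x) (hs : Good μ s) :
    ∀ (n : ℕ) (x y : Γ),
    iterKernel μ (fun x y => (iterKernel μ s 1 x y + iterKernel μ s 2 x y) / 2) n x y
      = (1 / 2 ^ n) * ∑ i ∈ Finset.range (n + 1),
          (n.choose i : ℝ) * iterKernel μ s (n + i) x y := by
  set K0 : Γ → Γ → ℝ := fun x y => (iterKernel μ s 1 x y + iterKernel μ s 2 x y) / 2 with hK0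
  have hKg : Good μ K0 := K0_good hμ hs
  intro n
  induction n with
  | zero =>
      intro x y
      simp only [Finset.range_one, Finset.sum_singleton, Nat.choose_zero_right, Nat.add_zero,
        Nat.cast_one, pow_zero]
      norm_num
      rfl
  | succ n ih =>
      intro x y
      classical
      set Z : Finset Γ := (iter_finrow (μ := μ) hKg.finrow n x).toFinset ∪
        (Finset.range (n + 1)).biUnion
          (fun i => (iter_finrow (μ := μ) hs.finrow (n + i) x).toFinset) with hZ
      have hQZ : ∀ z, iterKernel μ K0 n x z ≠ 0 → z ∈ Z := by
        intro z hz
        exact Finset.mem_union_left _ ((iter_finrow (μ := μ) hKg.finrow n x).mem_toFinset.mpr hz)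
      have hPZ : ∀ i, i ∈ Finset.range (n + 1) → ∀ z, iterKernel μ s (n + i) x z ≠ 0 → z ∈ Z := by
        intro i hi z hz
        exact Finset.mem_union_right _ (Finset.mem_biUnion.mpr
          ⟨i, hi, (iter_finrow (μ := μ) hs.finrow (n + i) x).mem_toFinset.mpr hz⟩)
      have h1 : iterKernel μ K0 (n + 1) x y
          = ∑ z ∈ Z, iterKernel μ K0 n x z * K0 z y * μ z := by
        rw [iter_succ]
        exact tsum_eq_sum fun z hz => by
          by_cases h0 : iterKernel μ K0 n x z = 0
          · rw [h0]; ring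
          · exact absurd (hQZ z h0) hz
      have hcomp : ∀ (b : ℕ), ∀ i ∈ Finset.range (n + 1),
          ∑ z ∈ Z, iterKernel μ s (n + i) x z * iterKernel μ s b z y * μ z
            = iterKernel μ s (n + i + b) x y := by
        intro b i hi
        rw [iter_add hμ hs.finrow b (n + i) x y]
        refine (tsum_eq_sum fun z hz => ?_).symm
        by_cases h0 : iterKernel μ s (n + i) x z = 0
        · rw [h0]; ring
        · exact absurd (hPZ i hi z h0) hz
      have h2 : ∑ z ∈ Z, iterKernel μ K0 n x z * K0 z y * μ z
          = (1 / 2 ^ (n + 1)) * ∑ i ∈ Finset.range (n + 1), (n.choose i : ℝ) *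
              (iterKernel μ s (n + 1 + i) x y + iterKernel μ s (n + 1 + (i + 1)) x y) := by
        have hK0apply : ∀ a b, K0 a b = (iterKernel μ s 1 a b + iterKernel μ s 2 a b) / 2 :=
          fun a b => rfl
        have e1 : ∀ z ∈ Z, iterKernel μ K0 n x z * K0 z y * μ z
            = ∑ i ∈ Finset.range (n + 1), ((1 / 2 ^ (n + 1)) * (n.choose i : ℝ)) *
                (iterKernel μ s (n + i) x z * iterKernel μ s 1 z y * μ z
                  + iterKernel μ s (n + i) x z * iterKernel μ s 2 z y * μ z) := by
          intro z _
          rw [ih x z, hK0apply, Finset.mul_sum, Finset.sum_mul, Finset.sum_mul]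
          refine Finset.sum_congr rfl fun i _ => ?_
          ring
        rw [Finset.sum_congr rfl e1, Finset.sum_comm, Finset.mul_sum]
        refine Finset.sum_congr rfl fun i hi => ?_
        rw [← Finset.mul_sum, Finset.sum_add_distrib, hcomp 1 i hi, hcomp 2 i hi]
        have e3 : n + i + 1 = n + 1 + i := by ring
        have e4 : n + i + 2 = n + 1 + (i + 1) := by ring
        rw [e3, e4]
        ring
      rw [h1, h2]
      have h3 := binom_conv n (fun j => iterKernel μ s (n + 1 + j) x y)
      rw [h3]


lemma choose_sum_lower (m : ℕ) (hm : 1 ≤ m) :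
    2 ^ (2 * m) ≤ 4 * ∑ i ∈ Finset.range m, (2 * m).choose i := by
  set S := ∑ i ∈ Finset.range m, (2 * m).choose i with hS
  have htot : ∑ i ∈ Finset.range (2 * m + 1), (2 * m).choose i = 2 ^ (2 * m) :=
    Nat.sum_range_choose (2 * m)
  have hsplit : ∑ i ∈ Finset.range (2 * m + 1), (2 * m).choose i
      = S + ∑ i ∈ Finset.Ico m (2 * m + 1), (2 * m).choose i := by
    rw [Finset.range_eq_Ico, ← Finset.sum_Ico_consecutive _ (Nat.zero_le m) (by omega),
      ← Finset.range_eq_Ico]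
  have hsplit2 : ∑ i ∈ Finset.Ico m (2 * m + 1), (2 * m).choose i
      = (2 * m).choose m + ∑ i ∈ Finset.Ico (m + 1) (2 * m + 1), (2 * m).choose i :=
    Finset.sum_eq_sum_Ico_succ_bot (by omega) _
  have hrefl : ∑ i ∈ Finset.Ico (m + 1) (2 * m + 1), (2 * m).choose i = S := by
    rw [Finset.sum_Ico_eq_sum_range]
    have h1 : 2 * m + 1 - (m + 1) = m := by omega
    rw [h1]
    have h2 : ∀ j ∈ Finset.range m, (2 * m).choose (m + 1 + j) = (2 * m).choose (m - 1 - j) := by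
      intro j hj
      have hj' : j < m := Finset.mem_range.mp hj
      have h3 : (2 * m) - (m + 1 + j) = m - 1 - j := by omega
      rw [← h3]
      exact (Nat.choose_symm (show m + 1 + j ≤ 2 * m by omega)).symm
    rw [Finset.sum_congr rfl h2, hS]
    exact Finset.sum_range_reflect (fun j => (2 * m).choose j) m
  have hmid : (2 * m).choose m ≤ 2 * (2 * m).choose (m - 1) := by
    have h1 := Nat.choose_succ_right_eq (2 * m) (m - 1)
    have h2 : m - 1 + 1 = m := by omega
    rw [h2] at h1
    have h3 : 2 * m - (m - 1) = m + 1 := by omega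
    rw [h3] at h1
    have h4 : (2 * m).choose m * m ≤ (2 * m).choose (m - 1) * (2 * m) := by
      rw [h1]
      have : m + 1 ≤ 2 * m := by omega
      exact Nat.mul_le_mul_left _ this
    nlinarith [Nat.choose_pos (show m - 1 ≤ 2 * m by omega)]
  have hmem : (2 * m).choose (m - 1) ≤ S := by
    refine Finset.single_le_sum (f := fun i => (2 * m).choose i) (fun i _ => Nat.zero_le _) ?_
    exact Finset.mem_range.mpr (by omega)
  have hfin : 2 ^ (2 * m) = S + ((2 * m).choose m
      + ∑ i ∈ Finset.Ico (m + 1) (2 * m + 1), (2 * m).choose i) := by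
    rw [← htot, hsplit, hsplit2]
  rw [hrefl] at hfin
  omega

lemma weighted_pair_lower (m : ℕ) (P : ℕ → ℝ) (hP : ∀ i, 0 ≤ P i) (L : ℝ)
    (hL : ∀ i, i < m → L ≤ P i + P (i + 1)) (hLpos : 0 ≤ L) :
    (∑ i ∈ Finset.range m, ((2 * m).choose i : ℝ)) * L / 2
      ≤ ∑ i ∈ Finset.range (2 * m + 1), ((2 * m).choose i : ℝ) * P i := by
  set tot := ∑ i ∈ Finset.range (2 * m + 1), ((2 * m).choose i : ℝ) with htot
  have htnn : ∀ i, (0:ℝ) ≤ ((2 * m).choose i : ℝ) * P i := fun i =>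
    mul_nonneg (Nat.cast_nonneg _) (hP i)
  have h1 : ∑ i ∈ Finset.range m, ((2 * m).choose i : ℝ) * P i
      ≤ ∑ i ∈ Finset.range (2 * m + 1), ((2 * m).choose i : ℝ) * P i :=
    Finset.sum_le_sum_of_subset_of_nonneg
      (Finset.range_subset_range.mpr (by omega)) (fun i _ _ => htnn i)
  have h2 : ∑ i ∈ Finset.range m, ((2 * m).choose i : ℝ) * P (i + 1)
      ≤ ∑ i ∈ Finset.range (2 * m + 1), ((2 * m).choose i : ℝ) * P i := by
    have h3 : ∑ i ∈ Finset.range m, ((2 * m).choose i : ℝ) * P (i + 1)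
        ≤ ∑ i ∈ Finset.range m, ((2 * m).choose (i + 1) : ℝ) * P (i + 1) := by
      refine Finset.sum_le_sum fun i hi => ?_
      have hi' : i < m := Finset.mem_range.mp hi
      have hmono : (2 * m).choose i ≤ (2 * m).choose (i + 1) :=
        Nat.choose_le_succ_of_lt_half_left (by omega)
      exact mul_le_mul_of_nonneg_right (Nat.cast_le.mpr hmono) (hP (i + 1))
    have h4 : ∑ i ∈ Finset.range m, ((2 * m).choose (i + 1) : ℝ) * P (i + 1)
        ≤ ∑ i ∈ Finset.range (2 * m), ((2 * m).choose (i + 1) : ℝ) * P (i + 1) :=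
      Finset.sum_le_sum_of_subset_of_nonneg
        (Finset.range_subset_range.mpr (by omega)) (fun i _ _ => htnn (i + 1))
    have h5 : ∑ i ∈ Finset.range (2 * m + 1), ((2 * m).choose i : ℝ) * P i
        = ∑ i ∈ Finset.range (2 * m), ((2 * m).choose (i + 1) : ℝ) * P (i + 1)
          + ((2 * m).choose 0 : ℝ) * P 0 :=
      Finset.sum_range_succ' _ (2 * m)
    have h6 : (0:ℝ) ≤ ((2 * m).choose 0 : ℝ) * P 0 := htnn 0
    linarith
  have h7 : (∑ i ∈ Finset.range m, ((2 * m).choose i : ℝ)) * L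
      ≤ ∑ i ∈ Finset.range m, ((2 * m).choose i : ℝ) * (P i + P (i + 1)) := by
    rw [Finset.sum_mul]
    refine Finset.sum_le_sum fun i hi => ?_
    exact mul_le_mul_of_nonneg_left (hL i (Finset.mem_range.mp hi)) (Nat.cast_nonneg _)
  have h8 : ∑ i ∈ Finset.range m, ((2 * m).choose i : ℝ) * (P i + P (i + 1))
      = ∑ i ∈ Finset.range m, ((2 * m).choose i : ℝ) * P i
        + ∑ i ∈ Finset.range m, ((2 * m).choose i : ℝ) * P (i + 1) := by
    rw [← Finset.sum_add_distrib]
    exact Finset.sum_congr rfl fun i _ => by ring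
  linarith


lemma ball_finite {G : SimpleGraph Γ} (hconn : G.Connected)
    (hlocfin : ∀ x : Γ, {y : Γ | G.Adj x y}.Finite) (x : Γ) :
    ∀ r : ℕ, {y | G.dist x y ≤ r}.Finite := by
  intro r
  induction r with
  | zero =>
      refine Set.Finite.subset (Set.finite_singleton x) ?_
      intro y hy
      simp only [Set.mem_setOf_eq, Nat.le_zero] at hy
      rcases SimpleGraph.dist_eq_zero_iff_eq_or_not_reachable.mp hy with h | h
      · exact h.symm ▸ rfl
      · exact absurd (hconn.preconnected x y) h
  | succ r ih =>
      refine Set.Finite.subset (ih.union (Set.Finite.biUnion ih (fun z _ => hlocfin z))) ?_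
      intro y hy
      simp only [Set.mem_setOf_eq] at hy
      by_cases hle : G.dist x y ≤ r
      · exact Set.mem_union_left _ hle
      · have heq : G.dist x y = r + 1 := by omega
        obtain ⟨p, hp⟩ := hconn.exists_walk_length_eq_dist x y
        rw [heq] at hp
        right
        set pr := p.reverse with hpr
        have hprl : pr.length = r + 1 := by rw [hpr, SimpleGraph.Walk.length_reverse, hp]
        cases hcase : pr with
        | nil =>
            rw [hcase] at hprl
            simp at hprl
        | @cons _ v _ hadj q =>
            rw [hcase] at hprl
            rw [SimpleGraph.Walk.length_cons] at hprl
            have hql : q.length = r := by omega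
            have hdz : G.dist x v ≤ r := by
              have := SimpleGraph.dist_le q.reverse
              rw [SimpleGraph.Walk.length_reverse, hql] at this
              exact this
            exact Set.mem_biUnion hdz hadj.symm

end PPI

set_option maxHeartbeats 2000000 in
open PPI in
/-- Lemma 2.5: pseudo-Poincaré inequality for iterated powers of `Q`. -/
theorem pseudo_poincare_iterated_Q
    {Γ : Type*} [Countable Γ] [Infinite Γ]
    (G : SimpleGraph Γ) (hconn : G.Connected)
    (hlocfin : ∀ x : Γ, {y : Γ | G.Adj x y}.Finite)
    -- edge weights
    (w : Γ → Γ → ℝ) (hw_symm : ∀ x y, w x y = w y x)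
    (hw_nonneg : ∀ x y, 0 ≤ w x y)
    (hw_pos : ∀ x y, 0 < w x y ↔ G.Adj x y)
    -- vertex measure
    (μ : Γ → ℝ) (hμ : ∀ x, μ x = ∑' y : Γ, w x y)
    -- (count): μ comparable to the counting measure
    (Cμ : ℝ) (hCμ : 1 ≤ Cμ) (hcount : ∀ x, Cμ⁻¹ ≤ μ x ∧ μ x ≤ Cμ)
    -- volume of balls and uniform volume doubling
    (Vb : Γ → ℝ → ℝ)
    (hVb : ∀ x r, Vb x r = ∑' y : {y : Γ // (G.dist x y : ℝ) ≤ r}, μ (y : Γ))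
    (V : ℝ → ℝ) (hVpos : ∀ r : ℝ, 0 ≤ r → 0 < V r)
    (hVmono : StrictMonoOn V (Set.Ici (0 : ℝ)))
    (hVcont : ContinuousOn V (Set.Ici (0 : ℝ)))
    (C_D C_h : ℝ) (hC_D : 1 < C_D) (hC_h : 1 < C_h)
    (hdoub : ∀ r : ℝ, 0 < r → V (2 * r) ≤ C_D * V r)
    (hhom : ∀ (x : Γ) (r : ℝ), 0 < r → C_h⁻¹ * V r ≤ Vb x r ∧ Vb x r ≤ C_h * V r)
    -- the heat kernel of the natural random walk
    (p : ℕ → Γ → Γ → ℝ)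
    (hp : ∀ n, p n = iterKernel μ (fun x y => w x y / (μ x * μ y)) n)
    -- sub-Gaussian estimates with escape time exponent γ
    (γ : ℝ) (hγ : 1 < γ)
    (c C : ℝ) (hc : 0 < c) (hC : 0 < C)
    (hsubgU : ∀ (n : ℕ) (x y : Γ), 1 ≤ n →
      p n x y ≤ C / V ((n : ℝ) ^ (1 / γ)) *
        Real.exp (-(((G.dist x y : ℝ) ^ γ / (C * n)) ^ (1 / (γ - 1)))))
    (hsubgL : ∀ (n : ℕ) (x y : Γ), 1 ≤ n → G.dist x y ≤ n →
      c / V ((n : ℝ) ^ (1 / γ)) *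
        Real.exp (-(((G.dist x y : ℝ) ^ γ / (c * n)) ^ (1 / (γ - 1))))
        ≤ p n x y + p (n + 1) x y)
    -- Q = (P + P²)/2 and its iterated kernels q_n
    (q : ℕ → Γ → Γ → ℝ)
    (hq : ∀ n, q n = iterKernel μ (fun x y => (p 1 x y + p 2 x y) / 2) n)
    :
    ∃ C₁ : ℝ, 0 < C₁ ∧ ∀ f : Γ → ℝ,
      Summable (fun x : Γ => f x ^ 2 * μ x) →
      ∀ (k : ℕ) (R : ℝ), 1 ≤ k → (k : ℝ) ≤ R →
      (∑' x : Γ, (f x - ballAvg G μ f R x) ^ 2 * μ x) ≤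
        C₁ * (R / k) ^ γ * dirichletForm μ (q (2 * ⌊(k : ℝ) ^ γ⌋₊)) f := by
  classical
  have hμpos : ∀ x, 0 < μ x := fun x =>
    lt_of_lt_of_le (by positivity : (0:ℝ) < Cμ⁻¹) (hcount x).1
  -- base kernel
  set kb : Γ → Γ → ℝ := fun x y => w x y / (μ x * μ y) with hkb
  have hkbgood : Good μ kb := by
    constructor
    · intro x y
      show w x y / (μ x * μ y) = w y x / (μ y * μ x)
      rw [hw_symm x y, mul_comm (μ x) (μ y)]
    · intro x y
      have h1 := hw_nonneg x y
      have h2 := (hμpos x).le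
      have h3 := (hμpos y).le
      positivity
    · intro x
      refine Set.Finite.subset (hlocfin x) fun y hy => ?_
      simp only [Set.mem_setOf_eq] at hy ⊢
      have hw0 : w x y ≠ 0 := by
        intro h0
        exact hy (by show w x y / (μ x * μ y) = 0; rw [h0]; simp)
      exact (hw_pos x y).mp (lt_of_le_of_ne (hw_nonneg x y) (Ne.symm hw0))
    · intro x
      have h1 : ∀ y, kb x y * μ y = w x y * (μ x)⁻¹ := by
        intro y
        show w x y / (μ x * μ y) * μ y = w x y * (μ x)⁻¹
        have hyne := (hμpos y).ne'
        have hxne := (hμpos x).ne'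
        field_simp
      rw [tsum_congr h1, tsum_mul_right, ← hμ x, mul_inv_cancel₀ (hμpos x).ne']
  -- Q-kernel
  set KK : Γ → Γ → ℝ := fun a b => (iterKernel μ kb 1 a b + iterKernel μ kb 2 a b) / 2 with hKK
  have hKKgood : Good μ KK := K0_good hμpos hkbgood
  have hqK : ∀ n, q n = iterKernel μ KK n := by
    intro n
    rw [hq n]
    have he : (fun a b => (p 1 a b + p 2 a b) / 2) = KK := by
      funext a b
      rw [hKK]
      show (p 1 a b + p 2 a b) / 2 = _
      rw [hp 1, hp 2]
    rw [he]
  -- constants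
  have hγ0 : (0:ℝ) < γ := lt_trans one_pos hγ
  have hγ1 : (0:ℝ) < γ - 1 := by linarith
  have hCD0 : (0:ℝ) < C_D := lt_trans one_pos hC_D
  have hCh0 : (0:ℝ) < C_h := lt_trans one_pos hC_h
  set e₀ : ℝ := Real.exp (-(((1:ℝ)/c) ^ (1/(γ-1)))) with he₀
  have he₀pos : 0 < e₀ := Real.exp_pos _
  set a₀ : ℝ := c * e₀ / (8 * C_D ^ 3) with ha₀
  have ha₀pos : 0 < a₀ := by rw [ha₀]; positivity
  -- the kernel lower bound
  have qlow : ∀ M : ℕ, 1 ≤ M → ∀ x y : Γ, G.dist x y ≤ 2 * M →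
      (c / V ((4 * (M:ℝ)) ^ (1/γ))) *
        Real.exp (-(((G.dist x y : ℝ) ^ γ / (c * (2 * (M:ℝ)))) ^ (1/(γ-1)))) / 8
        ≤ iterKernel μ KK (2 * M) x y := by
    intro M hM x y hd
    rw [hKK, q_binom hμpos hkbgood (2 * M) x y]
    set d : ℕ := G.dist x y with hdd
    set L : ℝ := (c / V ((4 * (M:ℝ)) ^ (1/γ))) *
        Real.exp (-(((d : ℝ) ^ γ / (c * (2 * (M:ℝ)))) ^ (1/(γ-1)))) with hLdef
    have hM0 : (0:ℝ) < (M:ℝ) := by exact_mod_cast hM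
    have hV4M : 0 < V ((4 * (M:ℝ)) ^ (1/γ)) := hVpos _ (Real.rpow_nonneg (by positivity) _)
    have hLnn : 0 ≤ L := by
      rw [hLdef]; positivity
    have hP : ∀ i, 0 ≤ iterKernel μ kb (2 * M + i) x y := fun i =>
      iter_nonneg hμpos hkbgood.nonneg _ x y
    have hpair : ∀ i, i < M →
        L ≤ iterKernel μ kb (2 * M + i) x y + iterKernel μ kb (2 * M + (i + 1)) x y := by
      intro i hi
      have hn1 : 1 ≤ 2 * M + i := by omega
      have hdn : d ≤ 2 * M + i := by omega
      have hsub := hsubgL (2 * M + i) x y hn1 hdn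
      rw [hp (2 * M + i), hp (2 * M + i + 1)] at hsub
      have hiq : 2 * M + i + 1 = 2 * M + (i + 1) := by omega
      rw [hiq] at hsub
      refine le_trans ?_ hsub
      have hnc : (0:ℝ) ≤ ((2 * M + i : ℕ) : ℝ) := Nat.cast_nonneg _
      have hVn : 0 < V (((2 * M + i : ℕ) : ℝ) ^ (1/γ)) := hVpos _ (Real.rpow_nonneg hnc _)
      have hfac1 : c / V ((4 * (M:ℝ)) ^ (1/γ)) ≤ c / V (((2 * M + i : ℕ) : ℝ) ^ (1/γ)) := by
        have h1 : ((2 * M + i : ℕ) : ℝ) ≤ 4 * (M:ℝ) := by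
          push_cast
          have hi' : (i:ℝ) ≤ (M:ℝ) := by exact_mod_cast hi.le
          linarith
        have h2 : ((2 * M + i : ℕ) : ℝ) ^ (1/γ) ≤ (4 * (M:ℝ)) ^ (1/γ) :=
          Real.rpow_le_rpow hnc h1 (by positivity)
        have h3 : V (((2 * M + i : ℕ) : ℝ) ^ (1/γ)) ≤ V ((4 * (M:ℝ)) ^ (1/γ)) :=
          hVmono.monotoneOn (Set.mem_Ici.mpr (Real.rpow_nonneg hnc _))
            (Set.mem_Ici.mpr (Real.rpow_nonneg (by positivity) _)) h2
        gcongr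
      have hexp : Real.exp (-(((d:ℝ) ^ γ / (c * (2 * (M:ℝ)))) ^ (1/(γ-1))))
          ≤ Real.exp (-(((d:ℝ) ^ γ / (c * ((2 * M + i : ℕ) : ℝ))) ^ (1/(γ-1)))) := by
        apply Real.exp_le_exp.mpr
        apply neg_le_neg
        apply Real.rpow_le_rpow (by positivity) ?_ (by positivity)
        apply div_le_div_of_nonneg_left (by positivity) (by positivity)
        push_cast
        have hi' : (0:ℝ) ≤ (i:ℝ) := Nat.cast_nonneg i
        nlinarith
      rw [hLdef]
      have hexp0 : (0:ℝ) ≤ Real.exp (-(((d:ℝ) ^ γ / (c * (2 * (M:ℝ)))) ^ (1/(γ-1)))) :=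
        (Real.exp_pos _).le
      exact mul_le_mul hfac1 hexp hexp0 (by positivity)
    have hwpl := weighted_pair_lower M (fun i => iterKernel μ kb (2 * M + i) x y) hP L hpair hLnn
    have hbin : (2:ℝ) ^ (2 * M) ≤ 4 * ∑ i ∈ Finset.range M, ((2 * M).choose i : ℝ) := by
      have h1 := choose_sum_lower M hM
      have h2 : ((2 ^ (2 * M) : ℕ) : ℝ)
          ≤ ((4 * ∑ i ∈ Finset.range M, (2 * M).choose i : ℕ) : ℝ) := Nat.cast_le.mpr h1
      push_cast at h2
      exact h2
    set Sc : ℝ := ∑ i ∈ Finset.range M, ((2 * M).choose i : ℝ) with hSc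
    set Tot : ℝ := ∑ i ∈ Finset.range (2 * M + 1),
      ((2 * M).choose i : ℝ) * iterKernel μ kb (2 * M + i) x y with hTot
    have hScnn : (0:ℝ) ≤ Sc := Finset.sum_nonneg fun i _ => Nat.cast_nonneg _
    have hTotge : (2:ℝ) ^ (2 * M) * (L / 8) ≤ Tot := by
      refine le_trans ?_ hwpl
      have h1 : (2:ℝ) ^ (2 * M) / 4 * L ≤ Sc * L :=
        mul_le_mul_of_nonneg_right (by linarith) hLnn
      calc (2:ℝ) ^ (2 * M) * (L / 8) = ((2:ℝ) ^ (2 * M) / 4 * L) / 2 := by ring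
        _ ≤ Sc * L / 2 := by linarith
    have h2M : ((2:ℝ)) ^ (2 * M) ≠ 0 := by positivity
    calc L / 8 = 1 / 2 ^ (2 * M) * ((2:ℝ) ^ (2 * M) * (L / 8)) := by
          rw [← mul_assoc, one_div, inv_mul_cancel₀ h2M, one_mul]
      _ ≤ 1 / 2 ^ (2 * M) * Tot := by
          have hpos : (0:ℝ) ≤ 1 / 2 ^ (2 * M) := by positivity
          exact mul_le_mul_of_nonneg_left hTotge hpos
  refine ⟨4 * C_h / a₀, by positivity, ?_⟩
  intro f hf2 k R hk1 hkR
  have hff : Summable fun x => f x * f x * μ x := hf2.congr fun x => by ring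
  -- numerology
  set m : ℕ := ⌊(k : ℝ) ^ γ⌋₊ with hm
  set j : ℕ := ⌈(R / k) ^ γ⌉₊ with hj
  set N : ℕ := m * j with hN
  have hk0 : (0:ℝ) < (k:ℝ) := by exact_mod_cast hk1
  have hk1' : (1:ℝ) ≤ (k:ℝ) := by exact_mod_cast hk1
  have hR1 : (1:ℝ) ≤ R := le_trans hk1' hkR
  have hR0 : (0:ℝ) < R := lt_of_lt_of_le one_pos hR1
  have htk1 : (1:ℝ) ≤ (k:ℝ) ^ γ := by
    calc (1:ℝ) = (1:ℝ) ^ γ := (Real.one_rpow γ).symm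
      _ ≤ (k:ℝ) ^ γ := Real.rpow_le_rpow zero_le_one hk1' hγ0.le
  have hm1 : 1 ≤ m := Nat.le_floor (by exact_mod_cast htk1)
  have hmle : (m:ℝ) ≤ (k:ℝ) ^ γ := Nat.floor_le (by positivity)
  have hmge : (k:ℝ) ^ γ / 2 ≤ (m:ℝ) := by
    rcases le_or_gt ((k:ℝ) ^ γ) 2 with h | h
    · have : (k:ℝ) ^ γ / 2 ≤ 1 := by linarith
      exact le_trans this (by exact_mod_cast hm1)
    · have h1 := Nat.sub_one_lt_floor ((k:ℝ) ^ γ)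
      rw [← hm] at h1
      linarith
  have hsR1 : (1:ℝ) ≤ (R / k) ^ γ := by
    calc (1:ℝ) = (1:ℝ) ^ γ := (Real.one_rpow γ).symm
      _ ≤ (R / k) ^ γ := Real.rpow_le_rpow zero_le_one ((le_div_iff₀ hk0).mpr (by linarith)) hγ0.le
  have hj1 : 1 ≤ j := Nat.le_ceil ((R / k) ^ γ) |> fun h => Nat.one_le_iff_ne_zero.mpr (by
    intro h0
    rw [hj] at h0
    have := Nat.le_ceil ((R / k) ^ γ)
    rw [h0] at this
    push_cast at this
    linarith)
  have hjge : (R / k) ^ γ ≤ (j:ℝ) := Nat.le_ceil _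
  have hjle : (j:ℝ) ≤ 2 * (R / k) ^ γ := by
    have h1 := Nat.ceil_lt_add_one (show (0:ℝ) ≤ (R/k)^γ by positivity)
    rw [← hj] at h1
    linarith
  have hN1 : 1 ≤ N := Nat.one_le_iff_ne_zero.mpr (Nat.mul_ne_zero
    (Nat.one_le_iff_ne_zero.mp hm1) (Nat.one_le_iff_ne_zero.mp hj1))
  have hRγk : (R / k) ^ γ * (k:ℝ) ^ γ = R ^ γ := by
    rw [← Real.mul_rpow (by positivity) (by positivity), div_mul_cancel₀ _ hk0.ne']
  have hNge : R ^ γ / 2 ≤ (N:ℝ) := by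
    have h1 : (N:ℝ) = (m:ℝ) * (j:ℝ) := by rw [hN]; push_cast; ring
    have h2 : (k:ℝ) ^ γ / 2 * ((R / k) ^ γ) ≤ (m:ℝ) * (j:ℝ) := by
      apply mul_le_mul hmge hjge (by positivity)
      positivity
    rw [h1]
    calc R ^ γ / 2 = (k:ℝ) ^ γ / 2 * ((R / k) ^ γ) := by
          rw [mul_comm, ← mul_div_assoc, hRγk]
      _ ≤ (m:ℝ) * (j:ℝ) := h2
  have hNle : (N:ℝ) ≤ 2 * R ^ γ := by
    have h1 : (N:ℝ) = (m:ℝ) * (j:ℝ) := by rw [hN]; push_cast; ring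
    rw [h1]
    calc (m:ℝ) * (j:ℝ) ≤ (k:ℝ) ^ γ * (2 * (R / k) ^ γ) := by
          apply mul_le_mul hmle hjle (by positivity) (by positivity)
      _ = 2 * R ^ γ := by rw [← hRγk]; ring
  have hRRγ : R ≤ R ^ γ := by
    calc R = R ^ (1:ℝ) := (Real.rpow_one R).symm
      _ ≤ R ^ γ := Real.rpow_le_rpow_of_exponent_le hR1 (by linarith)
  -- final kernel lower bound at time 2N over the R-ball
  have key : ∀ x y : Γ, (G.dist x y : ℝ) ≤ R →
      a₀ / V R ≤ iterKernel μ KK (2 * N) x y := by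
    intro x y hdR
    have hdist : G.dist x y ≤ 2 * N := by
      have h1 : (G.dist x y : ℝ) ≤ ((2 * N : ℕ) : ℝ) := by
        push_cast
        linarith [hNge, hRRγ]
      exact_mod_cast h1
    have hqlow := qlow N hN1 x y hdist
    refine le_trans ?_ hqlow
    have hd0 : (0:ℝ) ≤ (G.dist x y : ℝ) := Nat.cast_nonneg _
    have hVR : 0 < V R := hVpos R hR0.le
    have hN0 : (0:ℝ) < (N:ℝ) := by exact_mod_cast hN1
    have hVN : 0 < V ((4 * (N:ℝ)) ^ (1/γ)) := hVpos _ (Real.rpow_nonneg (by positivity) _)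
    have hrad : (4 * (N:ℝ)) ^ (1/γ) ≤ 8 * R := by
      have h4N : 4 * (N:ℝ) ≤ 8 * R ^ γ := by linarith [hNle]
      have h1 : (4 * (N:ℝ)) ^ (1/γ) ≤ (8 * R ^ γ) ^ (1/γ) :=
        Real.rpow_le_rpow (by positivity) h4N (by positivity)
      have h2 : ((8:ℝ) * R ^ γ) ^ (1/γ) = (8:ℝ) ^ (1/γ) * (R ^ γ) ^ (1/γ) :=
        Real.mul_rpow (by norm_num) (by positivity)
      have h3 : ((R:ℝ) ^ γ) ^ (1/γ) = R := by
        rw [← Real.rpow_mul hR0.le, mul_one_div, div_self hγ0.ne', Real.rpow_one]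
      have h4 : (8:ℝ) ^ (1/γ) ≤ 8 := by
        calc (8:ℝ) ^ (1/γ) ≤ (8:ℝ) ^ (1:ℝ) := Real.rpow_le_rpow_of_exponent_le (by norm_num)
              (by rw [div_le_one hγ0]; linarith)
          _ = 8 := Real.rpow_one 8
      rw [h2, h3] at h1
      calc (4 * (N:ℝ)) ^ (1/γ) ≤ (8:ℝ) ^ (1/γ) * R := h1
        _ ≤ 8 * R := mul_le_mul_of_nonneg_right h4 hR0.le
    have hV8R : V ((4 * (N:ℝ)) ^ (1/γ)) ≤ C_D ^ 3 * V R := by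
      have h1 : V ((4 * (N:ℝ)) ^ (1/γ)) ≤ V (8 * R) :=
        hVmono.monotoneOn (Set.mem_Ici.mpr (Real.rpow_nonneg (by positivity) _))
          (Set.mem_Ici.mpr (by positivity)) hrad
      have e1 : (8:ℝ) * R = 2 * (2 * (2 * R)) := by ring
      have h2 : V (2 * (2 * (2 * R))) ≤ C_D * V (2 * (2 * R)) := hdoub _ (by positivity)
      have h3 : V (2 * (2 * R)) ≤ C_D * V (2 * R) := hdoub _ (by positivity)
      have h4 : V (2 * R) ≤ C_D * V R := hdoub _ (by positivity)
      have h5 : V (2 * (2 * R)) ≤ C_D * (C_D * V R) :=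
        le_trans h3 (mul_le_mul_of_nonneg_left h4 hCD0.le)
      have h6 : V (2 * (2 * (2 * R))) ≤ C_D * (C_D * (C_D * V R)) :=
        le_trans h2 (mul_le_mul_of_nonneg_left h5 hCD0.le)
      calc V ((4 * (N:ℝ)) ^ (1/γ)) ≤ V (2 * (2 * (2 * R))) := by rw [← e1]; exact h1
        _ ≤ C_D * (C_D * (C_D * V R)) := h6
        _ = C_D ^ 3 * V R := by ring
    have hexp : e₀ ≤ Real.exp (-(((G.dist x y : ℝ) ^ γ / (c * (2 * (N:ℝ)))) ^ (1/(γ-1)))) := by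
      rw [he₀]
      apply Real.exp_le_exp.mpr
      apply neg_le_neg
      apply Real.rpow_le_rpow (by positivity) ?_ (by positivity)
      have hdγ : (G.dist x y : ℝ) ^ γ ≤ R ^ γ := Real.rpow_le_rpow hd0 hdR hγ0.le
      have h2N : R ^ γ ≤ 2 * (N:ℝ) := by linarith [hNge]
      have hRγpos : (0:ℝ) < R ^ γ := Real.rpow_pos_of_pos hR0 γ
      have hle : c * R ^ γ ≤ c * (2 * (N:ℝ)) := mul_le_mul_of_nonneg_left h2N hc.le
      calc (G.dist x y : ℝ) ^ γ / (c * (2 * (N:ℝ))) ≤ R ^ γ / (c * R ^ γ) :=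
            div_le_div₀ hRγpos.le hdγ (by positivity) hle
        _ = 1 / c := by
            field_simp
    have hfrac : c / (C_D ^ 3 * V R) ≤ c / V ((4 * (N:ℝ)) ^ (1/γ)) :=
      div_le_div_of_nonneg_left hc.le hVN hV8R
    have hmul : (c / (C_D ^ 3 * V R)) * e₀
        ≤ (c / V ((4 * (N:ℝ)) ^ (1/γ))) *
          Real.exp (-(((G.dist x y : ℝ) ^ γ / (c * (2 * (N:ℝ)))) ^ (1/(γ-1)))) :=
      mul_le_mul hfrac hexp he₀pos.le (by positivity)
    have heq : a₀ / V R = (c / (C_D ^ 3 * V R)) * e₀ / 8 := by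
      rw [ha₀]
      field_simp
    rw [heq]
    linarith
  -- summability of the energy integrand
  set Q2N : Γ → Γ → ℝ := iterKernel μ KK (2 * N) with hQ2N
  have hQ2Ngood : Good μ Q2N := iter_good hμpos hKKgood (2 * N)
  have hEE := energy_expand hμpos hQ2Ngood f hff
  -- pointwise comparison
  have main_pt : ∀ x : Γ, (f x - ballAvg G μ f R x) ^ 2 * μ x
      ≤ (C_h / a₀) * ((∑' y, (f x - f y) ^ 2 * Q2N x y * μ y) * μ x) := by
    intro x
    have hBeq : {y : Γ | (G.dist x y : ℝ) ≤ R} = {y : Γ | G.dist x y ≤ ⌊R⌋₊} := by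
      ext y
      simp only [Set.mem_setOf_eq]
      exact (Nat.le_floor_iff hR0.le).symm
    have hBfin : {y : Γ | (G.dist x y : ℝ) ≤ R}.Finite := by
      rw [hBeq]; exact ball_finite hconn hlocfin x ⌊R⌋₊
    set t : Finset Γ := hBfin.toFinset with ht
    have hmem : ∀ y, y ∈ t ↔ (G.dist x y : ℝ) ≤ R := fun y => hBfin.mem_toFinset
    have hxB : x ∈ t := (hmem x).mpr (by rw [SimpleGraph.dist_self]; push_cast; linarith)
    set S2 : ℝ := ∑ y ∈ t, μ y with hS2
    have hS2pos : 0 < S2 := lt_of_lt_of_le (hμpos x)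
      (Finset.single_le_sum (fun y _ => (hμpos y).le) hxB)
    have hsubty : ∀ g : Γ → ℝ, ∑' y : {y : Γ // (G.dist x y : ℝ) ≤ R}, g (y : Γ)
        = ∑ y ∈ t, g y := by
      intro g
      have h0 : ∑' y : {y : Γ // (G.dist x y : ℝ) ≤ R}, g (y : Γ)
          = ∑' y, Set.indicator {y : Γ | (G.dist x y : ℝ) ≤ R} g y :=
        tsum_subtype {y : Γ | (G.dist x y : ℝ) ≤ R} g
      rw [h0]
      calc ∑' y, Set.indicator {y : Γ | (G.dist x y : ℝ) ≤ R} g y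
          = ∑ y ∈ t, Set.indicator {y : Γ | (G.dist x y : ℝ) ≤ R} g y :=
            tsum_eq_sum (fun y hy => by
              apply Set.indicator_of_notMem
              intro hm
              exact hy ((hmem y).mpr hm))
        _ = ∑ y ∈ t, g y := Finset.sum_congr rfl fun y hy => by
              apply Set.indicator_of_mem
              exact (hmem y).mp hy
    have havg : ballAvg G μ f R x = (∑ y ∈ t, f y * μ y) / S2 := by
      rw [ballAvg, hsubty (fun y => f y * μ y), hS2, hsubty (fun y => μ y)]
    have hVbS2 : Vb x R = S2 := by rw [hVb x R, hS2, hsubty (fun y => μ y)]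
    set A : ℝ := ∑ y ∈ t, (f x - f y) * μ y with hA
    have hdiff : f x - ballAvg G μ f R x = A / S2 := by
      rw [havg, hA]
      rw [eq_div_iff hS2pos.ne']
      have h1 : ∑ y ∈ t, (f x - f y) * μ y = f x * S2 - ∑ y ∈ t, f y * μ y := by
        rw [hS2, Finset.mul_sum, ← Finset.sum_sub_distrib]
        exact Finset.sum_congr rfl fun y _ => by ring
      rw [h1]
      field_simp
    have hCS : A ^ 2 ≤ S2 * ∑ y ∈ t, (f x - f y) ^ 2 * μ y := by
      have h1 := Finset.sum_mul_sq_le_sq_mul_sq t (fun y => Real.sqrt (μ y))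
        (fun y => Real.sqrt (μ y) * (f x - f y))
      have e1 : ∀ y ∈ t, Real.sqrt (μ y) * (Real.sqrt (μ y) * (f x - f y))
          = (f x - f y) * μ y := by
        intro y _
        rw [← mul_assoc, Real.mul_self_sqrt (hμpos y).le]
        ring
      have e2 : ∀ y ∈ t, Real.sqrt (μ y) ^ 2 = μ y := fun y _ => Real.sq_sqrt (hμpos y).le
      have e3 : ∀ y ∈ t, (Real.sqrt (μ y) * (f x - f y)) ^ 2 = (f x - f y) ^ 2 * μ y := by
        intro y _
        rw [mul_pow, Real.sq_sqrt (hμpos y).le]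
        ring
      rw [Finset.sum_congr rfl e1, Finset.sum_congr rfl e2, Finset.sum_congr rfl e3] at h1
      exact h1
    set B : ℝ := ∑ y ∈ t, (f x - f y) ^ 2 * μ y with hB
    have hBnn : 0 ≤ B :=
      Finset.sum_nonneg fun y _ => mul_nonneg (sq_nonneg _) (hμpos y).le
    have hJ1 : (f x - ballAvg G μ f R x) ^ 2 ≤ B / S2 := by
      rw [hdiff, div_pow]
      rw [div_le_div_iff₀ (by positivity) hS2pos]
      nlinarith [hCS, hS2pos.le, sq_nonneg S2]
    have hVRpos : 0 < V R := hVpos R hR0.le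
    have hinvS2 : 1 / S2 ≤ C_h / V R := by
      have h1 := (hhom x R hR0).1
      rw [hVbS2] at h1
      rw [div_le_div_iff₀ hS2pos hVRpos]
      have h2 := mul_le_mul_of_nonneg_left h1 hCh0.le
      rw [← mul_assoc, mul_inv_cancel₀ hCh0.ne', one_mul] at h2
      linarith
    have hJ2 : B / S2 ≤ (C_h / V R) * B := by
      calc B / S2 = B * (1 / S2) := by ring
        _ ≤ B * (C_h / V R) := mul_le_mul_of_nonneg_left hinvS2 hBnn
        _ = (C_h / V R) * B := by ring
    have hQnn : ∀ y, 0 ≤ Q2N x y := fun y => iter_nonneg hμpos hKKgood.nonneg _ x y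
    have hJ3 : (C_h / V R) * B ≤ (C_h / a₀) * ∑ y ∈ t, (f x - f y) ^ 2 * Q2N x y * μ y := by
      rw [hB, Finset.mul_sum, Finset.mul_sum]
      refine Finset.sum_le_sum fun y hy => ?_
      have hkey : a₀ / V R ≤ Q2N x y := by
        rw [hQ2N]
        exact key x y ((hmem y).mp hy)
      have h1 : C_h / V R ≤ (C_h / a₀) * Q2N x y := by
        have h2 : C_h / V R = (C_h / a₀) * (a₀ / V R) := by
          field_simp
        rw [h2]
        exact mul_le_mul_of_nonneg_left hkey (by positivity)
      calc C_h / V R * ((f x - f y) ^ 2 * μ y)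
          ≤ ((C_h / a₀) * Q2N x y) * ((f x - f y) ^ 2 * μ y) :=
            mul_le_mul_of_nonneg_right h1 (mul_nonneg (sq_nonneg _) (hμpos y).le)
        _ = (C_h / a₀) * ((f x - f y) ^ 2 * Q2N x y * μ y) := by ring
    have hsumQ : Summable (fun y => (f x - f y) ^ 2 * Q2N x y * μ y) := by
      apply summable_fin
      refine (hQ2Ngood.finrow x).subset fun y hy => ?_
      simp only [Set.mem_setOf_eq] at hy ⊢
      intro h0; exact hy (by rw [h0]; ring)
    have hJ4 : ∑ y ∈ t, (f x - f y) ^ 2 * Q2N x y * μ y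
        ≤ ∑' y, (f x - f y) ^ 2 * Q2N x y * μ y :=
      Summable.sum_le_tsum t (fun y _ => mul_nonneg (mul_nonneg (sq_nonneg _) (hQnn y)) (hμpos y).le)
        hsumQ
    have hchain : (f x - ballAvg G μ f R x) ^ 2
        ≤ (C_h / a₀) * ∑' y, (f x - f y) ^ 2 * Q2N x y * μ y := by
      refine le_trans hJ1 (le_trans hJ2 (le_trans hJ3 ?_))
      exact mul_le_mul_of_nonneg_left hJ4 (by positivity)
    calc (f x - ballAvg G μ f R x) ^ 2 * μ x
        ≤ ((C_h / a₀) * ∑' y, (f x - f y) ^ 2 * Q2N x y * μ y) * μ x :=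
          mul_le_mul_of_nonneg_right hchain (hμpos x).le
      _ = (C_h / a₀) * ((∑' y, (f x - f y) ^ 2 * Q2N x y * μ y) * μ x) := by ring
  -- assemble
  have hsum_rhs : Summable (fun x => (C_h / a₀) * ((∑' y, (f x - f y) ^ 2 * Q2N x y * μ y) * μ x)) :=
    hEE.1.mul_left _
  have hsum_lhs : Summable (fun x => (f x - ballAvg G μ f R x) ^ 2 * μ x) :=
    Summable.of_nonneg_of_le (fun x => mul_nonneg (sq_nonneg _) (hμpos x).le) main_pt hsum_rhs
  have htsum := Summable.tsum_le_tsum main_pt hsum_lhs hsum_rhs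
  refine le_trans htsum ?_
  rw [tsum_mul_left, hEE.2]
  obtain ⟨hE0, hEiter⟩ := dirichlet_iterate hμpos hKKgood f hff m
  have h2m := hEiter j
  rw [← hN] at h2m
  rw [← hQ2N] at h2m
  rw [hqK (2 * m)]
  have hEnn : 0 ≤ dirichletForm μ (iterKernel μ KK (2 * m)) f := hE0
  set E2m : ℝ := dirichletForm μ (iterKernel μ KK (2 * m)) f with hE2m
  calc C_h / a₀ * (2 * dirichletForm μ Q2N f)
      ≤ C_h / a₀ * (2 * ((j : ℝ) * E2m)) := by
        have h1 : dirichletForm μ Q2N f ≤ (j : ℝ) * E2m := h2m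
        have h2 : (0:ℝ) ≤ C_h / a₀ := by positivity
        nlinarith
    _ ≤ C_h / a₀ * (2 * ((2 * (R / k) ^ γ) * E2m)) := by
        have h1 : (j : ℝ) * E2m ≤ (2 * (R / k) ^ γ) * E2m :=
          mul_le_mul_of_nonneg_right hjle hEnn
        have h2 : (0:ℝ) ≤ C_h / a₀ := by positivity
        nlinarith
    _ = 4 * C_h / a₀ * (R / ↑k) ^ γ * E2m := by ring

end
end

section
/- Let φ : [0,∞) → [1,∞) be a continuous function that is regularly varying of index β > 0, and let γ > 1. Define η : [0,∞) → (0,∞) by η(t) = t^γ / ∫₀^t s^{γ−1}/φ(s) ds for t > 0 and η(0) = γφ(0). Then: (a) η is continuous, positive, and regularly varying of index min(β,γ) (i.e. η(λt)/η(t) → λ^{min(β,γ)} as t → ∞ for every λ > 0); (b) there exists C₁ > 0 such that η(x) ≤ C₁ φ(x) for all x ≥ 0. -/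
set_option maxHeartbeats 1000000


open Filter

open Set MeasureTheory in
/-- Lemma 3.3 (a),(b): `η(t) = t^γ / ∫₀ᵗ s^{γ-1}/φ(s) ds` is continuous, positive and
regularly varying of index `min(β,γ)`, and `η ≤ C₁ φ`. -/
theorem eta_regularly_varying
    (φ : ℝ → ℝ) (hφcont : ContinuousOn φ (Set.Ici (0 : ℝ)))
    (hφge : ∀ t : ℝ, 0 ≤ t → 1 ≤ φ t)
    (β : ℝ) (hβ : 0 < β)
    (hφrv : ∀ l : ℝ, 0 < l →
      Tendsto (fun t : ℝ => φ (l * t) / φ t) atTop (nhds (l ^ β)))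
    (γ : ℝ) (hγ : 1 < γ)
    (η : ℝ → ℝ)
    (hη : ∀ t : ℝ, 0 < t → η t = t ^ γ / ∫ s in (0 : ℝ)..t, s ^ (γ - 1) / φ s)
    (hη0 : η 0 = γ * φ 0) :
    -- (a) η is continuous, positive and regularly varying of index min(β,γ)
    (ContinuousOn η (Set.Ici (0 : ℝ)) ∧ (∀ t : ℝ, 0 ≤ t → 0 < η t) ∧
      (∀ l : ℝ, 0 < l →
        Tendsto (fun t : ℝ => η (l * t) / η t) atTop (nhds (l ^ min β γ)))) ∧
    -- (b) η ≤ C₁ φ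
    (∃ C₁ : ℝ, 0 < C₁ ∧ ∀ x : ℝ, 0 ≤ x → η x ≤ C₁ * φ x) := by
  obtain ⟨g, hgdef⟩ : ∃ g : ℝ → ℝ, ∀ s, g s = s ^ (γ - 1) / φ s := ⟨_, fun _ => rfl⟩
  obtain ⟨I, hIdef0⟩ : ∃ I : ℝ → ℝ, ∀ t, I t = ∫ s in (0 : ℝ)..t, s ^ (γ - 1) / φ s :=
    ⟨_, fun _ => rfl⟩
  have hIdef : ∀ t, I t = ∫ s in (0 : ℝ)..t, g s := by
    intro t; rw [hIdef0]; congr 1; ext s; rw [hgdef]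
  have hγ0 : (0:ℝ) < γ := by linarith
  have hγ1' : (0:ℝ) < γ - 1 := by linarith
  have hφpos : ∀ s, 0 ≤ s → 0 < φ s := fun s hs => lt_of_lt_of_le one_pos (hφge s hs)
  have hηI : ∀ t, 0 < t → η t = t ^ γ / I t := by
    intro t ht; rw [hIdef0]; exact hη t ht
  have hgcont : ContinuousOn g (Ici 0) := by
    rw [show g = fun s => s ^ (γ - 1) / φ s from funext hgdef]
    exact ContinuousOn.div
      (fun x _ => (Real.continuousAt_rpow_const x (γ-1) (Or.inr hγ1'.le)).continuousWithinAt)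
      hφcont (fun x hx => (hφpos x hx).ne')
  have hgnn : ∀ s, 0 ≤ s → 0 ≤ g s := by
    intro s hs; rw [hgdef]
    exact div_nonneg (Real.rpow_nonneg hs _) (hφpos s hs).le
  have hgpos : ∀ s, 0 < s → 0 < g s := by
    intro s hs; rw [hgdef]
    exact div_pos (Real.rpow_pos_of_pos hs _) (hφpos s hs.le)
  have hgint : ∀ a b : ℝ, 0 ≤ a → 0 ≤ b → IntervalIntegrable g volume a b := by
    intro a b ha hb
    refine (hgcont.mono ?_).intervalIntegrable
    intro x hx
    exact le_trans (le_inf ha hb) hx.1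
  have hIdiffeq : ∀ a b : ℝ, 0 ≤ a → a ≤ b → I b - I a = ∫ s in a..b, g s := by
    intro a b ha hab
    rw [hIdef, hIdef]
    have := intervalIntegral.integral_add_adjacent_intervals
      (hgint 0 a le_rfl ha) (hgint a b ha (ha.trans hab))
    linarith
  have hImono : ∀ a b : ℝ, 0 ≤ a → a ≤ b → I a ≤ I b := by
    intro a b ha hab
    have h1 := hIdiffeq a b ha hab
    have h2 : 0 ≤ ∫ s in a..b, g s :=
      intervalIntegral.integral_nonneg hab (fun u hu => hgnn u (ha.trans hu.1))
    linarith
  have hI0 : I 0 = 0 := by rw [hIdef]; exact intervalIntegral.integral_same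
  have hInn : ∀ t, 0 ≤ t → 0 ≤ I t := by
    intro t ht; have := hImono 0 t le_rfl ht; linarith [hI0]
  have hIpos : ∀ t, 0 < t → 0 < I t := by
    intro t ht
    rw [hIdef]
    exact intervalIntegral.intervalIntegral_pos_of_pos_on (hgint 0 t le_rfl ht.le)
      (fun x hx => hgpos x hx.1) ht
  -- comparison lemmas
  have hcmpU : ∀ l c T t : ℝ, 0 < l → 0 ≤ T → T ≤ t →
      (∀ s, T ≤ s → s ≤ t → g (l*s) ≤ c * g s) →
      I (l*t) - I (l*T) ≤ l * c * (I t - I T) := by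
    intro l c T t hl hT hTt hbd
    have huIcc : uIcc T t = Icc T t := uIcc_of_le hTt
    have hint1 : IntervalIntegrable (fun s => g (l*s)) volume T t := by
      apply ContinuousOn.intervalIntegrable
      apply hgcont.comp (continuous_mul_left l).continuousOn
      intro x hx
      rw [huIcc] at hx
      exact mul_nonneg hl.le (hT.trans hx.1)
    have hint2 : IntervalIntegrable (fun s => c * g s) volume T t :=
      (hgint T t hT (hT.trans hTt)).const_mul c
    have h2 : (∫ s in T..t, g (l*s)) ≤ ∫ s in T..t, c * g s :=
      intervalIntegral.integral_mono_on hTt hint1 hint2 (fun x hx => hbd x hx.1 hx.2)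
    have h3 : I (l*t) - I (l*T) = l * ∫ s in T..t, g (l*s) := by
      rw [hIdiffeq (l*T) (l*t) (mul_nonneg hl.le hT) (mul_le_mul_of_nonneg_left hTt hl.le),
        intervalIntegral.mul_integral_comp_mul_left]
    have h4 : (∫ s in T..t, c * g s) = c * (I t - I T) := by
      rw [intervalIntegral.integral_const_mul, hIdiffeq T t hT hTt]
    calc I (l*t) - I (l*T) = l * ∫ s in T..t, g (l*s) := h3
      _ ≤ l * ∫ s in T..t, c * g s := mul_le_mul_of_nonneg_left h2 hl.le
      _ = l * (c * (I t - I T)) := by rw [h4]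
      _ = l * c * (I t - I T) := by ring
  have hcmpL : ∀ l c T t : ℝ, 0 < l → 0 ≤ T → T ≤ t →
      (∀ s, T ≤ s → s ≤ t → c * g s ≤ g (l*s)) →
      l * c * (I t - I T) ≤ I (l*t) - I (l*T) := by
    intro l c T t hl hT hTt hbd
    have huIcc : uIcc T t = Icc T t := uIcc_of_le hTt
    have hint1 : IntervalIntegrable (fun s => g (l*s)) volume T t := by
      apply ContinuousOn.intervalIntegrable
      apply hgcont.comp (continuous_mul_left l).continuousOn
      intro x hx
      rw [huIcc] at hx
      exact mul_nonneg hl.le (hT.trans hx.1)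
    have hint2 : IntervalIntegrable (fun s => c * g s) volume T t :=
      (hgint T t hT (hT.trans hTt)).const_mul c
    have h2 : (∫ s in T..t, c * g s) ≤ ∫ s in T..t, g (l*s) :=
      intervalIntegral.integral_mono_on hTt hint2 hint1 (fun x hx => hbd x hx.1 hx.2)
    have h3 : I (l*t) - I (l*T) = l * ∫ s in T..t, g (l*s) := by
      rw [hIdiffeq (l*T) (l*t) (mul_nonneg hl.le hT) (mul_le_mul_of_nonneg_left hTt hl.le),
        intervalIntegral.mul_integral_comp_mul_left]
    have h4 : (∫ s in T..t, c * g s) = c * (I t - I T) := by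
      rw [intervalIntegral.integral_const_mul, hIdiffeq T t hT hTt]
    calc l * c * (I t - I T) = l * (c * (I t - I T)) := by ring
      _ = l * ∫ s in T..t, c * g s := by rw [h4]
      _ ≤ l * ∫ s in T..t, g (l*s) := mul_le_mul_of_nonneg_left h2 hl.le
      _ = I (l*t) - I (l*T) := h3.symm
  -- ratio convergence of g
  have hgr : ∀ l : ℝ, 0 < l →
      Tendsto (fun s => g (l*s) / g s) atTop (nhds (l ^ (γ - 1 - β))) := by
    intro l hl
    have h1 : Tendsto (fun s => l ^ (γ-1) * (φ (l*s) / φ s)⁻¹) atTop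
        (nhds (l ^ (γ-1) * (l ^ β)⁻¹)) :=
      tendsto_const_nhds.mul ((hφrv l hl).inv₀ (Real.rpow_pos_of_pos hl β).ne')
    have h2 : l ^ (γ-1) * (l ^ β)⁻¹ = l ^ (γ - 1 - β) := by
      rw [show γ - 1 - β = γ - 1 + -β by ring, ← Real.rpow_neg hl.le, ← Real.rpow_add hl]
    rw [← h2]
    apply h1.congr'
    filter_upwards [eventually_ge_atTop (1:ℝ)] with s hs
    have hs0 : (0:ℝ) < s := lt_of_lt_of_le one_pos hs
    have hls : (0:ℝ) < l * s := mul_pos hl hs0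
    have hsp : (0:ℝ) < s ^ (γ-1) := Real.rpow_pos_of_pos hs0 _
    have hmul : (l*s) ^ (γ-1) = l ^ (γ-1) * s ^ (γ-1) := Real.mul_rpow hl.le hs0.le
    rw [hgdef, hgdef, hmul]
    field_simp [(hφpos s hs0.le).ne', (hφpos (l*s) hls.le).ne']
  -- L'Hopital-type lemma in the unbounded case
  have hC : Tendsto I atTop atTop → ∀ l : ℝ, 0 < l →
      Tendsto (fun t => I (l*t) / I t) atTop (nhds (l ^ (γ - β))) := by
    intro htop l hl
    have hLL' : l * l ^ (γ - 1 - β) = l ^ (γ - β) := by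
      rw [show γ - β = (γ-1-β) + 1 by ring, Real.rpow_add_one hl.ne']
      ring
    set L := l ^ (γ - β) with hLdef
    set L' := l ^ (γ - 1 - β) with hL'def
    rw [Metric.tendsto_nhds]
    intro ε hε
    set ε₀ := ε / 3 with hε₀def
    have hε₀ : 0 < ε₀ := by positivity
    have hev := (Metric.tendsto_nhds.1 (hgr l hl)) (ε₀ / l) (by positivity)
    rw [eventually_atTop] at hev
    obtain ⟨T₀, hT₀⟩ := hev
    set T := max T₀ 1 with hTdef
    have hT1 : (1:ℝ) ≤ T := le_max_right _ _
    have hT0 : (0:ℝ) ≤ T := by linarith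
    have hup : ∀ s, T ≤ s → g (l*s) ≤ (L' + ε₀/l) * g s := by
      intro s hs
      have h := hT₀ s (le_trans (le_max_left _ _) hs)
      rw [Real.dist_eq, abs_sub_lt_iff] at h
      have hgs : 0 < g s := hgpos s (by linarith)
      have h2 : g (l*s)/g s ≤ L' + ε₀/l := by linarith [h.1]
      have := (div_le_iff₀ hgs).1 h2
      linarith
    have hlo : ∀ s, T ≤ s → (L' - ε₀/l) * g s ≤ g (l*s) := by
      intro s hs
      have h := hT₀ s (le_trans (le_max_left _ _) hs)
      rw [Real.dist_eq, abs_sub_lt_iff] at h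
      have hgs : 0 < g s := hgpos s (by linarith)
      have h2 : L' - ε₀/l ≤ g (l*s)/g s := by linarith [h.2]
      calc (L' - ε₀/l) * g s ≤ (g (l*s)/g s) * g s := mul_le_mul_of_nonneg_right h2 hgs.le
        _ = g (l*s) := by field_simp
    set A := I (l*T) with hA
    set B := I T with hB
    set K := |A| + (|L| + ε₀) * |B| + 1 with hK
    have hKpos : 0 < K := by positivity
    have hlε : l * (ε₀ / l) = ε₀ := by field_simp
    have hup' : ∀ t, T ≤ t → I (l*t) ≤ A + (L + ε₀) * (I t - B) := by
      intro t ht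
      have h := hcmpU l (L' + ε₀/l) T t hl hT0 ht (fun s hs _ => hup s hs)
      have hexp : l * (L' + ε₀/l) = L + ε₀ := by rw [mul_add, hLL', hlε]
      rw [hexp] at h
      linarith
    have hlo' : ∀ t, T ≤ t → A + (L - ε₀) * (I t - B) ≤ I (l*t) := by
      intro t ht
      have h := hcmpL l (L' - ε₀/l) T t hl hT0 ht (fun s hs _ => hlo s hs)
      have hexp : l * (L' - ε₀/l) = L - ε₀ := by rw [mul_sub, hLL', hlε]
      rw [hexp] at h
      linarith
    have habs1 : |A - (L + ε₀)*B| ≤ K := by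
      have h1 : |A - (L + ε₀)*B| ≤ |A| + |(L + ε₀)*B| := by
        rw [sub_eq_add_neg]
        exact (abs_add_le _ _).trans (by rw [abs_neg])
      have h2 : |(L + ε₀)*B| ≤ (|L| + ε₀) * |B| := by
        rw [abs_mul]
        have := (abs_add_le L ε₀).trans (by rw [abs_of_pos hε₀] : |L| + |ε₀| ≤ |L| + ε₀)
        exact mul_le_mul_of_nonneg_right this (abs_nonneg B)
      calc |A - (L + ε₀)*B| ≤ |A| + (|L| + ε₀) * |B| := by linarith
        _ ≤ K := by rw [hK]; linarith
    have habs2 : |A - (L - ε₀)*B| ≤ K := by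
      have h1 : |A - (L - ε₀)*B| ≤ |A| + |(L - ε₀)*B| := by
        rw [sub_eq_add_neg]
        exact (abs_add_le _ _).trans (by rw [abs_neg])
      have h2 : |(L - ε₀)*B| ≤ (|L| + ε₀) * |B| := by
        rw [abs_mul, sub_eq_add_neg]
        have := (abs_add_le L (-ε₀)).trans (by rw [abs_neg, abs_of_pos hε₀] : |L| + |(-ε₀)| ≤ |L| + ε₀)
        exact mul_le_mul_of_nonneg_right this (abs_nonneg B)
      calc |A - (L - ε₀)*B| ≤ |A| + (|L| + ε₀) * |B| := by linarith
        _ ≤ K := by rw [hK]; linarith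
    filter_upwards [htop.eventually (eventually_ge_atTop (max 1 (K/ε₀))),
      eventually_ge_atTop T] with t hIt ht
    have hIt1 : (1:ℝ) ≤ I t := le_trans (le_max_left _ _) hIt
    have hItpos : 0 < I t := lt_of_lt_of_le one_pos hIt1
    have hItK : K ≤ ε₀ * I t := by
      have := le_trans (le_max_right 1 (K/ε₀)) hIt
      rw [div_le_iff₀ hε₀] at this
      linarith [this]
    rw [Real.dist_eq, abs_sub_lt_iff]
    have hub := hup' t ht
    have hlb := hlo' t ht
    have h1 := (abs_le.1 habs1).2
    have h2 := (abs_le.1 habs2).1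
    constructor
    · have : I (l*t) ≤ (L + 2*ε₀) * I t := by nlinarith
      have := (div_le_iff₀ hItpos).2 this
      have h3 : ε₀ < ε := by rw [hε₀def]; linarith
      calc I (l*t)/I t - L ≤ 2*ε₀ := by linarith
        _ < ε := by rw [hε₀def]; linarith
    · have : (L - 2*ε₀) * I t ≤ I (l*t) := by nlinarith
      have := (le_div_iff₀ hItpos).2 this
      calc L - I (l*t)/I t ≤ 2*ε₀ := by linarith
        _ < ε := by rw [hε₀def]; linarith
  -- bounded case
  have hDone : (∃ M, ∀ x, 0 ≤ x → I x ≤ M) → ∀ l : ℝ, 0 < l →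
      Tendsto (fun t => I (l*t) / I t) atTop (nhds 1) := by
    intro hbdd l hl
    obtain ⟨M, hM⟩ := hbdd
    have hSne : (I '' Ici 0).Nonempty := ⟨I 0, ⟨0, Set.self_mem_Ici, rfl⟩⟩
    have hSbdd : BddAbove (I '' Ici 0) := by
      refine ⟨M, ?_⟩
      rintro y ⟨x, hx, rfl⟩
      exact hM x hx
    set L := sSup (I '' Ici 0) with hL
    have hL1 : I 1 ≤ L := le_csSup hSbdd ⟨1, Set.mem_Ici.2 zero_le_one, rfl⟩
    have hLpos : 0 < L := lt_of_lt_of_le (hIpos 1 one_pos) hL1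
    have htend : Tendsto I atTop (nhds L) := by
      rw [tendsto_order]
      constructor
      · intro a ha
        obtain ⟨y, ⟨x, hx0, rfl⟩, hay⟩ := exists_lt_of_lt_csSup hSne ha
        filter_upwards [eventually_ge_atTop x] with t ht
        exact lt_of_lt_of_le hay (hImono x t hx0 ht)
      · intro a ha
        filter_upwards [eventually_ge_atTop (0:ℝ)] with t ht
        exact lt_of_le_of_lt (le_csSup hSbdd ⟨t, Set.mem_Ici.2 ht, rfl⟩) ha
    have htend2 : Tendsto (fun t => I (l*t)) atTop (nhds L) :=
      htend.comp (Tendsto.const_mul_atTop hl tendsto_id)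
    have := htend2.div htend hLpos.ne'
    rwa [div_self hLpos.ne'] at this
  -- dyadic: unbounded when β < γ
  have hUnbdd : β < γ → Tendsto I atTop atTop := by
    intro hlt
    have hR : (1:ℝ) < 2 ^ (γ - β) := by
      rw [Real.one_lt_rpow_iff_of_pos two_pos]
      exact Or.inl ⟨one_lt_two, by linarith⟩
    set R := (2:ℝ) ^ (γ - β) with hRdef
    set c := (1 + R)/2 with hcdef
    have hc1 : 1 < c := by rw [hcdef]; linarith
    have hc0 : 0 < c := by linarith
    have hhalf : (2:ℝ) ^ (γ - 1 - β) = R / 2 := by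
      rw [hRdef, show γ - β = (γ-1-β) + 1 by ring, Real.rpow_add_one two_ne_zero]
      ring
    have hgap : c / 2 < (2:ℝ) ^ (γ - 1 - β) := by
      rw [hhalf, hcdef]; linarith
    have hev := (hgr 2 two_pos).eventually_const_lt hgap
    rw [eventually_atTop] at hev
    obtain ⟨T₀, hT₀⟩ := hev
    set T := max T₀ 1 with hTdef
    have hT1 : (1:ℝ) ≤ T := le_max_right _ _
    have hT0 : (0:ℝ) ≤ T := by linarith
    have hTpos : (0:ℝ) < T := by linarith
    have hstep : ∀ t, T ≤ t → c * (I (2*t) - I t) ≤ I (2*(2*t)) - I (2*t) := by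
      intro t ht
      have htpos : (0:ℝ) < t := lt_of_lt_of_le hTpos ht
      have h := hcmpL 2 (c/2) t (2*t) two_pos htpos.le (by linarith) ?_
      · calc c * (I (2*t) - I t) = 2*(c/2)*(I (2*t) - I t) := by ring
          _ ≤ _ := h
      · intro s hs _
        have hgs : 0 < g s := hgpos s (by linarith)
        have h2 := (hT₀ s (le_trans (le_max_left _ _) (ht.trans hs))).le
        have := (le_div_iff₀ hgs).1 h2
        linarith
    set D0 := I (2^1 * T) - I (2^0 * T) with hD0
    have hD : ∀ n : ℕ, c^n * D0 ≤ I (2^(n+1) * T) - I (2^n * T) := by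
      intro n
      induction n with
      | zero => simp [hD0]
      | succ n ih =>
        have hTn : T ≤ 2^n * T := le_mul_of_one_le_left hT0 (one_le_pow₀ one_le_two)
        have h := hstep (2^n * T) hTn
        have e1 : 2*((2:ℝ)^n*T) = 2^(n+1)*T := by ring
        rw [e1, show 2*((2:ℝ)^(n+1)*T) = 2^(n+2)*T by ring] at h
        calc c^(n+1) * D0 = c * (c^n * D0) := by ring
          _ ≤ c * (I (2^(n+1) * T) - I (2^n * T)) := mul_le_mul_of_nonneg_left ih hc0.le
          _ ≤ I (2^(n+2) * T) - I (2^(n+1) * T) := h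
    have hD0pos : 0 < D0 := by
      rw [hD0, pow_one, pow_zero, one_mul,
        hIdiffeq T (2*T) hT0 (by linarith)]
      exact intervalIntegral.intervalIntegral_pos_of_pos_on
        (hgint T (2*T) hT0 (by linarith))
        (fun x hx => hgpos x (lt_trans hTpos hx.1)) (by linarith)
    rw [tendsto_atTop]
    intro b
    obtain ⟨n, hn⟩ := pow_unbounded_of_one_lt (b / D0) hc1
    have hbn : b ≤ c^n * D0 := by
      rw [div_lt_iff₀ hD0pos] at hn
      linarith
    filter_upwards [eventually_ge_atTop ((2:ℝ)^(n+1) * T)] with t ht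
    have hpnn : (0:ℝ) ≤ 2^n * T := by positivity
    calc b ≤ c^n * D0 := hbn
      _ ≤ I (2^(n+1) * T) - I (2^n * T) := hD n
      _ ≤ I (2^(n+1) * T) := by linarith [hInn (2^n*T) hpnn]
      _ ≤ I t := hImono _ t (by positivity) ht
  -- dyadic: bounded when γ < β
  have hBdd : γ < β → ∃ M, ∀ x, 0 ≤ x → I x ≤ M := by
    intro hlt
    have hR : (2:ℝ) ^ (γ - β) < 1 := Real.rpow_lt_one_of_one_lt_of_neg one_lt_two (by linarith)
    have hRpos : 0 < (2:ℝ) ^ (γ - β) := Real.rpow_pos_of_pos two_pos _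
    set R := (2:ℝ) ^ (γ - β) with hRdef
    set c := (1 + R)/2 with hcdef
    have hc1 : c < 1 := by rw [hcdef]; linarith
    have hc0 : 0 < c := by rw [hcdef]; linarith
    have hhalf : (2:ℝ) ^ (γ - 1 - β) = R / 2 := by
      rw [hRdef, show γ - β = (γ-1-β) + 1 by ring, Real.rpow_add_one two_ne_zero]
      ring
    have hgap : (2:ℝ) ^ (γ - 1 - β) < c / 2 := by
      rw [hhalf, hcdef]; linarith
    have hev := (hgr 2 two_pos).eventually_lt_const hgap
    rw [eventually_atTop] at hev
    obtain ⟨T₀, hT₀⟩ := hev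
    set T := max T₀ 1 with hTdef
    have hT1 : (1:ℝ) ≤ T := le_max_right _ _
    have hT0 : (0:ℝ) ≤ T := by linarith
    have hTpos : (0:ℝ) < T := by linarith
    have hstep : ∀ t, T ≤ t → I (2*(2*t)) - I (2*t) ≤ c * (I (2*t) - I t) := by
      intro t ht
      have htpos : (0:ℝ) < t := lt_of_lt_of_le hTpos ht
      have h := hcmpU 2 (c/2) t (2*t) two_pos htpos.le (by linarith) ?_
      · calc I (2*(2*t)) - I (2*t) ≤ 2*(c/2)*(I (2*t) - I t) := h
          _ = c * (I (2*t) - I t) := by ring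
      · intro s hs _
        have hgs : 0 < g s := hgpos s (by linarith)
        have h2 := (hT₀ s (le_trans (le_max_left _ _) (ht.trans hs))).le
        have := (div_le_iff₀ hgs).1 h2
        linarith
    set D0 := I (2^1 * T) - I (2^0 * T) with hD0
    have hD0nn : 0 ≤ D0 := by
      rw [hD0, pow_one, pow_zero, one_mul]
      have := hImono T (2*T) hT0 (by linarith)
      linarith
    have hD : ∀ n : ℕ, I (2^(n+1) * T) - I (2^n * T) ≤ c^n * D0 := by
      intro n
      induction n with
      | zero => simp [hD0]
      | succ n ih =>
        have hTn : T ≤ 2^n * T := le_mul_of_one_le_left hT0 (one_le_pow₀ one_le_two)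
        have h := hstep (2^n * T) hTn
        have e1 : 2*((2:ℝ)^n*T) = 2^(n+1)*T := by ring
        rw [e1, show 2*((2:ℝ)^(n+1)*T) = 2^(n+2)*T by ring] at h
        calc I (2^(n+2) * T) - I (2^(n+1) * T) ≤ c * (I (2^(n+1) * T) - I (2^n * T)) := h
          _ ≤ c * (c^n * D0) := mul_le_mul_of_nonneg_left ih hc0.le
          _ = c^(n+1) * D0 := by ring
    have h1c : (0:ℝ) < 1 - c := by linarith
    clear_value R c T D0
    have hE : ∀ n : ℕ, I (2^(n+1) * T) + c^(n+1)/(1-c) * D0 ≤ I (2^1 * T) + c^1/(1-c) * D0 := by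
      intro n
      induction n with
      | zero => exact le_rfl
      | succ n ih =>
        have h := hD (n+1)
        rw [show n+1+1 = n+2 by omega] at h
        have hkey : c^(n+2)/(1-c)*D0 = c^(n+1)/(1-c)*D0 - c^(n+1)*D0 := by
          field_simp
          ring
        calc I (2^(n+2) * T) + c^(n+2)/(1-c) * D0
            = (I (2^(n+2) * T) - I (2^(n+1) * T) - c^(n+1)*D0)
              + (I (2^(n+1) * T) + c^(n+1)/(1-c) * D0) := by rw [hkey]; ring
          _ ≤ I (2^(n+1) * T) + c^(n+1)/(1-c) * D0 := by linarith
          _ ≤ _ := ih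
    refine ⟨I (2^1 * T) + c^1/(1-c) * D0, ?_⟩
    intro x hx
    obtain ⟨n, hn⟩ := pow_unbounded_of_one_lt x one_lt_two
    have hxle : x ≤ 2^(n+1)*T := by
      have h2 : (2:ℝ)^n ≤ 2^(n+1)*T := by
        calc (2:ℝ)^n ≤ 2^(n+1) := by
              apply pow_le_pow_right₀ one_le_two
              omega
          _ ≤ 2^(n+1)*T := le_mul_of_one_le_right (by positivity) hT1
      linarith
    have hterm : 0 ≤ c^(n+1)/(1-c) * D0 := by positivity
    calc I x ≤ I (2^(n+1)*T) := hImono x _ hx hxle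
      _ ≤ I (2^(n+1)*T) + c^(n+1)/(1-c) * D0 := by linarith
      _ ≤ I (2^1 * T) + c^1/(1-c) * D0 := hE n
  -- combined ratio result
  have hratioI : ∀ l : ℝ, 0 < l →
      Tendsto (fun t => I (l*t) / I t) atTop (nhds (l ^ (γ - min β γ))) := by
    intro l hl
    rcases lt_trichotomy γ β with hcc | hcc | hcc
    · rw [min_eq_right hcc.le, sub_self, Real.rpow_zero]
      exact hDone (hBdd hcc) l hl
    · by_cases hb : ∃ M, ∀ x, 0 ≤ x → I x ≤ M
      · rw [hcc, min_self, sub_self, Real.rpow_zero]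
        exact hDone hb l hl
      · push_neg at hb
        have htop : Tendsto I atTop atTop := by
          rw [tendsto_atTop]
          intro b
          obtain ⟨x, hx0, hxb⟩ := hb b
          filter_upwards [eventually_ge_atTop x] with t ht
          exact hxb.le.trans (hImono x t hx0 ht)
        have h := hC htop l hl
        rwa [show γ - β = γ - min β γ by rw [hcc, min_self]] at h
    · have h := hC (hUnbdd hcc) l hl
      rwa [show γ - β = γ - min β γ by rw [min_eq_left hcc.le]] at h
  -- (a) regular variation of η
  have haratio : ∀ l : ℝ, 0 < l →
      Tendsto (fun t : ℝ => η (l * t) / η t) atTop (nhds (l ^ min β γ)) := by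
    intro l hl
    have hmin : l ^ min β γ = l ^ γ * (l ^ (γ - min β γ))⁻¹ := by
      rw [← Real.rpow_neg hl.le, ← Real.rpow_add hl,
        show γ + -(γ - min β γ) = min β γ by ring]
    have h1 : Tendsto (fun t => l ^ γ * (I (l*t)/I t)⁻¹) atTop
        (nhds (l ^ γ * (l ^ (γ - min β γ))⁻¹)) :=
      tendsto_const_nhds.mul ((hratioI l hl).inv₀ (Real.rpow_pos_of_pos hl _).ne')
    rw [hmin]
    apply h1.congr'
    filter_upwards [eventually_gt_atTop (0:ℝ)] with t ht
    have hlt : 0 < l * t := mul_pos hl ht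
    rw [hηI t ht, hηI (l*t) hlt, Real.mul_rpow hl.le ht.le]
    have h3 := (hIpos t ht).ne'
    have h4 := (hIpos (l*t) hlt).ne'
    have h5 := (Real.rpow_pos_of_pos ht γ).ne'
    field_simp
  -- (a) positivity
  have hηpos : ∀ t : ℝ, 0 ≤ t → 0 < η t := by
    intro t ht
    rcases ht.lt_or_eq with h | h
    · rw [hηI t h]
      exact div_pos (Real.rpow_pos_of_pos h γ) (hIpos t h)
    · rw [← h, hη0]
      exact mul_pos hγ0 (hφpos 0 le_rfl)
  -- (a) continuity
  have hIconAt : ∀ x : ℝ, 0 < x → ContinuousAt I x := by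
    intro x hx
    have hmeas : StronglyMeasurableAtFilter g (nhds x) volume :=
      ContinuousOn.stronglyMeasurableAtFilter isOpen_Ioi (hgcont.mono Ioi_subset_Ici_self) x hx
    have hca : ContinuousAt g x := (hgcont x hx.le).continuousAt (Ici_mem_nhds hx)
    have hd : HasDerivAt (fun u => ∫ s in (0:ℝ)..u, g s) (g x) x :=
      intervalIntegral.integral_hasDerivAt_right (hgint 0 x le_rfl hx.le) hmeas hca
    have hcont : ContinuousAt (fun u => ∫ s in (0:ℝ)..u, g s) x := hd.continuousAt
    rwa [show I = fun u => ∫ s in (0:ℝ)..u, g s from funext hIdef]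
  have hηcont : ContinuousOn η (Ici 0) := by
    intro x hx
    rcases (Set.mem_Ici.1 hx).lt_or_eq with hxpos | hxeq
    · have hca : ContinuousAt (fun t => t ^ γ / I t) x :=
        ((Real.continuousAt_rpow_const x γ (Or.inl hxpos.ne')).div
          (hIconAt x hxpos) (hIpos x hxpos).ne')
      have heq : (fun t => t ^ γ / I t) =ᶠ[nhds x] η := by
        filter_upwards [Ioi_mem_nhds hxpos] with t ht
        exact (hηI t ht).symm
      exact (hca.congr heq).continuousWithinAt
    · subst hxeq
      rw [Metric.continuousWithinAt_iff]
      intro ε hε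
      set ε₂ := min (ε/(2*γ)) (1/2) with hε₂def
      have hε₂pos : 0 < ε₂ := lt_min (by positivity) (by norm_num)
      have hε₂half : ε₂ ≤ 1/2 := min_le_right _ _
      have hφ0 := hφcont 0 Set.self_mem_Ici
      rw [Metric.continuousWithinAt_iff] at hφ0
      obtain ⟨δ, hδpos, hδ⟩ := hφ0 ε₂ hε₂pos
      refine ⟨δ, hδpos, ?_⟩
      intro y hy hyd
      have hy0 : (0:ℝ) ≤ y := Set.mem_Ici.1 hy
      rcases hy0.lt_or_eq with hypos | hyeq
      swap
      · rw [← hyeq]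
        simpa [dist_self] using hε
      · set m := φ 0 - ε₂ with hmdef
        set M := φ 0 + ε₂ with hMdef
        have hφ0ge : 1 ≤ φ 0 := hφge 0 le_rfl
        have hmpos : 0 < m := by rw [hmdef]; linarith
        have hMpos : 0 < M := by rw [hMdef]; linarith
        have hydlt : y < δ := by
          rw [Real.dist_eq, sub_zero, abs_of_nonneg hy0] at hyd
          exact hyd
        have hbound : ∀ s, s ∈ Icc 0 y → m ≤ φ s ∧ φ s ≤ M := by
          intro s hs
          have hsd : dist s 0 < δ := by
            rw [Real.dist_eq, sub_zero, abs_of_nonneg hs.1]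
            exact lt_of_le_of_lt hs.2 hydlt
          have h := hδ (Set.mem_Ici.2 hs.1) hsd
          rw [Real.dist_eq, abs_sub_lt_iff] at h
          constructor
          · rw [hmdef]; linarith [h.2]
          · rw [hMdef]; linarith [h.1]
        have hrcont : ContinuousOn (fun s : ℝ => s ^ (γ-1)) (uIcc 0 y) :=
          fun z _ => (Real.continuousAt_rpow_const z (γ-1) (Or.inr hγ1'.le)).continuousWithinAt
        have hrint : IntervalIntegrable (fun s : ℝ => s ^ (γ-1)) volume 0 y :=
          hrcont.intervalIntegrable
        have hrpowint : (∫ s in (0:ℝ)..y, s ^ (γ-1)) = y ^ γ / γ := by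
          rw [integral_rpow (Or.inl (by linarith : (-1:ℝ) < γ-1))]
          rw [show γ - 1 + 1 = γ by ring, Real.zero_rpow hγ0.ne']
          ring
        have hIup : I y ≤ y ^ γ / γ / m := by
          rw [hIdef]
          have hmono : (∫ s in (0:ℝ)..y, g s) ≤ ∫ s in (0:ℝ)..y, s ^ (γ-1) / m := by
            apply intervalIntegral.integral_mono_on hy0 (hgint 0 y le_rfl hy0)
              (hrint.div_const m)
            intro s hs
            rw [hgdef]
            exact div_le_div_of_nonneg_left (Real.rpow_nonneg hs.1 _) hmpos (hbound s hs).1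
          rwa [intervalIntegral.integral_div, hrpowint] at hmono
        have hIlo : y ^ γ / γ / M ≤ I y := by
          rw [hIdef]
          have hmono : (∫ s in (0:ℝ)..y, s ^ (γ-1) / M) ≤ ∫ s in (0:ℝ)..y, g s := by
            apply intervalIntegral.integral_mono_on hy0 (hrint.div_const M)
              (hgint 0 y le_rfl hy0)
            intro s hs
            rw [hgdef]
            exact div_le_div_of_nonneg_left (Real.rpow_nonneg hs.1 _) (hφpos s hs.1)
              (hbound s hs).2
          rwa [intervalIntegral.integral_div, hrpowint] at hmono
        have hyγ : 0 < y ^ γ := Real.rpow_pos_of_pos hypos γ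
        have hIylo : 0 < y ^ γ / γ / M := by positivity
        have hIypos : 0 < I y := hIpos y hypos
        have hηup : η y ≤ γ * M := by
          rw [hηI y hypos]
          calc y ^ γ / I y ≤ y ^ γ / (y ^ γ / γ / M) :=
              div_le_div_of_nonneg_left hyγ.le hIylo hIlo
            _ = γ * M := by field_simp
        have hηlo : γ * m ≤ η y := by
          rw [hηI y hypos]
          have he : y ^ γ / (y ^ γ / γ / m) = γ * m := by field_simp
          rw [← he]
          exact div_le_div_of_nonneg_left hyγ.le hIypos hIup
        rw [Real.dist_eq, hη0, abs_sub_lt_iff]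
        have hγε : γ * ε₂ ≤ ε/2 := by
          have h := min_le_left (ε/(2*γ)) (1/2)
          calc γ * ε₂ ≤ γ * (ε/(2*γ)) := mul_le_mul_of_nonneg_left h hγ0.le
            _ = ε/2 := by field_simp
        have e1 : γ * M = γ * φ 0 + γ * ε₂ := by rw [hMdef]; ring
        have e2 : γ * m = γ * φ 0 - γ * ε₂ := by rw [hmdef]; ring
        constructor
        · linarith
        · linarith
  refine ⟨⟨hηcont, hηpos, haratio⟩, ?_⟩
  -- (b)
  by_contra hcon
  push_neg at hcon
  have hσpos : ∀ x : ℝ, 0 ≤ x → 0 < η x / φ x :=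
    fun x hx => div_pos (hηpos x hx) (hφpos x hx)
  have hσcont : ContinuousOn (fun x => η x / φ x) (Ici 0) :=
    hηcont.div hφcont (fun x hx => (hφpos x hx).ne')
  -- a sequence along which η/φ blows up
  have hseq : ∀ n : ℕ, ∃ x, 0 ≤ x ∧ (n:ℝ) < η x / φ x ∧ (n:ℝ) < x := by
    intro n
    obtain ⟨Cb, hCb⟩ := (isCompact_Icc (a := (0:ℝ)) (b := n)).exists_bound_of_continuousOn
      (hσcont.mono (Icc_subset_Ici_self))
    have hn0 : (0:ℝ) ≤ n := Nat.cast_nonneg n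
    set C := max Cb n + 1 with hC
    have hCpos : 0 < C := by
      have := le_max_right Cb (n:ℝ)
      rw [hC]; linarith
    obtain ⟨x, hx0, hxlt⟩ := hcon C hCpos
    have hσx : C < η x / φ x := (lt_div_iff₀ (hφpos x hx0)).2 hxlt
    have hxn : (n:ℝ) < x := by
      by_contra hcontra
      push_neg at hcontra
      have h1 := hCb x ⟨hx0, hcontra⟩
      have h2 : η x / φ x ≤ Cb := le_trans (le_abs_self _) h1
      have h3 := le_max_left Cb (n:ℝ)
      rw [hC] at hσx
      linarith
    refine ⟨x, hx0, ?_, hxn⟩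
    have := le_max_right Cb (n:ℝ)
    rw [hC] at hσx
    linarith
  choose t ht0 htσ htn using hseq
  have httop : Tendsto t atTop atTop :=
    tendsto_atTop_mono (fun n => (htn n).le) tendsto_natCast_atTop_atTop
  have hσt : Tendsto (fun n => η (t n) / φ (t n)) atTop atTop :=
    tendsto_atTop_mono (fun n => (htσ n).le) tendsto_natCast_atTop_atTop
  -- regular variation of η/φ
  have hσratio : ∀ u : ℝ, 0 < u →
      Tendsto (fun s => (η (u*s) / φ (u*s)) / (η s / φ s)) atTop
        (nhds (u ^ min β γ * (u ^ β)⁻¹)) := by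
    intro u hu
    have h1 : Tendsto (fun s => (η (u*s) / η s) * (φ (u*s) / φ s)⁻¹) atTop
        (nhds (u ^ min β γ * (u ^ β)⁻¹)) :=
      (haratio u hu).mul ((hφrv u hu).inv₀ (Real.rpow_pos_of_pos hu β).ne')
    apply h1.congr'
    filter_upwards [eventually_gt_atTop (0:ℝ)] with s hs
    have hus : 0 < u * s := mul_pos hu hs
    have h2 := (hηpos s hs.le).ne'
    have h3 := (hφpos s hs.le).ne'
    have h4 := (hηpos (u*s) hus.le).ne'
    have h5 := (hφpos (u*s) hus.le).ne'
    field_simp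
  -- divergence along the sequence, for every u > 0
  have hdiv : ∀ u : ℝ, 0 < u →
      Tendsto (fun n => η (u * t n) / φ (u * t n) / u) atTop atTop := by
    intro u hu
    have hc : 0 < u ^ min β γ * (u ^ β)⁻¹ := by positivity
    have h1 : Tendsto (fun n => ((η (u * t n)/φ (u * t n)) / (η (t n)/φ (t n)))
        * (η (t n)/φ (t n))) atTop atTop :=
      Tendsto.pos_mul_atTop hc ((hσratio u hu).comp httop) hσt
    have h2 : Tendsto (fun n => η (u * t n) / φ (u * t n)) atTop atTop := by
      apply h1.congr
      intro n
      exact div_mul_cancel₀ _ (hσpos (t n) (ht0 n)).ne'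
    exact h2.atTop_div_const hu
  -- uniform bound on the averaged integrals
  set B := (2:ℝ) ^ (γ - min β γ) + 1 with hBdef
  have hBev := (hratioI 2 two_pos).eventually_lt_const
    (show (2:ℝ) ^ (γ - min β γ) < B by rw [hBdef]; linarith)
  rw [eventually_atTop] at hBev
  obtain ⟨T₂', hT₂⟩ := hBev
  set T₂ := max T₂' 1 with hT₂def
  have hT₂1 : (1:ℝ) ≤ T₂ := le_max_right _ _
  have hFcont : ∀ c : ℝ, 0 < c →
      ContinuousOn (fun u : ℝ => η (u*c)/φ (u*c)/u) (Icc 1 2) := by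
    intro c hc
    have hmaps : MapsTo (fun u : ℝ => u * c) (Icc 1 2) (Ici 0) := by
      intro u hu
      exact mul_nonneg (le_trans zero_le_one hu.1) hc.le
    have h1 : ContinuousOn (fun u : ℝ => η (u*c)) (Icc 1 2) :=
      hηcont.comp ((continuous_mul_right c).continuousOn) hmaps
    have h2 : ContinuousOn (fun u : ℝ => φ (u*c)) (Icc 1 2) :=
      hφcont.comp ((continuous_mul_right c).continuousOn) hmaps
    exact (h1.div h2 (fun u hu => (hφpos _ (hmaps hu)).ne')).div continuousOn_id
      (fun u hu => (lt_of_lt_of_le one_pos hu.1).ne')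
  have hIbnd : ∀ s, T₂ ≤ s → (∫ u in (1:ℝ)..2, η (u*s)/φ (u*s)/u) ≤ B := by
    intro s hs
    have hs0 : (0:ℝ) < s := lt_of_lt_of_le one_pos (hT₂1.trans hs)
    have hIspos := hIpos s hs0
    have hmaps : MapsTo (fun u : ℝ => u * s) (Icc 1 2) (Ici 0) := by
      intro u hu
      exact mul_nonneg (le_trans zero_le_one hu.1) hs0.le
    have hintF : IntervalIntegrable (fun u : ℝ => η (u*s)/φ (u*s)/u) volume 1 2 := by
      apply ContinuousOn.intervalIntegrable
      rw [uIcc_of_le one_le_two]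
      exact hFcont s hs0
    have hintG : IntervalIntegrable (fun u : ℝ => s * g (u*s) / I s) volume 1 2 := by
      apply ContinuousOn.intervalIntegrable
      rw [uIcc_of_le one_le_two]
      exact (continuousOn_const.mul
        (hgcont.comp ((continuous_mul_right s).continuousOn) hmaps)).div_const _
    have hptwise : ∀ u ∈ Icc (1:ℝ) 2, η (u*s)/φ (u*s)/u ≤ s * g (u*s) / I s := by
      intro u hu
      have hu0 : 0 < u := lt_of_lt_of_le one_pos hu.1
      have hus : 0 < u*s := mul_pos hu0 hs0
      have hIus := hIpos (u*s) hus
      have hφus := hφpos (u*s) hus.le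
      have hIle : I s ≤ I (u*s) := hImono s (u*s) hs0.le (le_mul_of_one_le_left hs0.le hu.1)
      rw [hηI (u*s) hus, hgdef]
      have hrpow : (u*s) ^ γ = (u*s) ^ (γ-1) * (u*s) := by
        rw [← Real.rpow_add_one hus.ne' (γ-1), show γ - 1 + 1 = γ by ring]
      rw [div_div, div_div, mul_div_assoc', div_div,
        div_le_div_iff₀ (by positivity) (by positivity), hrpow]
      have hP : (0:ℝ) ≤ (u*s) ^ (γ-1) * φ (u*s) * s * u := by positivity
      nlinarith [mul_le_mul_of_nonneg_left hIle hP]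
    have hmono := intervalIntegral.integral_mono_on one_le_two hintF hintG hptwise
    have hchange : (∫ u in (1:ℝ)..2, s * g (u*s) / I s) = (I (s*2) - I s) / I s := by
      have h1 : (∫ u in (1:ℝ)..2, s * g (u*s) / I s)
          = (s * ∫ u in (1:ℝ)..2, g (s*u)) / I s := by
        rw [← intervalIntegral.integral_const_mul, ← intervalIntegral.integral_div]
        congr 1
        ext u
        rw [mul_comm u s]
      rw [h1, intervalIntegral.mul_integral_comp_mul_left, mul_one,
        ← hIdiffeq s (s*2) hs0.le (by linarith)]
    have hfin : (I (s*2) - I s) / I s ≤ B := by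
      have hr := hT₂ s (le_trans (le_max_left _ _) hs)
      rw [mul_comm s 2]
      rw [sub_div, div_self hIspos.ne']
      linarith
    calc (∫ u in (1:ℝ)..2, η (u*s)/φ (u*s)/u) ≤ ∫ u in (1:ℝ)..2, s * g (u*s) / I s := hmono
      _ = (I (s*2) - I s) / I s := hchange
      _ ≤ B := hfin
  -- Fatou's lemma contradiction
  set F : ℕ → ℝ → ENNReal := fun n u => ENNReal.ofReal (η (u * t n)/φ (u * t n)/u) with hF
  have htn0 : ∀ n : ℕ, (0:ℝ) < t n := fun n => lt_of_le_of_lt (Nat.cast_nonneg n) (htn n)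
  have hmeasF : ∀ n, AEMeasurable (F n) (volume.restrict (Ioc 1 2)) := by
    intro n
    exact (((hFcont (t n) (htn0 n)).mono Ioc_subset_Icc_self).aemeasurable
      measurableSet_Ioc).ennreal_ofReal
  have hliminf : ∀ u ∈ Ioc (1:ℝ) 2, liminf (fun n => F n u) atTop = ⊤ := by
    intro u hu
    have hu0 : (0:ℝ) < u := lt_trans one_pos hu.1
    have h2 : Tendsto (fun n => F n u) atTop (nhds ⊤) :=
      ENNReal.tendsto_ofReal_atTop.comp (hdiv u hu0)
    exact h2.liminf_eq
  have hlhs : (∫⁻ u in Ioc (1:ℝ) 2, liminf (fun n => F n u) atTop) = ⊤ := by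
    rw [setLIntegral_congr_fun measurableSet_Ioc hliminf,
      setLIntegral_const, Real.volume_Ioc]
    rw [ENNReal.top_mul]
    · norm_num
  have hle : ∀ᶠ n in atTop, (∫⁻ u in Ioc (1:ℝ) 2, F n u) ≤ ENNReal.ofReal B := by
    filter_upwards [httop.eventually (eventually_ge_atTop T₂)] with n hn
    have hInt : IntegrableOn (fun u : ℝ => η (u * t n)/φ (u * t n)/u) (Ioc 1 2) volume :=
      ((hFcont (t n) (htn0 n)).integrableOn_Icc).mono_set Ioc_subset_Icc_self
    have hnn : 0 ≤ᵐ[volume.restrict (Ioc (1:ℝ) 2)]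
        fun u => η (u * t n)/φ (u * t n)/u := by
      filter_upwards [ae_restrict_mem measurableSet_Ioc] with u hu
      have hu0 : (0:ℝ) < u := lt_trans one_pos hu.1
      have hut : (0:ℝ) ≤ u * t n := le_of_lt (mul_pos hu0 (htn0 n))
      exact div_nonneg (div_nonneg (hηpos _ hut).le (hφpos _ hut).le) hu0.le
    rw [hF]
    rw [← MeasureTheory.ofReal_integral_eq_lintegral_ofReal hInt hnn]
    apply ENNReal.ofReal_le_ofReal
    have h := hIbnd (t n) hn
    rwa [intervalIntegral.integral_of_le one_le_two] at h
  have hcontr := MeasureTheory.lintegral_liminf_le' (u := atTop) hmeasF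
  rw [hlhs] at hcontr
  have hlim2 : liminf (fun n => ∫⁻ u in Ioc (1:ℝ) 2, F n u) atTop ≤ ENNReal.ofReal B :=
    le_trans liminf_le_limsup (limsup_le_of_le (by isBoundedDefault) hle)
  exact absurd (lt_of_le_of_lt (hcontr.trans hlim2) ENNReal.ofReal_lt_top) (lt_irrefl ⊤)
end

section
/- Assume the volume doubling condition: V_μ(x,2r) ≤ C_D V_μ(x,r) for all x ∈ Γ and r > 0, and let γ > 1. Then there exists C₁ > 0 (depending only on C_D and γ) such that ∑_{i=0}^∞ (e^{-u} u^i / i!) · (1/V_μ(x, i^{1/γ})) ≤ C₁ / V_μ(x, u^{1/γ}) for all x ∈ Γ and all u ≥ 0. -/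
open scoped BigOperators

noncomputable section

lemma pvb_ball_finite {Γ : Type*} (G : SimpleGraph Γ) (hconn : G.Connected)
    (hlocfin : ∀ x : Γ, {y : Γ | G.Adj x y}.Finite) (x : Γ) :
    ∀ n : ℕ, {y : Γ | G.dist x y ≤ n}.Finite := by
  intro n
  induction n with
  | zero =>
    have : {y : Γ | G.dist x y ≤ 0} ⊆ {x} := by
      intro y hy
      have h0 : G.dist x y = 0 := Nat.le_zero.mp hy
      have := (hconn.dist_eq_zero_iff (u := x) (v := y)).mp h0
      simp [this.symm]
    exact Set.Finite.subset (Set.finite_singleton x) this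
  | succ n ih =>
    have hsub : {y : Γ | G.dist x y ≤ n + 1} ⊆
        {y : Γ | G.dist x y ≤ n} ∪ ⋃ z ∈ {y : Γ | G.dist x y ≤ n}, {y : Γ | G.Adj z y} := by
      intro y hy
      simp only [Set.mem_setOf_eq] at hy
      rcases Nat.lt_or_ge (G.dist x y) (n + 1) with h | h
      · exact Or.inl (Nat.lt_succ_iff.mp h)
      · have hd : G.dist x y = n + 1 := le_antisymm hy h
        obtain ⟨p, hp⟩ := hconn.exists_walk_length_eq_dist x y
        have hlen : p.length = n + 1 := by rw [hp, hd]
        have hnil : ¬ p.reverse.Nil := by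
          rw [SimpleGraph.Walk.not_nil_iff_lt_length]
          simp [hlen]
        have hadj : G.Adj y (p.reverse.getVert 1) :=
          SimpleGraph.Walk.adj_snd hnil
        have hdist : G.dist x (p.reverse.getVert 1) ≤ n := by
          have hlt : p.reverse.tail.length + 1 = p.reverse.length :=
            SimpleGraph.Walk.length_tail_add_one hnil
          have : G.dist (p.reverse.getVert 1) x ≤ p.reverse.tail.length :=
            SimpleGraph.dist_le _
          rw [SimpleGraph.dist_comm] at this
          have hl : p.reverse.tail.length = n := by
            have := hlt
            rw [SimpleGraph.Walk.length_reverse, hlen] at this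
            omega
          omega
        right
        refine Set.mem_biUnion hdist ?_
        exact hadj.symm
    exact Set.Finite.subset (ih.union (Set.Finite.biUnion ih fun z _ => hlocfin z)) hsub

lemma pvb_rpow_logb_swap {a b : ℝ} (ha : 0 < a) (hb : 0 < b) :
    a ^ Real.logb 2 b = b ^ Real.logb 2 a := by
  rw [Real.rpow_def_of_pos ha, Real.rpow_def_of_pos hb, Real.logb, Real.logb]
  ring_nf

lemma pvb_factorial_bound : ∀ (m i : ℕ), 1 ≤ i →
    (Nat.factorial (i + m)) ≤ Nat.factorial i * (i * (m + 1)) ^ m := by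
  intro m
  induction m with
  | zero => intro i _; simp
  | succ m ih =>
    intro i hi
    have h1 : Nat.factorial (i + (m+1)) = Nat.factorial (i + m) * (i + m + 1) := by
      rw [show i + (m+1) = (i+m) + 1 by ring, Nat.factorial_succ]; ring
    have h2 : i + m + 1 ≤ i * (m + 2) := by nlinarith
    calc Nat.factorial (i + (m+1)) = Nat.factorial (i + m) * (i + m + 1) := h1
      _ ≤ (Nat.factorial i * (i * (m + 1)) ^ m) * (i * (m + 2)) :=
          Nat.mul_le_mul (ih i hi) h2
      _ ≤ (Nat.factorial i * (i * (m + 2)) ^ m) * (i * (m + 2)) := by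
          have : (i * (m + 1)) ^ m ≤ (i * (m + 2)) ^ m :=
            Nat.pow_le_pow_left (by nlinarith) m
          exact Nat.mul_le_mul (Nat.mul_le_mul_left _ this) le_rfl
      _ = Nat.factorial i * (i * (m + 1 + 1)) ^ (m+1) := by ring

/-- Lemma 5.2: under volume doubling, the Poisson average of `1/V_μ(x, i^{1/γ})`
is bounded by `C₁ / V_μ(x, u^{1/γ})`. -/
theorem poisson_volume_bound
    {Γ : Type*} [Countable Γ] [Infinite Γ]
    (G : SimpleGraph Γ) (hconn : G.Connected)
    (hlocfin : ∀ x : Γ, {y : Γ | G.Adj x y}.Finite)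
    -- edge weights
    (w : Γ → Γ → ℝ) (hw_symm : ∀ x y, w x y = w y x)
    (hw_nonneg : ∀ x y, 0 ≤ w x y)
    (hw_pos : ∀ x y, 0 < w x y ↔ G.Adj x y)
    -- vertex measure, positive at every point
    (μ : Γ → ℝ) (hμ : ∀ x, μ x = ∑' y : Γ, w x y)
    (hμpos : ∀ x, 0 < μ x)
    -- volume of balls
    (Vb : Γ → ℝ → ℝ)
    (hVb : ∀ x r, Vb x r = ∑' y : {y : Γ // (G.dist x y : ℝ) ≤ r}, μ (y : Γ))
    -- volume doubling
    (C_D : ℝ) (hC_D : 0 < C_D)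
    (hdoub : ∀ (x : Γ) (r : ℝ), 0 < r → Vb x (2 * r) ≤ C_D * Vb x r)
    (γ : ℝ) (hγ : 1 < γ) :
    ∃ C₁ : ℝ, 0 < C₁ ∧ ∀ (x : Γ) (u : ℝ), 0 ≤ u →
      (∑' i : ℕ, Real.exp (-u) * u ^ i / (Nat.factorial i : ℝ) *
          (1 / Vb x ((i : ℝ) ^ (1 / γ)))) ≤
        C₁ / Vb x (u ^ (1 / γ)) := by
  have hγ0 : 0 < γ := lt_trans one_pos hγ
  have hγinv : 0 < 1 / γ := by positivity
  -- basic ball facts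
  have hfinR : ∀ (x : Γ) (r : ℝ), {y : Γ | (G.dist x y : ℝ) ≤ r}.Finite := by
    intro x r
    refine Set.Finite.subset (pvb_ball_finite G hconn hlocfin x ⌈r⌉₊) ?_
    intro y hy
    simp only [Set.mem_setOf_eq] at hy ⊢
    exact_mod_cast hy.trans (Nat.le_ceil r)
  have hsummable : ∀ (x : Γ) (r : ℝ),
      Summable ({y : Γ | (G.dist x y : ℝ) ≤ r}.indicator μ) := by
    intro x r
    refine summable_of_ne_finset_zero (s := (hfinR x r).toFinset) ?_
    intro y hy
    apply Set.indicator_of_notMem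
    simpa using hy
  have hVind : ∀ (x : Γ) (r : ℝ),
      Vb x r = ∑' y : Γ, {y : Γ | (G.dist x y : ℝ) ≤ r}.indicator μ y := by
    intro x r
    rw [hVb, ← tsum_subtype]
    rfl
  have hVsub : ∀ (x : Γ) (r s : ℝ),
      {y : Γ | (G.dist x y : ℝ) ≤ r} ⊆ {y : Γ | (G.dist x y : ℝ) ≤ s} →
      Vb x r ≤ Vb x s := by
    intro x r s hss
    rw [hVind, hVind]
    refine Summable.tsum_le_tsum ?_ (hsummable x r) (hsummable x s)
    intro y
    exact Set.indicator_le_indicator_of_subset hss (fun z => (hμpos z).le) y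
  have hVmono : ∀ (x : Γ) (r s : ℝ), r ≤ s → Vb x r ≤ Vb x s := by
    intro x r s hrs
    exact hVsub x r s (fun y hy => le_trans hy hrs)
  have hVpos : ∀ (x : Γ) (r : ℝ), 0 ≤ r → 0 < Vb x r := by
    intro x r hr
    rw [hVind]
    have hx : x ∈ {y : Γ | (G.dist x y : ℝ) ≤ r} := by
      simp only [Set.mem_setOf_eq, SimpleGraph.dist_self, Nat.cast_zero]
      exact hr
    calc (0:ℝ) < μ x := hμpos x
      _ = {y : Γ | (G.dist x y : ℝ) ≤ r}.indicator μ x := (Set.indicator_of_mem hx μ).symm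
      _ ≤ ∑' y : Γ, {y : Γ | (G.dist x y : ℝ) ≤ r}.indicator μ y := by
          refine Summable.le_tsum (hsummable x r) x ?_
          intro y _
          exact Set.indicator_nonneg (fun z _ => (hμpos z).le) y
  have hVcollapse : ∀ (x : Γ) (r : ℝ), r < 1 → Vb x r ≤ Vb x 0 := by
    intro x r hr
    refine hVsub x r 0 ?_
    intro y hy
    simp only [Set.mem_setOf_eq] at hy ⊢
    have : G.dist x y = 0 := by
      by_contra h
      have h1 : (1:ℕ) ≤ G.dist x y := Nat.one_le_iff_ne_zero.mpr h
      have : (1:ℝ) ≤ (G.dist x y : ℝ) := by exact_mod_cast h1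
      linarith
    simp [this]
  -- doubling consequences
  obtain ⟨x₀⟩ := (inferInstance : Nonempty Γ)
  have hCD1 : 1 ≤ C_D := by
    have h1 : Vb x₀ 1 ≤ Vb x₀ (2 * 1) := hVmono x₀ 1 (2*1) (by norm_num)
    have h2 : Vb x₀ (2 * 1) ≤ C_D * Vb x₀ 1 := hdoub x₀ 1 one_pos
    have h3 : 0 < Vb x₀ 1 := hVpos x₀ 1 one_pos.le
    nlinarith
  have hchain : ∀ (x : Γ) (r : ℝ), 0 < r → ∀ k : ℕ, Vb x (2 ^ k * r) ≤ C_D ^ k * Vb x r := by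
    intro x r hr k
    induction k with
    | zero => simp
    | succ k ih =>
      have h2 : (2:ℝ) ^ (k+1) * r = 2 * (2 ^ k * r) := by ring
      have hpos : (0:ℝ) < 2 ^ k * r := by positivity
      calc Vb x (2 ^ (k+1) * r) = Vb x (2 * (2 ^ k * r)) := by rw [h2]
        _ ≤ C_D * Vb x (2 ^ k * r) := hdoub x _ hpos
        _ ≤ C_D * (C_D ^ k * Vb x r) := by
            exact mul_le_mul_of_nonneg_left ih hC_D.le
        _ = C_D ^ (k+1) * Vb x r := by ring
  set β : ℝ := Real.logb 2 C_D with hβ_def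
  have hβ : 0 ≤ β := Real.logb_nonneg one_lt_two hCD1
  have hscale : ∀ (x : Γ) (ρ R : ℝ), 0 < ρ → ρ ≤ R →
      Vb x R ≤ C_D * (R / ρ) ^ β * Vb x ρ := by
    intro x ρ R hρ hρR
    have hR : 0 < R := lt_of_lt_of_le hρ hρR
    have ht1 : (1:ℝ) ≤ R / ρ := (one_le_div hρ).mpr hρR
    have ht0 : (0:ℝ) < R / ρ := lt_of_lt_of_le one_pos ht1
    set k : ℕ := ⌈Real.logb 2 (R / ρ)⌉₊ with hk_def
    have hlogb0 : 0 ≤ Real.logb 2 (R / ρ) := Real.logb_nonneg one_lt_two ht1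
    have hkk : Real.logb 2 (R / ρ) ≤ (k : ℝ) := Nat.le_ceil _
    have hRle : R ≤ 2 ^ k * ρ := by
      have h1 : R / ρ = (2:ℝ) ^ Real.logb 2 (R / ρ) :=
        (Real.rpow_logb two_pos (by norm_num) ht0).symm
      have h2 : (2:ℝ) ^ Real.logb 2 (R / ρ) ≤ (2:ℝ) ^ (k:ℝ) :=
        Real.rpow_le_rpow_of_exponent_le one_le_two hkk
      have h3 : (2:ℝ) ^ (k:ℝ) = (2:ℝ) ^ k := Real.rpow_natCast 2 k
      have : R / ρ ≤ (2:ℝ) ^ k := by rw [h1]; rw [← h3]; exact h2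
      calc R = (R / ρ) * ρ := by field_simp
        _ ≤ (2:ℝ) ^ k * ρ := mul_le_mul_of_nonneg_right this hρ.le
    have hCk : (C_D : ℝ) ^ k ≤ C_D * (R / ρ) ^ β := by
      have h1 : (C_D : ℝ) ^ k = C_D ^ (k : ℝ) := (Real.rpow_natCast C_D k).symm
      have h2 : (k : ℝ) ≤ Real.logb 2 (R / ρ) + 1 := by
        have := Nat.ceil_lt_add_one hlogb0
        exact_mod_cast this.le
      have h3 : C_D ^ (k:ℝ) ≤ C_D ^ (Real.logb 2 (R / ρ) + 1) :=
        Real.rpow_le_rpow_of_exponent_le hCD1 h2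
      have h4 : C_D ^ (Real.logb 2 (R / ρ) + 1) = C_D * C_D ^ Real.logb 2 (R / ρ) := by
        rw [Real.rpow_add hC_D, Real.rpow_one]; ring
      have h5 : C_D ^ Real.logb 2 (R / ρ) = (R / ρ) ^ β :=
        pvb_rpow_logb_swap hC_D ht0
      rw [h1]
      calc C_D ^ (k:ℝ) ≤ C_D ^ (Real.logb 2 (R / ρ) + 1) := h3
        _ = C_D * (R / ρ) ^ β := by rw [h4, h5]
    calc Vb x R ≤ Vb x (2 ^ k * ρ) := hVmono x _ _ hRle
      _ ≤ C_D ^ k * Vb x ρ := hchain x ρ hρ k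
      _ ≤ C_D * (R / ρ) ^ β * Vb x ρ :=
          mul_le_mul_of_nonneg_right hCk (le_of_lt (hVpos x ρ hρ.le))
  -- constants depending only on C_D and γ
  set m : ℕ := ⌈β / γ⌉₊ with hm_def
  have hmge : β / γ ≤ (m:ℝ) := Nat.le_ceil _
  set K : ℝ := C_D * 2 ^ β * (((m:ℝ)+1) ^ m + (Nat.factorial m : ℝ)) + 1 with hK_def
  have h2β : (1:ℝ) ≤ 2 ^ β := Real.one_le_rpow one_le_two hβ
  have h2β0 : (0:ℝ) < 2 ^ β := lt_of_lt_of_le one_pos h2β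
  have hK1 : 1 ≤ K := by
    have h0 : (0:ℝ) ≤ C_D * 2 ^ β * (((m:ℝ)+1) ^ m + (Nat.factorial m : ℝ)) := by positivity
    linarith
  have hKpos : 0 < K := lt_of_lt_of_le one_pos hK1
  have hK2 : C_D * 2 ^ β * (Nat.factorial m : ℝ) ≤ K := by
    have h0 : (0:ℝ) ≤ C_D * 2 ^ β * (((m:ℝ)+1) ^ m) := by positivity
    have h2 : C_D * 2 ^ β * (((m:ℝ)+1) ^ m + (Nat.factorial m : ℝ)) + 1 =
        C_D * 2 ^ β * (((m:ℝ)+1) ^ m) + C_D * 2 ^ β * (Nat.factorial m : ℝ) + 1 := by ring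
    rw [hK_def, h2]; linarith
  have hK3 : C_D * (((m:ℝ)+1) ^ m) ≤ K := by
    have h0 : (0:ℝ) ≤ C_D * 2 ^ β * (Nat.factorial m : ℝ) := by positivity
    have h1 : C_D * (((m:ℝ)+1) ^ m) ≤ C_D * 2 ^ β * (((m:ℝ)+1) ^ m) := by
      have hnn : (0:ℝ) ≤ ((m:ℝ)+1) ^ m := by positivity
      exact mul_le_mul_of_nonneg_right (le_mul_of_one_le_right hC_D.le h2β) hnn
    have h2 : C_D * 2 ^ β * (((m:ℝ)+1) ^ m + (Nat.factorial m : ℝ)) + 1 =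
        C_D * 2 ^ β * (((m:ℝ)+1) ^ m) + C_D * 2 ^ β * (Nat.factorial m : ℝ) + 1 := by ring
    rw [hK_def, h2]; linarith
  refine ⟨2 * K, by positivity, ?_⟩
  intro x u hu
  set q : ℕ → ℝ := fun i => Real.exp (-u) * u ^ i / (Nat.factorial i : ℝ) with hq_def
  have hqnn : ∀ i, 0 ≤ q i := by
    intro i
    rw [hq_def]
    exact div_nonneg (mul_nonneg (Real.exp_pos _).le (pow_nonneg hu i)) (Nat.cast_nonneg _)
  have hVu : 0 < Vb x (u ^ (1/γ)) := hVpos x _ (Real.rpow_nonneg hu _)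
  have hVip : ∀ i : ℕ, 0 < Vb x ((i:ℝ) ^ (1/γ)) :=
    fun i => hVpos x _ (Real.rpow_nonneg (Nat.cast_nonneg i) _)
  -- termwise bound
  have key : ∀ i : ℕ, q i * (1 / Vb x ((i:ℝ) ^ (1/γ))) ≤
      (K * (1 / Vb x (u ^ (1/γ)))) * (q i + q (i + m)) := by
    intro i
    have hsnn : (0:ℝ) ≤ 1 / Vb x (u ^ (1/γ)) := by positivity
    -- the easy case where the ball at radius i^(1/γ) dominates
    have easy : Vb x (u ^ (1/γ)) ≤ Vb x ((i:ℝ) ^ (1/γ)) →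
        q i * (1 / Vb x ((i:ℝ) ^ (1/γ))) ≤
          (K * (1 / Vb x (u ^ (1/γ)))) * (q i + q (i + m)) := by
      intro h1
      have h2 : 1 / Vb x ((i:ℝ) ^ (1/γ)) ≤ 1 / Vb x (u ^ (1/γ)) :=
        one_div_le_one_div_of_le hVu h1
      have h3 : q i * (1 / Vb x ((i:ℝ) ^ (1/γ))) ≤ q i * (1 / Vb x (u ^ (1/γ))) :=
        mul_le_mul_of_nonneg_left h2 (hqnn i)
      refine h3.trans ?_
      have h4 : q i ≤ K * (q i + q (i + m)) :=
        le_trans (le_mul_of_one_le_left (hqnn i) hK1)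
          (mul_le_mul_of_nonneg_left (le_add_of_nonneg_right (hqnn (i+m))) hKpos.le)
      calc q i * (1 / Vb x (u ^ (1/γ)))
          ≤ (K * (q i + q (i + m))) * (1 / Vb x (u ^ (1/γ))) :=
            mul_le_mul_of_nonneg_right h4 hsnn
        _ = (K * (1 / Vb x (u ^ (1/γ)))) * (q i + q (i + m)) := by ring
    rcases le_or_gt u (i:ℝ) with hui | hui
    · exact easy (hVmono x _ _ (Real.rpow_le_rpow hu hui hγinv.le))
    · rcases eq_or_ne i 0 with rfl | hi0
      · -- i = 0
        have hzero : ((0:ℕ):ℝ) ^ ((1:ℝ)/γ) = 0 := by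
          rw [Nat.cast_zero]; exact Real.zero_rpow (ne_of_gt hγinv)
        rcases lt_or_ge u 1 with h1u | h1u
        · -- u < 1 : balls coincide
          refine easy ?_
          have hc : Vb x (u ^ (1/γ)) ≤ Vb x 0 :=
            hVcollapse x _ (Real.rpow_lt_one hu h1u hγinv)
          rw [hzero]
          exact hc
        · -- 1 ≤ u : use doubling from radius 1/2
          rw [Nat.zero_add]
          have hq0 : q 0 = Real.exp (-u) := by rw [hq_def]; simp
          have hR1 : (1:ℝ) ≤ u ^ (1/γ) := Real.one_le_rpow h1u hγinv.le
          have hVsc : Vb x (u ^ (1/γ)) ≤ C_D * (u ^ (1/γ) / (1/2)) ^ β * Vb x (1/2) :=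
            hscale x (1/2) _ (by norm_num) (by linarith)
          have hhalf : Vb x (1/2) ≤ Vb x 0 := hVcollapse x _ (by norm_num)
          have hrw : (u ^ (1/γ) / (1/2) : ℝ) = 2 * u ^ (1/γ) := by ring
          have hmulr : ((2:ℝ) * u ^ (1/γ)) ^ β = 2 ^ β * (u ^ (1/γ)) ^ β :=
            Real.mul_rpow (by norm_num) (Real.rpow_nonneg hu _)
          have hpow : (u ^ (1/γ)) ^ β = u ^ ((1/γ) * β) := (Real.rpow_mul hu _ _).symm
          have hux : u ^ ((1/γ) * β) ≤ u ^ ((m:ℝ)) := by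
            refine Real.rpow_le_rpow_of_exponent_le h1u ?_
            have : (1/γ) * β = β / γ := by ring
            rw [this]; exact hmge
          have hum : u ^ ((m:ℝ)) = u ^ m := Real.rpow_natCast u m
          have hVub : Vb x (u ^ (1/γ)) ≤ C_D * (2 ^ β * u ^ m) * Vb x 0 := by
            have e1 : (u ^ (1/γ) / (1/2) : ℝ) ^ β = 2 ^ β * u ^ ((1/γ) * β) := by
              rw [hrw, hmulr, hpow]
            have e2 : (u ^ (1/γ) / (1/2) : ℝ) ^ β ≤ 2 ^ β * u ^ m := by
              rw [e1, ← hum]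
              exact mul_le_mul_of_nonneg_left hux h2β0.le
            have hV12 : (0:ℝ) ≤ Vb x (1/2) := (hVpos x (1/2) (by norm_num)).le
            calc Vb x (u ^ (1/γ)) ≤ C_D * (u ^ (1/γ) / (1/2)) ^ β * Vb x (1/2) := hVsc
              _ ≤ C_D * (2 ^ β * u ^ m) * Vb x (1/2) := by
                  refine mul_le_mul_of_nonneg_right ?_ hV12
                  exact mul_le_mul_of_nonneg_left e2 hC_D.le
              _ ≤ C_D * (2 ^ β * u ^ m) * Vb x 0 := by
                  refine mul_le_mul_of_nonneg_left hhalf ?_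
                  positivity
          have hid : Real.exp (-u) * u ^ m = (Nat.factorial m : ℝ) * q m := by
            rw [hq_def]
            field_simp
          have hV0 : 0 < Vb x 0 := hVpos x 0 le_rfl
          rw [hzero]
          have hgl : q 0 * (1 / Vb x 0) = q 0 / Vb x 0 := by ring
          have hgr : (K * (1 / Vb x (u ^ (1/γ)))) * (q 0 + q m) =
              (K * (q 0 + q m)) / Vb x (u ^ (1/γ)) := by ring
          rw [hgl, hgr, div_le_div_iff₀ hV0 hVu]
          have step1 : q 0 * Vb x (u ^ (1/γ)) ≤ q 0 * (C_D * (2 ^ β * u ^ m) * Vb x 0) :=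
            mul_le_mul_of_nonneg_left hVub (hqnn 0)
          have step2 : q 0 * (C_D * (2 ^ β * u ^ m) * Vb x 0) =
              C_D * 2 ^ β * ((Nat.factorial m : ℝ) * q m) * Vb x 0 := by
            rw [hq0]
            calc Real.exp (-u) * (C_D * (2 ^ β * u ^ m) * Vb x 0)
                = C_D * 2 ^ β * (Real.exp (-u) * u ^ m) * Vb x 0 := by ring
              _ = C_D * 2 ^ β * ((Nat.factorial m : ℝ) * q m) * Vb x 0 := by rw [hid]
          have step3 : C_D * 2 ^ β * ((Nat.factorial m : ℝ) * q m) * Vb x 0 ≤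
              K * (q 0 + q m) * Vb x 0 := by
            refine mul_le_mul_of_nonneg_right ?_ hV0.le
            have e : C_D * 2 ^ β * ((Nat.factorial m : ℝ) * q m) =
                (C_D * 2 ^ β * (Nat.factorial m : ℝ)) * q m := by ring
            rw [e]
            exact le_trans (mul_le_mul_of_nonneg_right hK2 (hqnn m))
              (mul_le_mul_of_nonneg_left (le_add_of_nonneg_left (hqnn 0)) hKpos.le)
          calc q 0 * Vb x (u ^ (1/γ)) ≤ q 0 * (C_D * (2 ^ β * u ^ m) * Vb x 0) := step1
            _ = C_D * 2 ^ β * ((Nat.factorial m : ℝ) * q m) * Vb x 0 := step2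
            _ ≤ K * (q 0 + q m) * Vb x 0 := step3
      · -- 1 ≤ i < u : use doubling from radius i^(1/γ)
        have hi1 : 1 ≤ i := Nat.one_le_iff_ne_zero.mpr hi0
        have hiR : (1:ℝ) ≤ (i:ℝ) := by exact_mod_cast hi1
        have hiRpos : (0:ℝ) < (i:ℝ) := lt_of_lt_of_le one_pos hiR
        have hρ : 0 < (i:ℝ) ^ ((1:ℝ)/γ) := Real.rpow_pos_of_pos hiRpos _
        have hρR : (i:ℝ) ^ ((1:ℝ)/γ) ≤ u ^ ((1:ℝ)/γ) :=
          Real.rpow_le_rpow (Nat.cast_nonneg i) hui.le hγinv.le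
        have hVsc := hscale x ((i:ℝ) ^ ((1:ℝ)/γ)) (u ^ ((1:ℝ)/γ)) hρ hρR
        have ht1 : (1:ℝ) ≤ u / (i:ℝ) := (one_le_div hiRpos).mpr hui.le
        have ht0 : (0:ℝ) ≤ u / (i:ℝ) := le_trans zero_le_one ht1
        have e1 : (u ^ ((1:ℝ)/γ) / (i:ℝ) ^ ((1:ℝ)/γ)) ^ β = (u / (i:ℝ)) ^ (((1:ℝ)/γ) * β) := by
          rw [← Real.div_rpow hu (Nat.cast_nonneg i), ← Real.rpow_mul ht0]
        have e2 : (u / (i:ℝ)) ^ (((1:ℝ)/γ) * β) ≤ (u / (i:ℝ)) ^ ((m:ℝ)) := by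
          refine Real.rpow_le_rpow_of_exponent_le ht1 ?_
          have : (1/γ) * β = β / γ := by ring
          rw [this]; exact hmge
        have e3 : (u / (i:ℝ)) ^ ((m:ℝ)) = u ^ m / (i:ℝ) ^ m := by
          rw [Real.rpow_natCast, div_pow]
        have hVub : Vb x (u ^ (1/γ)) ≤ C_D * (u ^ m / (i:ℝ) ^ m) * Vb x ((i:ℝ) ^ ((1:ℝ)/γ)) := by
          refine hVsc.trans ?_
          refine mul_le_mul_of_nonneg_right ?_ (hVip i).le
          refine mul_le_mul_of_nonneg_left ?_ hC_D.le
          rw [e1, ← e3]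
          exact e2
        -- the factorial estimate
        have hfact : ((Nat.factorial (i+m) : ℝ)) ≤ ((m:ℝ)+1) ^ m * ((Nat.factorial i : ℝ) * (i:ℝ) ^ m) := by
          have h := pvb_factorial_bound m i hi1
          have h' : ((Nat.factorial (i+m) : ℝ)) ≤ ((Nat.factorial i * (i * (m+1)) ^ m : ℕ) : ℝ) := by
            exact_mod_cast h
          refine h'.trans_eq ?_
          push_cast
          rw [mul_pow]
          ring
        have hkey2 : q i * (u ^ m / (i:ℝ) ^ m) ≤ ((m:ℝ)+1) ^ m * q (i + m) := by
          have hfi : (0:ℝ) < (Nat.factorial i : ℝ) := by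
            exact_mod_cast Nat.factorial_pos i
          have hfim : (0:ℝ) < (Nat.factorial (i+m) : ℝ) := by
            exact_mod_cast Nat.factorial_pos (i+m)
          have hipm : (0:ℝ) < (i:ℝ) ^ m := pow_pos hiRpos m
          have ea : q i * (u ^ m / (i:ℝ) ^ m) =
              (Real.exp (-u) * u ^ (i+m)) / ((Nat.factorial i : ℝ) * (i:ℝ) ^ m) := by
            rw [hq_def]
            rw [pow_add]
            field_simp
          have eb : ((m:ℝ)+1) ^ m * q (i + m) =
              (((m:ℝ)+1) ^ m * (Real.exp (-u) * u ^ (i+m))) / (Nat.factorial (i+m) : ℝ) := by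
            rw [hq_def]
            ring
          rw [ea, eb, div_le_div_iff₀ (by positivity) hfim]
          have ha : (0:ℝ) ≤ Real.exp (-u) * u ^ (i+m) :=
            mul_nonneg (Real.exp_pos _).le (pow_nonneg hu _)
          calc Real.exp (-u) * u ^ (i+m) * (Nat.factorial (i+m) : ℝ)
              ≤ Real.exp (-u) * u ^ (i+m) * (((m:ℝ)+1) ^ m * ((Nat.factorial i : ℝ) * (i:ℝ) ^ m)) :=
                mul_le_mul_of_nonneg_left hfact ha
            _ = ((m:ℝ)+1) ^ m * (Real.exp (-u) * u ^ (i+m)) * ((Nat.factorial i : ℝ) * (i:ℝ) ^ m) := by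
                ring
        -- put it together
        have hgl : q i * (1 / Vb x ((i:ℝ) ^ (1/γ))) = q i / Vb x ((i:ℝ) ^ (1/γ)) := by ring
        have hgr : (K * (1 / Vb x (u ^ (1/γ)))) * (q i + q (i+m)) =
            (K * (q i + q (i+m))) / Vb x (u ^ (1/γ)) := by ring
        rw [hgl, hgr, div_le_div_iff₀ (hVip i) hVu]
        have step1 : q i * Vb x (u ^ (1/γ)) ≤
            q i * (C_D * (u ^ m / (i:ℝ) ^ m) * Vb x ((i:ℝ) ^ ((1:ℝ)/γ))) :=
          mul_le_mul_of_nonneg_left hVub (hqnn i)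
        have step2 : q i * (C_D * (u ^ m / (i:ℝ) ^ m) * Vb x ((i:ℝ) ^ ((1:ℝ)/γ))) ≤
            C_D * (((m:ℝ)+1) ^ m * q (i+m)) * Vb x ((i:ℝ) ^ ((1:ℝ)/γ)) := by
          have : q i * (C_D * (u ^ m / (i:ℝ) ^ m) * Vb x ((i:ℝ) ^ ((1:ℝ)/γ))) =
              C_D * (q i * (u ^ m / (i:ℝ) ^ m)) * Vb x ((i:ℝ) ^ ((1:ℝ)/γ)) := by ring
          rw [this]
          refine mul_le_mul_of_nonneg_right ?_ (hVip i).le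
          exact mul_le_mul_of_nonneg_left hkey2 hC_D.le
        have step3 : C_D * (((m:ℝ)+1) ^ m * q (i+m)) * Vb x ((i:ℝ) ^ ((1:ℝ)/γ)) ≤
            K * (q i + q (i+m)) * Vb x ((i:ℝ) ^ ((1:ℝ)/γ)) := by
          refine mul_le_mul_of_nonneg_right ?_ (hVip i).le
          have e : C_D * (((m:ℝ)+1) ^ m * q (i+m)) =
              (C_D * (((m:ℝ)+1) ^ m)) * q (i+m) := by ring
          rw [e]
          exact le_trans (mul_le_mul_of_nonneg_right hK3 (hqnn (i+m)))
            (mul_le_mul_of_nonneg_left (le_add_of_nonneg_left (hqnn i)) hKpos.le)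
        calc q i * Vb x (u ^ (1/γ)) ≤
            q i * (C_D * (u ^ m / (i:ℝ) ^ m) * Vb x ((i:ℝ) ^ ((1:ℝ)/γ))) := step1
          _ ≤ C_D * (((m:ℝ)+1) ^ m * q (i+m)) * Vb x ((i:ℝ) ^ ((1:ℝ)/γ)) := step2
          _ ≤ K * (q i + q (i+m)) * Vb x ((i:ℝ) ^ ((1:ℝ)/γ)) := step3
  -- summation
  have hqs : Summable q := by
    rw [hq_def]
    simp only [mul_div_assoc]
    exact (Real.summable_pow_div_factorial u).mul_left _
  have hqs2 : Summable (fun i => q (i + m)) := (summable_nat_add_iff m).mpr hqs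
  have hV0le : ∀ i : ℕ, 1 / Vb x ((i:ℝ) ^ (1/γ)) ≤ 1 / Vb x 0 := by
    intro i
    refine one_div_le_one_div_of_le (hVpos x 0 le_rfl) ?_
    exact hVmono x 0 _ (Real.rpow_nonneg (Nat.cast_nonneg i) _)
  have hLsum : Summable (fun i : ℕ => q i * (1 / Vb x ((i:ℝ) ^ (1/γ)))) := by
    refine Summable.of_nonneg_of_le (fun i => mul_nonneg (hqnn i) (one_div_nonneg.mpr (hVip i).le))
      (fun i => mul_le_mul_of_nonneg_left (hV0le i) (hqnn i)) (hqs.mul_right (1 / Vb x 0))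
  have htsumq : (∑' i, q i) ≤ 1 := by
    refine Real.tsum_le_of_sum_range_le hqnn ?_
    intro n
    have h1 : ∑ i ∈ Finset.range n, q i =
        Real.exp (-u) * ∑ i ∈ Finset.range n, u ^ i / (Nat.factorial i : ℝ) := by
      rw [hq_def, Finset.mul_sum]
      refine Finset.sum_congr rfl fun i _ => ?_
      ring
    rw [h1]
    have h2 : ∑ i ∈ Finset.range n, u ^ i / (Nat.factorial i : ℝ) ≤ Real.exp u :=
      Real.sum_le_exp_of_nonneg hu n
    calc Real.exp (-u) * ∑ i ∈ Finset.range n, u ^ i / (Nat.factorial i : ℝ)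
        ≤ Real.exp (-u) * Real.exp u := mul_le_mul_of_nonneg_left h2 (Real.exp_pos _).le
      _ = 1 := by rw [← Real.exp_add]; simp
  have htsumq2 : (∑' i, q (i + m)) ≤ 1 := by
    refine le_trans ?_ htsumq
    refine Summable.tsum_le_tsum_of_inj (· + m) (add_left_injective m)
      (fun c _ => hqnn c) (fun b => le_rfl) hqs2 hqs
  show (∑' i : ℕ, q i * (1 / Vb x ((i:ℝ) ^ (1/γ)))) ≤ 2 * K / Vb x (u ^ (1/γ))
  calc (∑' i : ℕ, q i * (1 / Vb x ((i:ℝ) ^ (1/γ))))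
      ≤ ∑' i : ℕ, (K * (1 / Vb x (u ^ (1/γ)))) * (q i + q (i + m)) :=
        Summable.tsum_le_tsum key hLsum ((hqs.add hqs2).mul_left _)
    _ = (K * (1 / Vb x (u ^ (1/γ)))) * ∑' i : ℕ, (q i + q (i + m)) := tsum_mul_left
    _ = (K * (1 / Vb x (u ^ (1/γ)))) * ((∑' i, q i) + (∑' i, q (i + m))) := by
        rw [Summable.tsum_add hqs hqs2]
    _ ≤ (K * (1 / Vb x (u ^ (1/γ)))) * 2 := by
        refine mul_le_mul_of_nonneg_left (by linarith) ?_
        positivity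
    _ = 2 * K / Vb x (u ^ (1/γ)) := by ring
end
end

section
/- Let β₀ ∈ (0,1) and C₁ > 0. There exists C₂ > 0 (depending only on β₀ and C₁) such that for every t > 0, every integer i ≥ 1, and every measurable f : (0,∞) → [0,∞) with f(u) ≤ C₁ t u^{-1-β₀} for all u > 0, one has ∫₀^∞ f(u) e^{-u} u^i / i! du ≤ C₂ t / i^{1+β₀}. -/
open MeasureTheory

lemma gamma_logconvex_bound {β₀ : ℝ} (hβ₀ : 0 < β₀) (hβ₀1 : β₀ < 1) {i : ℕ} (hi : 2 ≤ i) :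
    Real.Gamma ((i : ℝ) - β₀) ≤ Real.Gamma i * ((i : ℝ) - 1) ^ (-β₀) := by
  have hx : (0 : ℝ) < (i : ℝ) - 1 := by
    have : (2 : ℝ) ≤ (i : ℝ) := by exact_mod_cast hi
    linarith
  have hy : (0 : ℝ) < (i : ℝ) := by linarith
  have hΓx := Real.Gamma_pos_of_pos hx
  have hΓy := Real.Gamma_pos_of_pos hy
  have hconv := Real.convexOn_log_Gamma.2 (Set.mem_Ioi.mpr hx) (Set.mem_Ioi.mpr hy)
    hβ₀.le (by linarith : (0:ℝ) ≤ 1 - β₀) (by ring)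
  have hpt : β₀ • ((i : ℝ) - 1) + (1 - β₀) • (i : ℝ) = (i : ℝ) - β₀ := by
    simp [smul_eq_mul]; ring
  rw [hpt] at hconv
  simp only [Function.comp_apply, smul_eq_mul] at hconv
  have hΓz : 0 < Real.Gamma ((i : ℝ) - β₀) := Real.Gamma_pos_of_pos (by linarith)
  have hexp : Real.Gamma ((i : ℝ) - β₀) ≤
      Real.Gamma ((i : ℝ) - 1) ^ β₀ * Real.Gamma i ^ (1 - β₀) := by
    calc Real.Gamma ((i : ℝ) - β₀) = Real.exp (Real.log (Real.Gamma ((i : ℝ) - β₀))) :=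
          (Real.exp_log hΓz).symm
      _ ≤ Real.exp (β₀ * Real.log (Real.Gamma ((i : ℝ) - 1)) +
            (1 - β₀) * Real.log (Real.Gamma i)) := Real.exp_le_exp.mpr hconv
      _ = Real.Gamma ((i : ℝ) - 1) ^ β₀ * Real.Gamma i ^ (1 - β₀) := by
          rw [Real.exp_add, Real.rpow_def_of_pos hΓx, Real.rpow_def_of_pos hΓy,
            mul_comm (Real.log _), mul_comm (Real.log _)]
  have hrec : Real.Gamma ((i : ℝ) - 1) = Real.Gamma i / ((i : ℝ) - 1) := by
    have := Real.Gamma_add_one (s := (i : ℝ) - 1) hx.ne'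
    rw [sub_add_cancel] at this
    field_simp [this]
    linarith [this]
  rw [hrec] at hexp
  calc Real.Gamma ((i : ℝ) - β₀)
      ≤ (Real.Gamma i / ((i : ℝ) - 1)) ^ β₀ * Real.Gamma i ^ (1 - β₀) := hexp
    _ = Real.Gamma i * ((i : ℝ) - 1) ^ (-β₀) := by
        rw [Real.div_rpow hΓy.le hx.le, Real.rpow_neg hx.le, div_mul_eq_mul_div,
          ← Real.rpow_add hΓy]
        norm_num [div_eq_mul_inv]

lemma gamma_key {β₀ : ℝ} (hβ₀ : 0 < β₀) (hβ₀1 : β₀ < 1) {i : ℕ} (hi : 1 ≤ i) :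
    Real.Gamma ((i : ℝ) - β₀) * (i : ℝ) ^ ((1 : ℝ) + β₀) ≤
      ((2 : ℝ) ^ β₀ + Real.Gamma (1 - β₀)) * (Nat.factorial i : ℝ) := by
  have h2pos : (0 : ℝ) < (2 : ℝ) ^ β₀ := Real.rpow_pos_of_pos two_pos _
  have hΓ1 : 0 < Real.Gamma (1 - β₀) := Real.Gamma_pos_of_pos (by linarith)
  rcases eq_or_lt_of_le hi with h1 | h2
  · subst h1
    simp only [Nat.cast_one, Nat.factorial_one, Real.one_rpow, mul_one]
    linarith
  · have hi2 : 2 ≤ i := h2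
    have hx : (0 : ℝ) < (i : ℝ) - 1 := by
      have : (2 : ℝ) ≤ (i : ℝ) := by exact_mod_cast hi2
      linarith
    have hy : (0 : ℝ) < (i : ℝ) := by linarith
    have hΓy := Real.Gamma_pos_of_pos hy
    have key := gamma_logconvex_bound hβ₀ hβ₀1 hi2
    -- i^{1+β₀} * (i-1)^{-β₀} ≤ 2^β₀ * i
    have hpow : (i : ℝ) ^ ((1:ℝ) + β₀) * ((i : ℝ) - 1) ^ (-β₀) ≤ (2 : ℝ) ^ β₀ * (i : ℝ) := by
      have hle : (i : ℝ) ≤ 2 * ((i : ℝ) - 1) := by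
        have : (2 : ℝ) ≤ (i : ℝ) := by exact_mod_cast hi2
        linarith
      have h1 : (i : ℝ) ^ β₀ ≤ (2 * ((i : ℝ) - 1)) ^ β₀ :=
        Real.rpow_le_rpow hy.le hle hβ₀.le
      rw [Real.mul_rpow (by norm_num) hx.le] at h1
      have hsplit : (i : ℝ) ^ ((1:ℝ) + β₀) = (i : ℝ) * (i : ℝ) ^ β₀ := by
        rw [Real.rpow_add hy, Real.rpow_one]
      rw [hsplit, Real.rpow_neg hx.le]
      have hxp : (0 : ℝ) < ((i : ℝ) - 1) ^ β₀ := Real.rpow_pos_of_pos hx _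
      rw [mul_assoc, mul_comm ((2:ℝ)^β₀) (i:ℝ)]
      refine mul_le_mul_of_nonneg_left ?_ hy.le
      rw [mul_inv_le_iff₀ hxp]
      exact h1
    have hfac : (Nat.factorial i : ℝ) = (i : ℝ) * Real.Gamma i := by
      obtain ⟨j, rfl⟩ : ∃ j, i = j + 1 := ⟨i - 1, by omega⟩
      rw [Nat.factorial_succ]
      push_cast
      rw [Real.Gamma_nat_eq_factorial j]
    calc Real.Gamma ((i : ℝ) - β₀) * (i : ℝ) ^ ((1:ℝ) + β₀)
        ≤ (Real.Gamma i * ((i : ℝ) - 1) ^ (-β₀)) * (i : ℝ) ^ ((1:ℝ) + β₀) := by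
          apply mul_le_mul_of_nonneg_right key (Real.rpow_nonneg hy.le _)
      _ = Real.Gamma i * ((i : ℝ) ^ ((1:ℝ) + β₀) * ((i : ℝ) - 1) ^ (-β₀)) := by ring
      _ ≤ Real.Gamma i * ((2 : ℝ) ^ β₀ * (i : ℝ)) :=
          mul_le_mul_of_nonneg_left hpow hΓy.le
      _ = (2 : ℝ) ^ β₀ * ((i : ℝ) * Real.Gamma i) := by ring
      _ ≤ ((2 : ℝ) ^ β₀ + Real.Gamma (1 - β₀)) * (Nat.factorial i : ℝ) := by
          rw [← hfac]
          have : (0:ℝ) < (Nat.factorial i : ℝ) := by positivity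
          nlinarith

/-- Estimate (5.9): upper bound `A_{β₀}(t,i) ≤ C₂ t / i^{1+β₀}` for the Poisson–Gamma
integral of a density bounded by `C₁ t u^{-1-β₀}`. -/
theorem A_upper_estimate
    (β₀ : ℝ) (hβ₀ : 0 < β₀) (hβ₀1 : β₀ < 1) (C₁ : ℝ) (hC₁ : 0 < C₁) :
    ∃ C₂ : ℝ, 0 < C₂ ∧ ∀ (t : ℝ), 0 < t → ∀ (i : ℕ), 1 ≤ i →
      ∀ f : ℝ → ℝ, Measurable f → (∀ u : ℝ, 0 < u → 0 ≤ f u) →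
        (∀ u : ℝ, 0 < u → f u ≤ C₁ * t * u ^ (-(1 + β₀))) →
        (∫⁻ u in Set.Ioi (0 : ℝ),
            ENNReal.ofReal (f u * (Real.exp (-u) * u ^ i / (Nat.factorial i : ℝ)))) ≤
          ENNReal.ofReal (C₂ * t / (i : ℝ) ^ (1 + β₀)) := by
  set K : ℝ := (2 : ℝ) ^ β₀ + Real.Gamma (1 - β₀) with hK
  have hKpos : 0 < K := by
    have : (0:ℝ) < (2:ℝ) ^ β₀ := Real.rpow_pos_of_pos two_pos _
    have := Real.Gamma_pos_of_pos (show (0:ℝ) < 1 - β₀ by linarith)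
    positivity
  refine ⟨C₁ * K, by positivity, ?_⟩
  intro t ht i hi f hmf hf0 hfb
  set s : ℝ := (i : ℝ) - β₀ with hs
  have hi1 : (1 : ℝ) ≤ (i : ℝ) := by exact_mod_cast hi
  have hspos : 0 < s := by rw [hs]; linarith
  have hfacpos : (0:ℝ) < (Nat.factorial i : ℝ) := by positivity
  have hipos : (0:ℝ) < (i:ℝ) := by linarith
  -- step 1: bound the integrand
  have step1 : (∫⁻ u in Set.Ioi (0 : ℝ),
      ENNReal.ofReal (f u * (Real.exp (-u) * u ^ i / (Nat.factorial i : ℝ)))) ≤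
      ∫⁻ u in Set.Ioi (0 : ℝ),
      ENNReal.ofReal ((C₁ * t / (Nat.factorial i : ℝ)) * (Real.exp (-u) * u ^ (s - 1))) := by
    apply setLIntegral_mono
    · fun_prop
    · intro u hu
      have hu' : (0:ℝ) < u := hu
      apply ENNReal.ofReal_le_ofReal
      have hb := hfb u hu'
      have hfac : u ^ (-(1 + β₀)) * (u : ℝ) ^ i = u ^ (s - 1) := by
        rw [← Real.rpow_natCast u i, ← Real.rpow_add hu']
        congr 1
        rw [hs]; ring
      have hnn : 0 ≤ Real.exp (-u) * u ^ i / (Nat.factorial i : ℝ) := by positivity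
      calc f u * (Real.exp (-u) * u ^ i / (Nat.factorial i : ℝ))
          ≤ (C₁ * t * u ^ (-(1 + β₀))) * (Real.exp (-u) * u ^ i / (Nat.factorial i : ℝ)) :=
            mul_le_mul_of_nonneg_right hb hnn
        _ = (C₁ * t / (Nat.factorial i : ℝ)) * (Real.exp (-u) * (u ^ (-(1 + β₀)) * u ^ i)) := by
            ring
        _ = (C₁ * t / (Nat.factorial i : ℝ)) * (Real.exp (-u) * u ^ (s - 1)) := by rw [hfac]
  -- step 2: evaluate the Gamma integral
  have hint : IntegrableOn (fun x : ℝ => Real.exp (-x) * x ^ (s - 1)) (Set.Ioi 0) :=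
    Real.GammaIntegral_convergent hspos
  have step2 : (∫⁻ u in Set.Ioi (0 : ℝ),
      ENNReal.ofReal ((C₁ * t / (Nat.factorial i : ℝ)) * (Real.exp (-u) * u ^ (s - 1)))) =
      ENNReal.ofReal ((C₁ * t / (Nat.factorial i : ℝ)) * Real.Gamma s) := by
    have hc : (0:ℝ) ≤ C₁ * t / (Nat.factorial i : ℝ) := by positivity
    have hnn : 0 ≤ᵐ[volume.restrict (Set.Ioi (0:ℝ))] fun x => Real.exp (-x) * x ^ (s-1) := by
      filter_upwards [self_mem_ae_restrict measurableSet_Ioi] with x hx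
      have : (0:ℝ) < x := hx
      positivity
    have hΓint : ENNReal.ofReal (Real.Gamma s) =
        ∫⁻ u in Set.Ioi (0:ℝ), ENNReal.ofReal (Real.exp (-u) * u ^ (s-1)) := by
      rw [Real.Gamma_eq_integral hspos,
        MeasureTheory.ofReal_integral_eq_lintegral_ofReal hint hnn]
    simp_rw [ENNReal.ofReal_mul hc]
    rw [lintegral_const_mul' _ _ ENNReal.ofReal_ne_top, ← hΓint]
  refine le_trans step1 (le_trans (le_of_eq step2) ?_)
  apply ENNReal.ofReal_le_ofReal
  rw [div_mul_eq_mul_div, div_le_div_iff₀ hfacpos (Real.rpow_pos_of_pos hipos _)]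
  have hkey := gamma_key hβ₀ hβ₀1 hi
  rw [← hs, ← hK] at hkey
  calc C₁ * t * Real.Gamma s * (i : ℝ) ^ ((1:ℝ) + β₀)
      = (C₁ * t) * (Real.Gamma s * (i : ℝ) ^ ((1:ℝ) + β₀)) := by ring
    _ ≤ (C₁ * t) * (K * (Nat.factorial i : ℝ)) := by
        apply mul_le_mul_of_nonneg_left hkey (by positivity)
    _ = C₁ * K * t * (Nat.factorial i : ℝ) := by ring
end
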